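/- arXiv:2101.01784 — 6 statements merged into one kernel-verified Lean document; each statement's English description precedes it below -/
import Mathlib

section
/- Let k be a field and φ : k[[x₁,...,xₙ]] → k[[t]] a nonzero local k-algebra homomorphism with image R = φ(P). Then dim_k(k[[t]]/R) < ∞ if and only if the inclusion R ↪ k[[t]] is the normalization of R (i.e., k[[t]] is the integral closure of R in its total quotient ring). -/
open PowerSeries Finsupp

section Helpers

open PowerSeries Finsupp

variable {k : Type*} [Field k] {n : ℕ}

/-- The multivariate power series `∑ j, c j • (X i)^j`. -/
noncomputable def Gser (i : Fin n) (c : ℕ → k) : MvPowerSeries (Fin n) k :=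
  fun e => if e = Finsupp.single i (e i) then c (e i) else 0

lemma coeff_Gser (i : Fin n) (c : ℕ → k) (e : Fin n →₀ ℕ) :
    MvPowerSeries.coeff e (Gser i c)
      = if e = Finsupp.single i (e i) then c (e i) else 0 := rfl

lemma Gser_split (i : Fin n) (c : ℕ → k) :
    Gser i c = MvPowerSeries.C (σ := Fin n) (R := k) (c 0)
      + (MvPowerSeries.X i) * Gser i (fun j => c (j + 1)) := by
  ext e
  rw [map_add, coeff_Gser, MvPowerSeries.coeff_C, MvPowerSeries.X,
    MvPowerSeries.coeff_monomial_mul, coeff_Gser]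
  by_cases he : e = Finsupp.single i (e i)
  · rcases Nat.eq_zero_or_pos (e i) with h0 | h0
    · have he0 : e = 0 := by rw [he, h0, Finsupp.single_zero]
      rw [if_pos he, if_pos he0, h0]
      have : ¬ Finsupp.single i 1 ≤ e := by
        rw [Finsupp.single_le_iff, h0]; omega
      rw [if_neg this, add_zero]
    · have hne0 : e ≠ 0 := by
        intro h; rw [h] at h0; simp at h0
      have hle : Finsupp.single i 1 ≤ e := by
        rw [Finsupp.single_le_iff]; omega
      have hsub : e - Finsupp.single i 1 = Finsupp.single i (e i - 1) := by
        conv_lhs => rw [he]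
        rw [Finsupp.single_tsub]
      rw [if_pos he, if_neg hne0, if_pos hle, hsub, one_mul, zero_add]
      rw [show (Finsupp.single i (e i - 1)) i = e i - 1 from Finsupp.single_eq_same]
      rw [if_pos rfl]
      congr 1
      omega
  · have hne0 : e ≠ 0 := by
      intro h
      apply he
      rw [h]; simp
    rw [if_neg he, if_neg hne0, zero_add]
    by_cases hle : Finsupp.single i 1 ≤ e
    · rw [if_pos hle, one_mul]
      have h1 : 1 ≤ e i := by rwa [Finsupp.single_le_iff] at hle
      have : ¬ (e - Finsupp.single i 1 = Finsupp.single i ((e - Finsupp.single i 1 : Fin n →₀ ℕ) i)) := by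
        intro hcontra
        apply he
        have hei : (e - Finsupp.single i 1 : Fin n →₀ ℕ) i = e i - 1 := by
          rw [Finsupp.tsub_apply, Finsupp.single_eq_same]
        have h2 : e = Finsupp.single i (e i - 1) + Finsupp.single i 1 := by
          conv_lhs => rw [← tsub_add_cancel_of_le hle, hcontra, hei]
        calc e = Finsupp.single i (e i - 1) + Finsupp.single i 1 := h2
        _ = Finsupp.single i (e i - 1 + 1) := (Finsupp.single_add i _ _).symm
        _ = Finsupp.single i (e i) := by congr 1; omega
      rw [if_neg this]
    · rw [if_neg hle]

lemma Gser_split_pow (i : Fin n) (c : ℕ → k) (N : ℕ) :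
    Gser i c = (∑ j ∈ Finset.range N, MvPowerSeries.C (σ := Fin n) (R := k) (c j) * (MvPowerSeries.X i) ^ j)
      + (MvPowerSeries.X i) ^ N * Gser i (fun j => c (j + N)) := by
  induction N with
  | zero => simp
  | succ N ih =>
    rw [ih, Finset.sum_range_succ]
    have h1 : Gser i (fun j => c (j + N))
        = MvPowerSeries.C (σ := Fin n) (R := k) (c N) + (MvPowerSeries.X i) * Gser i (fun j => c (j + (N+1))) := by
      rw [Gser_split i (fun j => c (j + N))]
      congr 1
      · congr 2; omega
      · refine congrArg (MvPowerSeries.X i * ·) (congrArg (Gser i) ?_)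
        exact funext fun j => by rw [show j + 1 + N = j + (N + 1) from by omega]
    rw [h1]
    ring

lemma hsum_range (φ : MvPowerSeries (Fin n) k →ₐ[k] PowerSeries k) (i : Fin n) (c : ℕ → k) :
    ∃ r ∈ φ.range, ∀ N : ℕ, ∃ h : PowerSeries k,
      r - ∑ j ∈ Finset.range N, c j • (φ (MvPowerSeries.X i)) ^ j
        = (φ (MvPowerSeries.X i)) ^ N * h := by
  refine ⟨φ (Gser i c), ⟨_, rfl⟩, fun N => ⟨φ (Gser i (fun j => c (j + N))), ?_⟩⟩
  conv_lhs => rw [show φ (Gser i c) = _ from congrArg φ (Gser_split_pow i c N)]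
  rw [map_add, map_sum, map_mul, map_pow]
  have : ∀ j ∈ Finset.range N,
      φ (MvPowerSeries.C (σ := Fin n) (R := k) (c j) * (MvPowerSeries.X i) ^ j)
        = c j • (φ (MvPowerSeries.X i)) ^ j := by
    intro j _
    rw [map_mul, map_pow, show (MvPowerSeries.C (σ := Fin n) (R := k) (c j)) = algebraMap k _ (c j) from rfl,
      φ.commutes, Algebra.smul_def]
  rw [Finset.sum_congr rfl this, add_sub_cancel_left]



lemma exists_repr (R : Subalgebra k (PowerSeries k)) (f : PowerSeries k) (hf0 : f ≠ 0)
    (hfc : constantCoeff f = 0)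
    (hsum : ∀ c : ℕ → k, ∃ r ∈ R, ∀ N : ℕ, ∃ h,
      r - ∑ j ∈ Finset.range N, c j • f ^ j = f ^ N * h)
    (g : PowerSeries k) :
    ∃ r : ℕ → PowerSeries k, (∀ p, r p ∈ R) ∧
      g = ∑ p ∈ Finset.range ((order f).lift (order_finite_iff_ne_zero.mpr hf0)),
        r p * X ^ p := by
  classical
  set m := (order f).lift (order_finite_iff_ne_zero.mpr hf0) with hmdef
  have hordf : order f = (m : ℕ∞) := (ENat.coe_lift _ _).symm
  have hm : 0 < m := by
    rcases Nat.eq_zero_or_pos m with h0 | h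
    · exfalso
      have hco : coeff ((order f).lift (order_finite_iff_ne_zero.mpr hf0)) f ≠ 0 := by
        rw [ENat.lift_eq_toNat_of_lt_top]; exact coeff_order hf0
      rw [← hmdef, h0] at hco
      exact hco (by rw [coeff_zero_eq_constantCoeff]; exact hfc)
    · exact h
  have hpow : ∀ j : ℕ, order (f ^ j) = ((j * m : ℕ) : ℕ∞) := by
    intro j
    induction j with
    | zero => simp
    | succ j ih =>
      rw [pow_succ, order_mul, ih, hordf, ← Nat.cast_add, Nat.succ_mul]
  set u : ℕ → PowerSeries k := fun q => f ^ (q / m) * X ^ (q % m) with hu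
  have hordu : ∀ q, order (u q) = (q : ℕ∞) := by
    intro q
    simp only [hu]
    rw [order_mul, hpow, order_X_pow, ← Nat.cast_add]
    congr 1
    rw [mul_comm]
    exact Nat.div_add_mod q m
  have hlcu : ∀ q, coeff q (u q) ≠ 0 := by
    intro q
    have h1 : order (u q) < ⊤ := by rw [hordu]; exact WithTop.coe_lt_top q
    have h2 : coeff ((order (u q)).lift h1) (u q) ≠ 0 := by
      rw [ENat.lift_eq_toNat_of_lt_top]; exact coeff_order (order_finite_iff_ne_zero.mp h1)
    have h3 : (order (u q)).lift h1 = q := by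
      apply Nat.cast_injective (R := ℕ∞)
      rw [ENat.coe_lift, hordu]
    rwa [h3] at h2
  let S : ℕ → PowerSeries k := fun q =>
    Nat.rec g (fun p Sp => Sp - ((coeff p Sp) / (coeff p (u p))) • u p) q
  let dd : ℕ → k := fun p => (coeff p (S p)) / (coeff p (u p))
  have hSsucc : ∀ p, S (p + 1) = S p - dd p • u p := fun p => rfl
  have hScoeff : ∀ q p, p < q → coeff p (S q) = 0 := by
    intro q
    induction q with
    | zero => intro p hp; exact absurd hp (Nat.not_lt_zero p)
    | succ q ih =>
      intro p hp
      rw [hSsucc q, map_sub, LinearMap.map_smul, smul_eq_mul]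
      rcases Nat.lt_or_ge p q with h | h
      · rw [ih p h, coeff_of_lt_order p (by rw [hordu]; exact_mod_cast h), mul_zero, sub_zero]
      · have hpq : p = q := by omega
        subst hpq
        show coeff p (S p) - dd p * coeff p (u p) = 0
        rw [div_mul_cancel₀ _ (hlcu p), sub_self]
  have hSsum : ∀ q, g - S q = ∑ p ∈ Finset.range q, dd p • u p := by
    intro q
    induction q with
    | zero => show g - g = _ ; simp
    | succ q ih =>
      rw [Finset.sum_range_succ, ← ih, hSsucc]
      abel
  have hex : ∀ p : ℕ, ∃ r, r ∈ R ∧ ∀ N : ℕ, ∃ h,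
      r - ∑ j ∈ Finset.range N, dd (j * m + p) • f ^ j = f ^ N * h := by
    intro p
    obtain ⟨r, hr1, hr2⟩ := hsum (fun j => dd (j * m + p))
    exact ⟨r, hr1, hr2⟩
  choose r hrR hrprop using hex
  refine ⟨r, hrR, ?_⟩
  ext q
  rw [← sub_eq_zero, ← map_sub]
  set N := q + 1 with hN
  have hqN : q < N * m := by
    calc q < N := by omega
    _ ≤ N * m := Nat.le_mul_of_pos_right N hm
  have hhc : ∀ p : ℕ, ∃ h, r p - ∑ j ∈ Finset.range N, dd (j * m + p) • f ^ j = f ^ N * h :=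
    fun p => hrprop p N
  choose hh hhspec using hhc
  have key : g - ∑ p ∈ Finset.range m, r p * X ^ p
      = S (N * m) - ∑ p ∈ Finset.range m, f ^ N * hh p * X ^ p := by
    have h1 : g - S (N * m) = ∑ p' ∈ Finset.range (N * m), dd p' • u p' := hSsum (N * m)
    have h2 : ∑ p' ∈ Finset.range (N * m), dd p' • u p'
        = ∑ x ∈ Finset.range m ×ˢ Finset.range N,
            dd (x.2 * m + x.1) • u (x.2 * m + x.1) := by
      refine Finset.sum_nbij' (fun p' => (p' % m, p' / m)) (fun x => x.2 * m + x.1)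
        ?_ ?_ ?_ ?_ ?_
      · intro a ha
        rw [Finset.mem_range] at ha
        rw [Finset.mem_product, Finset.mem_range, Finset.mem_range]
        exact ⟨Nat.mod_lt a hm, (Nat.div_lt_iff_lt_mul hm).mpr ha⟩
      · intro x hx
        rw [Finset.mem_product, Finset.mem_range, Finset.mem_range] at hx
        rw [Finset.mem_range]
        calc x.2 * m + x.1 < x.2 * m + m := by omega
        _ = (x.2 + 1) * m := by ring
        _ ≤ N * m := Nat.mul_le_mul_right m hx.2
      · intro a ha
        show (a / m) * m + a % m = a
        rw [mul_comm]
        exact Nat.div_add_mod a m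
      · intro x hx
        rw [Finset.mem_product, Finset.mem_range, Finset.mem_range] at hx
        have h1' : (x.2 * m + x.1) % m = x.1 := by
          rw [add_comm, Nat.add_mul_mod_self_right, Nat.mod_eq_of_lt hx.1]
        have h2' : (x.2 * m + x.1) / m = x.2 := by
          rw [add_comm, Nat.add_mul_div_right _ _ hm, Nat.div_eq_of_lt hx.1, zero_add]
        exact Prod.ext h1' h2'
      · intro a ha
        have h5 : (a / m) * m + a % m = a := by rw [mul_comm]; exact Nat.div_add_mod a m
        show dd a • u a = dd ((a / m) * m + a % m) • u ((a / m) * m + a % m)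
        rw [h5]
    have h2' : ∑ x ∈ Finset.range m ×ˢ Finset.range N,
          dd (x.2 * m + x.1) • u (x.2 * m + x.1)
        = ∑ p ∈ Finset.range m, ∑ j ∈ Finset.range N, dd (j * m + p) • u (j * m + p) := by
      rw [Finset.sum_product]
    have h3 : ∀ p ∈ Finset.range m, ∑ j ∈ Finset.range N, dd (j * m + p) • u (j * m + p)
        = (∑ j ∈ Finset.range N, dd (j * m + p) • f ^ j) * X ^ p := by
      intro p hp
      rw [Finset.mem_range] at hp
      rw [Finset.sum_mul]
      refine Finset.sum_congr rfl fun j _ => ?_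
      have hu1 : u (j * m + p) = f ^ j * X ^ p := by
        simp only [hu]
        congr 2
        · rw [add_comm, Nat.add_mul_div_right _ _ hm, Nat.div_eq_of_lt hp, zero_add]
        · rw [add_comm, Nat.add_mul_mod_self_right, Nat.mod_eq_of_lt hp]
      rw [hu1, smul_mul_assoc]
    have h4 : ∀ p ∈ Finset.range m,
        r p * X ^ p - (∑ j ∈ Finset.range N, dd (j * m + p) • f ^ j) * X ^ p
          = f ^ N * hh p * X ^ p := by
      intro p _
      rw [← sub_mul, hhspec p]
    calc g - ∑ p ∈ Finset.range m, r p * X ^ p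
        = S (N * m) - (∑ p ∈ Finset.range m, r p * X ^ p - (g - S (N * m))) := by abel
      _ = S (N * m) - (∑ p ∈ Finset.range m, r p * X ^ p
            - ∑ p ∈ Finset.range m, (∑ j ∈ Finset.range N, dd (j * m + p) • f ^ j) * X ^ p) := by
          rw [h1, h2, h2', Finset.sum_congr rfl h3]
      _ = S (N * m) - ∑ p ∈ Finset.range m, (r p * X ^ p
            - (∑ j ∈ Finset.range N, dd (j * m + p) • f ^ j) * X ^ p) := by
          rw [Finset.sum_sub_distrib]
      _ = S (N * m) - ∑ p ∈ Finset.range m, f ^ N * hh p * X ^ p := by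
          rw [Finset.sum_congr rfl h4]
  rw [key, map_sub, hScoeff (N * m) q hqN, map_sum, Finset.sum_eq_zero, sub_zero]
  intro p _
  apply coeff_of_lt_order
  have hle : ((N * m : ℕ) : ℕ∞) ≤ order (f ^ N * hh p * X ^ p) := by
    rw [mul_assoc]
    refine le_trans ?_ (le_order_mul _ _)
    rw [hpow N]
    exact le_self_add
  exact lt_of_lt_of_le (by exact_mod_cast hqN) hle




lemma moduleFinite (R : Subalgebra k (PowerSeries k)) (f : PowerSeries k) (hf0 : f ≠ 0)
    (hfc : constantCoeff f = 0)
    (hsum : ∀ c : ℕ → k, ∃ r ∈ R, ∀ N : ℕ, ∃ h,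
      r - ∑ j ∈ Finset.range N, c j • f ^ j = f ^ N * h) :
    Module.Finite ↥R (PowerSeries k) := by
  classical
  set m := (order f).lift (order_finite_iff_ne_zero.mpr hf0) with hmdef
  set T : Finset (PowerSeries k) := (Finset.range m).image (fun p => (X : PowerSeries k) ^ p)
    with hT
  refine ⟨⟨T, ?_⟩⟩
  rw [eq_top_iff]
  rintro g -
  obtain ⟨r, hrR, hg⟩ := exists_repr R f hf0 hfc hsum g
  rw [hg]
  refine Submodule.sum_mem _ fun p hp => ?_
  have hmem : (X : PowerSeries k) ^ p ∈ Submodule.span ↥R (T : Set (PowerSeries k)) :=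
    Submodule.subset_span (by
      simp only [hT, Finset.coe_image, Set.mem_image, Finset.mem_coe]
      exact ⟨p, hp, rfl⟩)
  have hsm : r p * (X : PowerSeries k) ^ p = (⟨r p, hrR p⟩ : ↥R) • (X : PowerSeries k) ^ p := rfl
  rw [hsm]
  exact Submodule.smul_mem _ _ hmem

lemma findim_of_denom (R : Subalgebra k (PowerSeries k)) (s : PowerSeries k) (hs : s ≠ 0)
    (hsub : ∀ a : PowerSeries k, s * a ∈ R) :
    FiniteDimensional k (PowerSeries k ⧸ Subalgebra.toSubmodule R) := by
  classical
  set d := (order s).lift (order_finite_iff_ne_zero.mpr hs) with hd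
  obtain ⟨w, hw⟩ : ∃ w, (X : PowerSeries k) ^ d = s * w := by
    refine ⟨((Unit_of_divided_by_X_pow_order s)⁻¹ : (PowerSeries k)ˣ), ?_⟩
    have hfac : (X : PowerSeries k) ^ d * divXPowOrder s = s := by
      have h := X_pow_order_mul_divXPowOrder (f := s)
      rwa [show s.order.toNat = d by
        rw [← ENat.coe_lift _ (order_finite_iff_ne_zero.mpr hs), ENat.toNat_coe]] at h
    have hval : ((Unit_of_divided_by_X_pow_order s : (PowerSeries k)ˣ) : PowerSeries k)
        = divXPowOrder s := Unit_of_divided_by_X_pow_order_nonzero hs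
    calc (X : PowerSeries k) ^ d
        = (X : PowerSeries k) ^ d * ((Unit_of_divided_by_X_pow_order s : PowerSeries k)
            * ((Unit_of_divided_by_X_pow_order s)⁻¹ : (PowerSeries k)ˣ)) := by
          rw [← Units.val_mul, mul_inv_cancel, Units.val_one, mul_one]
      _ = ((X : PowerSeries k) ^ d * (Unit_of_divided_by_X_pow_order s : PowerSeries k))
            * ((Unit_of_divided_by_X_pow_order s)⁻¹ : (PowerSeries k)ˣ) := by ring
      _ = s * ((Unit_of_divided_by_X_pow_order s)⁻¹ : (PowerSeries k)ˣ) := by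
          rw [hval, hfac]
  set V := Subalgebra.toSubmodule R with hV
  set T : Finset (PowerSeries k ⧸ V) :=
    (Finset.range d).image (fun p => Submodule.Quotient.mk ((X : PowerSeries k) ^ p)) with hT
  have hspan : Submodule.span k (T : Set (PowerSeries k ⧸ V)) = ⊤ := by
    rw [eq_top_iff]
    rintro y -
    obtain ⟨g, rfl⟩ := Submodule.Quotient.mk_surjective V y
    obtain ⟨h2, hh2⟩ : (X : PowerSeries k) ^ d ∣
        (g - ∑ p ∈ Finset.range d, coeff p g • X ^ p) := by
      rw [X_pow_dvd_iff]
      intro p hp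
      rw [map_sub, map_sum, sub_eq_zero]
      rw [Finset.sum_eq_single p (fun j _ hj => by
          rw [LinearMap.map_smul, coeff_X_pow, if_neg (fun h => hj h.symm), smul_zero])
        (fun hnp => absurd (Finset.mem_range.mpr hp) hnp)]
      rw [LinearMap.map_smul, coeff_X_pow, if_pos rfl, smul_eq_mul, mul_one]
    have hXdh : (X : PowerSeries k) ^ d * h2 ∈ V := by
      have heq : (X : PowerSeries k) ^ d * h2 = s * (w * h2) := by rw [hw]; ring
      rw [heq]
      exact hsub (w * h2)
    have hgdecomp : g = (∑ p ∈ Finset.range d, coeff p g • X ^ p) + X ^ d * h2 := by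
      rw [← hh2]; ring
    have : (Submodule.Quotient.mk g : PowerSeries k ⧸ V)
        = ∑ p ∈ Finset.range d, coeff p g • (Submodule.Quotient.mk (X ^ p) : PowerSeries k ⧸ V) := by
      conv_lhs => rw [hgdecomp]
      rw [← Submodule.mkQ_apply, map_add, map_sum]
      rw [show V.mkQ ((X : PowerSeries k) ^ d * h2) = 0 from
        (Submodule.Quotient.mk_eq_zero V).mpr hXdh, add_zero]
      exact Finset.sum_congr rfl fun p _ => by rw [LinearMap.map_smul, Submodule.mkQ_apply]
    rw [this]
    refine Submodule.sum_mem _ fun p hp => Submodule.smul_mem _ _ (Submodule.subset_span ?_)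
    simp only [hT, Finset.coe_image, Set.mem_image, Finset.mem_coe]
    exact ⟨p, hp, rfl⟩
  exact ⟨⟨T, hspan⟩⟩

lemma not_findim (R : Subalgebra k (PowerSeries k)) (f : PowerSeries k) (hfR : f ∈ R)
    (hf0 : f ≠ 0) (hfc : constantCoeff f = 0) :
    ¬ FiniteDimensional k ↥(Subalgebra.toSubmodule R) := by
  classical
  intro hfd
  set m := (order f).lift (order_finite_iff_ne_zero.mpr hf0) with hmdef
  have hordf : order f = (m : ℕ∞) := (ENat.coe_lift _ _).symm
  have hm : 0 < m := by
    rcases Nat.eq_zero_or_pos m with h0 | h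
    · exfalso
      have hco : coeff ((order f).lift (order_finite_iff_ne_zero.mpr hf0)) f ≠ 0 := by
        rw [ENat.lift_eq_toNat_of_lt_top]; exact coeff_order hf0
      rw [← hmdef, h0] at hco
      exact hco (by rw [coeff_zero_eq_constantCoeff]; exact hfc)
    · exact h
  have hpow : ∀ j : ℕ, order (f ^ j) = ((j * m : ℕ) : ℕ∞) := by
    intro j
    induction j with
    | zero => simp
    | succ j ih =>
      rw [pow_succ, order_mul, ih, hordf, ← Nat.cast_add, Nat.succ_mul]
  have hli : LinearIndependent k
      (fun j : ℕ => (⟨f ^ j, (Subalgebra.mem_toSubmodule R).mpr (pow_mem hfR j)⟩ :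
        ↥(Subalgebra.toSubmodule R))) := by
    rw [linearIndependent_iff']
    intro t c hsum0
    by_contra hc
    push_neg at hc
    obtain ⟨j0, hj0t, hj0⟩ := hc
    set T := t.filter (fun j => c j ≠ 0) with hTdef
    have hTne : T.Nonempty := ⟨j0, Finset.mem_filter.mpr ⟨hj0t, hj0⟩⟩
    set jm := T.min' hTne with hjmdef
    have hjmT : jm ∈ T := T.min'_mem hTne
    have hjmne : c jm ≠ 0 := (Finset.mem_filter.mp hjmT).2
    have hsumA : ∑ j ∈ t, c j • f ^ j = 0 := by
      have := congrArg (fun x : ↥(Subalgebra.toSubmodule R) => (x : PowerSeries k)) hsum0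
      simpa using this
    have hco := congrArg (coeff (jm * m)) hsumA
    rw [map_sum, map_zero] at hco
    rw [Finset.sum_eq_single jm (fun j hjt hj => ?_) (fun h => absurd (Finset.mem_filter.mp hjmT).1 h)] at hco
    · -- c jm • coeff (jm*m) f^jm = 0
      have hcoeffne : coeff (jm * m) (f ^ jm) ≠ 0 := by
        have h1 : order (f ^ jm) < ⊤ := by rw [hpow]; exact WithTop.coe_lt_top _
        have h2 : coeff ((order (f ^ jm)).lift h1) (f ^ jm) ≠ 0 := by
          rw [ENat.lift_eq_toNat_of_lt_top]; exact coeff_order (order_finite_iff_ne_zero.mp h1)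
        have h3 : (order (f ^ jm)).lift h1 = jm * m := by
          apply Nat.cast_injective (R := ℕ∞)
          rw [ENat.coe_lift, hpow]
        rwa [h3] at h2
      rw [LinearMap.map_smul, smul_eq_mul] at hco
      exact hjmne ((mul_eq_zero.mp hco).resolve_right hcoeffne)
    · -- j ≠ jm case
      rcases eq_or_ne (c j) 0 with h0 | h0
      · rw [h0, zero_smul, map_zero]
      · have hjT : j ∈ T := Finset.mem_filter.mpr ⟨hjt, h0⟩
        have : jm < j := lt_of_le_of_ne (T.min'_le j hjT) (fun h => hj h.symm)
        rw [LinearMap.map_smul, coeff_of_lt_order _ (by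
          rw [hpow]
          exact_mod_cast (Nat.mul_lt_mul_right hm).mpr this), smul_zero]
  haveI := hli.finite; exact not_finite ℕ

lemma exists_denom (R : Subalgebra k (PowerSeries k)) (f : PowerSeries k) (hfR : f ∈ R)
    (hf0 : f ≠ 0) (hfc : constantCoeff f = 0)
    (hfd : FiniteDimensional k (PowerSeries k ⧸ Subalgebra.toSubmodule R))
    (a : PowerSeries k) :
    ∃ s ∈ R, s ≠ 0 ∧ s * a ∈ R := by
  classical
  set V := Subalgebra.toSubmodule R with hV
  by_contra hno
  push_neg at hno
  let L : ↥V →ₗ[k] PowerSeries k ⧸ V :=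
    V.mkQ.comp ((LinearMap.mulLeft k a).comp V.subtype)
  have hinj : Function.Injective L := by
    rw [← LinearMap.ker_eq_bot, Submodule.eq_bot_iff]
    rintro ⟨x, hx⟩ hker
    have hax : a * x ∈ V := by
      have : Submodule.Quotient.mk (p := V) (a * x) = 0 := hker
      rwa [Submodule.Quotient.mk_eq_zero] at this
    by_contra hx0
    have hxne : x ≠ 0 := fun h => hx0 (by simp [h])
    exact (hno x ((Subalgebra.mem_toSubmodule R).mp hx) hxne)
      (by rwa [mul_comm] at hax)
  exact not_findim R f hfR hf0 hfc (FiniteDimensional.of_injective L hinj)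

end Helpers

/-- `ν : R →+* S` identifies `S` with the normalization of `R`, i.e. with the
integral closure of `R` in its total quotient ring `Quot(R) = FractionRing R`. -/
def RingHom.IsNormalizationMap {R S : Type*} [CommRing R] [CommRing S] (ν : R →+* S) : Prop :=
  ∃ j : S →+* FractionRing R, Function.Injective j ∧
    j.comp ν = algebraMap R (FractionRing R) ∧
    j.range = (integralClosure R (FractionRing R)).toSubring


set_option maxHeartbeats 1000000 in
set_option synthInstance.maxHeartbeats 100000 in
/-- For a nonzero local `k`-algebra homomorphism
`φ : k[[x₁,...,xₙ]] → k[[t]]` with image `R = φ(P)`, one has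
`dim_k k[[t]]/R < ∞` if and only if the inclusion `R ↪ k[[t]]` is the
normalization of `R`. -/
theorem finite_codim_iff_normalization {k : Type*} [Field k] {n : ℕ}
    (φ : MvPowerSeries (Fin n) k →ₐ[k] PowerSeries k)
    (hloc : ∀ F, (MvPowerSeries.constantCoeff : MvPowerSeries (Fin n) k →+* k) F = 0 →
      (PowerSeries.constantCoeff : PowerSeries k →+* k) (φ F) = 0)
    (hne : ∃ i, φ (MvPowerSeries.X i) ≠ 0) :
    FiniteDimensional k (PowerSeries k ⧸ Subalgebra.toSubmodule φ.range) ↔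
      RingHom.IsNormalizationMap (Subalgebra.val φ.range).toRingHom := by
  classical
  obtain ⟨i, hfi⟩ := hne
  set f : PowerSeries k := φ (MvPowerSeries.X i) with hfdef
  have hfR : f ∈ φ.range := ⟨MvPowerSeries.X i, rfl⟩
  have hfc : constantCoeff f = 0 := hloc _ (MvPowerSeries.constantCoeff_X i)
  have hsum : ∀ c : ℕ → k, ∃ r ∈ φ.range, ∀ N : ℕ, ∃ h,
      r - ∑ j ∈ Finset.range N, c j • f ^ j = f ^ N * h := fun c => hsum_range φ i c
  set R := φ.range with hR
  haveI hMF : Module.Finite ↥R (PowerSeries k) := moduleFinite R f hfi hfc hsum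
  constructor
  · intro hfd
    haveI hFR : IsFractionRing ↥R (FractionRing (PowerSeries k)) := by
      constructor
      constructor
      case map_units =>
        rintro ⟨y, hy⟩
        have hyne : (y : PowerSeries k) ≠ 0 := by
          intro h
          exact (nonZeroDivisors.ne_zero hy) (Subtype.ext h)
        show IsUnit (algebraMap ↥R (FractionRing (PowerSeries k)) y)
        rw [IsScalarTower.algebraMap_apply ↥R (PowerSeries k) (FractionRing (PowerSeries k))]
        exact IsLocalization.map_units (M := nonZeroDivisors (PowerSeries k))
          (FractionRing (PowerSeries k)) ⟨(y : PowerSeries k), mem_nonZeroDivisors_of_ne_zero hyne⟩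
      case surj =>
        intro z
        obtain ⟨⟨aa, b⟩, hab⟩ := IsLocalization.surj (nonZeroDivisors (PowerSeries k)) z
        obtain ⟨sa, hsaR, hsane, hsaa⟩ := exists_denom R f hfR hfi hfc hfd aa
        obtain ⟨sb, hsbR, hsbne, hsbb⟩ := exists_denom R f hfR hfi hfc hfd (b : PowerSeries k)
        have hbne : (b : PowerSeries k) ≠ 0 := nonZeroDivisors.ne_zero b.2
        refine ⟨⟨⟨(sa * aa) * sb, mul_mem hsaa hsbR⟩,
          ⟨⟨(sb * (b : PowerSeries k)) * sa, mul_mem hsbb hsaR⟩, ?_⟩⟩, ?_⟩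
        · apply mem_nonZeroDivisors_of_ne_zero
          intro h
          have : (sb * (b : PowerSeries k)) * sa = 0 := congrArg Subtype.val h
          exact (mul_ne_zero (mul_ne_zero hsbne hbne) hsane) this
        · rw [IsScalarTower.algebraMap_apply ↥R (PowerSeries k) (FractionRing (PowerSeries k)),
            IsScalarTower.algebraMap_apply ↥R (PowerSeries k) (FractionRing (PowerSeries k))]
          show z * algebraMap (PowerSeries k) (FractionRing (PowerSeries k))
              ((sb * (b : PowerSeries k)) * sa)
            = algebraMap (PowerSeries k) (FractionRing (PowerSeries k)) ((sa * aa) * sb)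
          rw [map_mul, map_mul, map_mul, map_mul]
          calc z * (algebraMap _ _ sb * algebraMap _ _ (b : PowerSeries k) * algebraMap _ _ sa)
              = (z * algebraMap _ _ (b : PowerSeries k))
                  * (algebraMap _ _ sb * algebraMap _ _ sa) := by ring
            _ = algebraMap _ _ aa * (algebraMap _ _ sb * algebraMap _ _ sa) := by rw [hab]
            _ = algebraMap _ _ sa * algebraMap _ _ aa * algebraMap _ _ sb := by ring
      case exists_of_eq =>
        intro x y hxy
        refine ⟨1, ?_⟩
        rw [IsScalarTower.algebraMap_apply ↥R (PowerSeries k) (FractionRing (PowerSeries k)),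
          IsScalarTower.algebraMap_apply ↥R (PowerSeries k) (FractionRing (PowerSeries k))] at hxy
        have hxy' : algebraMap (PowerSeries k) (FractionRing (PowerSeries k)) (x : PowerSeries k)
            = algebraMap (PowerSeries k) (FractionRing (PowerSeries k)) (y : PowerSeries k) := hxy
        have : (x : PowerSeries k) = (y : PowerSeries k) :=
          IsFractionRing.injective (PowerSeries k) (FractionRing (PowerSeries k)) hxy'
        simp [Subtype.ext this]
    let e := IsLocalization.algEquiv (nonZeroDivisors ↥R)
      (FractionRing (PowerSeries k)) (FractionRing ↥R)
    let J : PowerSeries k →ₐ[↥R] FractionRing ↥R :=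
      e.toAlgHom.comp (IsScalarTower.toAlgHom ↥R (PowerSeries k) (FractionRing (PowerSeries k)))
    refine ⟨J.toRingHom, ?_, ?_, ?_⟩
    · exact e.injective.comp (IsFractionRing.injective (PowerSeries k) (FractionRing (PowerSeries k)))
    · ext x
      have hJx : (J.toRingHom.comp (Subalgebra.val R).toRingHom) x
          = e (algebraMap (PowerSeries k) (FractionRing (PowerSeries k)) (x : PowerSeries k)) := rfl
      have h2 : algebraMap ↥R (FractionRing (PowerSeries k)) x
          = algebraMap (PowerSeries k) (FractionRing (PowerSeries k)) (x : PowerSeries k) := by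
        rw [IsScalarTower.algebraMap_apply ↥R (PowerSeries k) (FractionRing (PowerSeries k)),
          Subalgebra.algebraMap_eq]
        rfl
      rw [hJx, ← h2]
      exact e.commutes x
    · ext z
      simp only [RingHom.mem_range, Subalgebra.mem_toSubring]
      constructor
      · rintro ⟨g, rfl⟩
        exact IsIntegral.map J (Algebra.IsIntegral.isIntegral (R := ↥R) g)
      · intro hz
        have hzint : IsIntegral ↥R z := hz
        have hwint : IsIntegral ↥R (e.symm z) := IsIntegral.map e.symm.toAlgHom hzint
        have hwA : IsIntegral (PowerSeries k) (e.symm z) := hwint.tower_top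
        obtain ⟨g, hg⟩ := IsIntegrallyClosed.isIntegral_iff.mp hwA
        refine ⟨g, ?_⟩
        show e (algebraMap (PowerSeries k) (FractionRing (PowerSeries k)) g) = z
        rw [hg]
        exact e.apply_symm_apply z
  · rintro ⟨j, hinj, hcomp, -⟩
    have hgen : ∀ p : ℕ, ∃ s : ↥R, s ≠ 0 ∧ (s : PowerSeries k) * X ^ p ∈ R := by
      intro p
      obtain ⟨⟨num, den⟩, hnd⟩ := IsLocalization.surj (nonZeroDivisors ↥R)
        (j ((X : PowerSeries k) ^ p))
      have hdenne : (den : ↥R) ≠ 0 := nonZeroDivisors.ne_zero den.2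
      refine ⟨(den : ↥R), hdenne, ?_⟩
      have h1 : j (((den : ↥R) : PowerSeries k)) = algebraMap ↥R (FractionRing ↥R) (den : ↥R) :=
        RingHom.congr_fun hcomp (den : ↥R)
      have h1' : j ((num : PowerSeries k)) = algebraMap ↥R (FractionRing ↥R) num :=
        RingHom.congr_fun hcomp num
      have h2 : j (((den : ↥R) : PowerSeries k) * X ^ p) = j ((num : PowerSeries k)) := by
        rw [map_mul, h1, h1', mul_comm, hnd]
      have h3 := hinj h2
      rw [h3]
      exact num.2
    choose sden hsne hsmem using hgen
    set m := (order f).lift (order_finite_iff_ne_zero.mpr hfi) with hm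
    set s : ↥R := ∏ p ∈ Finset.range m, sden p with hs
    have hsne' : (s : PowerSeries k) ≠ 0 := by
      have hne0 : s ≠ 0 := Finset.prod_ne_zero_iff.mpr fun p _ => hsne p
      exact fun h => hne0 (Subtype.ext h)
    have hmul : ∀ a : PowerSeries k, (s : PowerSeries k) * a ∈ R := by
      intro a
      obtain ⟨r, hrR, hadecomp⟩ := exists_repr R f hfi hfc hsum a
      rw [hadecomp, Finset.mul_sum]
      refine Subalgebra.sum_mem R fun p hp => ?_
      have hre : (s : PowerSeries k) * (r p * X ^ p)
          = r p * (((Finset.range m).erase p |>.prod (fun q => ((sden q : PowerSeries k)))) *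
              (((sden p : ↥R) : PowerSeries k) * X ^ p)) := by
        have hfactor : s = sden p * ((Finset.range m).erase p).prod sden :=
          (Finset.mul_prod_erase _ _ hp).symm
        have hcoe : (s : PowerSeries k)
            = ((sden p : ↥R) : PowerSeries k)
                * ((Finset.range m).erase p).prod (fun q => ((sden q : ↥R) : PowerSeries k)) := by
          rw [hfactor]
          push_cast
          ring
        rw [hcoe]; ring
      rw [hre]
      refine mul_mem (hrR p) (mul_mem ?_ (hsmem p))
      exact Subalgebra.prod_mem R fun q _ => (sden q).2
    exact findim_of_denom R (s : PowerSeries k) hsne' hmul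
end

section
/- Let k be a field, R ⊆ k[[t]] a k-subalgebra that is the image of a primitive uni-branch parameterization, and let Γ = {ord(g) : g ∈ R, g ≠ 0} ⊆ ℕ be the semigroup of values. Then dim_k(k[[t]]/R) equals the number of gaps #(ℕ \ Γ), and dim_k(k[[t]]/C) equals the conductor c(Γ), the smallest c ∈ Γ with c + ℕ ⊆ Γ. -/
open PowerSeries

set_option maxHeartbeats 1000000
set_option synthInstance.maxHeartbeats 400000

section Aux

variable {k : Type*} [Field k] {n : ℕ}
variable {k : Type*} [Field k] {n : ℕ}

lemma aux_constCoeff (φ : MvPowerSeries (Fin n) k →ₐ[k] PowerSeries k)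
    (hloc : ∀ F, MvPowerSeries.constantCoeff (σ := Fin n) (R := k) F = 0 →
      constantCoeff (R := k) (φ F) = 0) (F : MvPowerSeries (Fin n) k) :
    constantCoeff (R := k) (φ F) = MvPowerSeries.constantCoeff (σ := Fin n) (R := k) F := by
  set a := MvPowerSeries.constantCoeff (σ := Fin n) (R := k) F with ha
  have h := hloc (F - algebraMap k _ a) (by simp [MvPowerSeries.algebraMap_apply, ha])
  rw [map_sub, map_sub, AlgHom.commutes] at h
  have : constantCoeff (R := k) (algebraMap k (PowerSeries k) a) = a := by
    simp [PowerSeries.algebraMap_apply]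
  rw [this] at h
  exact sub_eq_zero.mp h

lemma aux_unit (φ : MvPowerSeries (Fin n) k →ₐ[k] PowerSeries k)
    (hloc : ∀ F, MvPowerSeries.constantCoeff (σ := Fin n) (R := k) F = 0 →
      constantCoeff (R := k) (φ F) = 0) (a : ↥φ.range)
    (hc : constantCoeff (R := k) (a : PowerSeries k) ≠ 0) : IsUnit a := by
  obtain ⟨F, hF⟩ := a.2
  have hF' : φ F = (a : PowerSeries k) := hF
  have hcF : MvPowerSeries.constantCoeff (σ := Fin n) (R := k) F ≠ 0 := by
    rw [← aux_constCoeff φ hloc, hF']; exact hc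
  obtain ⟨u, hu⟩ := MvPowerSeries.isUnit_iff_constantCoeff.mpr (isUnit_iff_ne_zero.mpr hcF)
  refine IsUnit.of_mul_eq_one ⟨φ ((u⁻¹ : Units _) : MvPowerSeries (Fin n) k), ⟨_, rfl⟩⟩
    (Subtype.ext ?_)
  show (a : PowerSeries k) * φ ((u⁻¹ : Units _) : MvPowerSeries (Fin n) k) = 1
  rw [← hF', ← hu, ← map_mul]
  simp

lemma aux_localRing (φ : MvPowerSeries (Fin n) k →ₐ[k] PowerSeries k)
    (hloc : ∀ F, MvPowerSeries.constantCoeff (σ := Fin n) (R := k) F = 0 →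
      constantCoeff (R := k) (φ F) = 0) : IsLocalRing ↥φ.range := by
  apply IsLocalRing.of_isUnit_or_isUnit_one_sub_self
  intro a
  by_cases hc : constantCoeff (R := k) (a : PowerSeries k) = 0
  · right
    refine aux_unit φ hloc _ ?_
    have : ((1 - a : ↥φ.range) : PowerSeries k) = 1 - (a : PowerSeries k) := by push_cast; ring
    rw [this, map_sub, hc, map_one, sub_zero]
    exact one_ne_zero
  · exact Or.inl (aux_unit φ hloc a hc)
lemma aux_span (SM : Submodule k (PowerSeries k))
    (hfin : FiniteDimensional k (PowerSeries k ⧸ SM)) :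
    ∃ (m : ℕ) (w : Fin m → PowerSeries k),
      ∀ f : PowerSeries k, ∃ c : Fin m → k, f - ∑ i, c i • w i ∈ SM := by
  obtain ⟨m, s, hs⟩ := Module.Finite.exists_fin (R := k) (M := PowerSeries k ⧸ SM)
  choose w hw using fun i => Submodule.Quotient.mk_surjective SM (s i)
  refine ⟨m, w, fun f => ?_⟩
  have h1 : SM.mkQ f ∈ Submodule.span k (Set.range (SM.mkQ ∘ w)) := by
    have h2 : SM.mkQ ∘ w = s := by funext i; simpa [Submodule.mkQ_apply] using hw i
    rw [h2, hs]; trivial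
  obtain ⟨c, hc⟩ := Submodule.mem_span_range_iff_exists_fun k |>.mp h1
  refine ⟨c, ?_⟩
  have h3 : SM.mkQ (f - ∑ i, c i • w i) = 0 := by
    rw [map_sub, map_sum]
    simp only [map_smul]
    rw [← hc]
    simp [Function.comp]
  rwa [Submodule.mkQ_apply, Submodule.Quotient.mk_eq_zero] at h3

lemma aux_stab (SM : Submodule k (PowerSeries k))
    (hfin : FiniteDimensional k (PowerSeries k ⧸ SM)) (e : ℕ) :
    ∃ j₀ : ℕ, ∀ f : PowerSeries k, X ^ j₀ ∣ f →
      ∃ s₀ ∈ SM, ∃ h : PowerSeries k, X ^ (j₀ + e) ∣ h ∧ f = s₀ + h := by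
  classical
  let V : ℕ → Submodule k (PowerSeries k ⧸ SM) :=
    fun j => ((Ideal.span {(X : PowerSeries k) ^ j}).restrictScalars k).map SM.mkQ
  have hVle : ∀ {j j' : ℕ}, j ≤ j' → V j' ≤ V j := by
    intro j j' hj
    apply Submodule.map_mono
    intro x hx
    simp only [Submodule.restrictScalars_mem, Ideal.mem_span_singleton] at hx ⊢
    exact dvd_trans (pow_dvd_pow _ hj) hx
  obtain ⟨j₀, hj₀⟩ : ∃ j₀, Module.finrank k ↥(V j₀) =
      sInf (Set.range fun j => Module.finrank k ↥(V j)) :=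
    Nat.sInf_mem (Set.range_nonempty _)
  have hstab : V (j₀ + e) = V j₀ := by
    refine Submodule.eq_of_le_of_finrank_le (hVle (Nat.le_add_right _ _)) ?_
    rw [hj₀]
    exact Nat.sInf_le ⟨j₀ + e, rfl⟩
  refine ⟨j₀, fun f hf => ?_⟩
  have h1 : SM.mkQ f ∈ V j₀ :=
    ⟨f, by simpa [Ideal.mem_span_singleton] using hf, rfl⟩
  rw [← hstab] at h1
  obtain ⟨h, hh, hQ⟩ := h1
  simp only [SetLike.mem_coe, Submodule.restrictScalars_mem, Ideal.mem_span_singleton] at hh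
  refine ⟨f - h, ?_, h, hh, by ring⟩
  have h3 : SM.mkQ (f - h) = 0 := by rw [map_sub, hQ]; exact sub_self _
  rwa [Submodule.mkQ_apply, Submodule.Quotient.mk_eq_zero] at h3

lemma aux_nakayama (S : Subalgebra k (PowerSeries k)) [IsLocalRing ↥S]
    (g : PowerSeries k) (hgmem : g ∈ S) (hgc : constantCoeff (R := k) g = 0)
    (e j₀ m : ℕ) (w : Fin m → PowerSeries k)
    (hquot : ∀ f : PowerSeries k, ∃ c : Fin m → k, f - ∑ i, c i • w i ∈ S)
    (hfac : ∀ (j : ℕ) (h : PowerSeries k), X ^ (j + e) ∣ h →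
      ∃ h', X ^ j ∣ h' ∧ h = g * h')
    (hdesc : ∀ f : PowerSeries k, X ^ j₀ ∣ f →
      ∃ s₀ ∈ S, ∃ h : PowerSeries k, X ^ (j₀ + e) ∣ h ∧ f = s₀ + h) :
    ∀ f : PowerSeries k, X ^ j₀ ∣ f → f ∈ S := by
  classical
  let SR : Submodule ↥S (PowerSeries k) :=
    LinearMap.range (Algebra.linearMap ↥S (PowerSeries k))
  have mem_SR : ∀ f : PowerSeries k, f ∈ SR ↔ f ∈ S := by
    intro f
    constructor
    · rintro ⟨x, rfl⟩; exact x.2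
    · intro hf; exact ⟨⟨f, hf⟩, rfl⟩
  have hsmul : ∀ (x : ↥S) (f : PowerSeries k), x • f = (x : PowerSeries k) * f :=
    fun x f => Algebra.smul_def x f
  let T : Submodule ↥S (PowerSeries k) :=
    (Ideal.span {(X : PowerSeries k) ^ j₀}).restrictScalars ↥S
  have memT : ∀ f : PowerSeries k, f ∈ T ↔ X ^ j₀ ∣ f := by
    intro f
    simp only [T, Submodule.restrictScalars_mem, Ideal.mem_span_singleton]
  let N : Submodule ↥S (PowerSeries k ⧸ SR) := T.map SR.mkQ
  have hTfg : T.FG := by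
    refine ⟨insert ((X : PowerSeries k) ^ j₀)
      (Finset.image (fun i => (X : PowerSeries k) ^ j₀ * w i) Finset.univ),
      le_antisymm ?_ ?_⟩
    · rw [Submodule.span_le]
      intro x hx
      simp only [Finset.coe_insert, Finset.coe_image, Finset.coe_univ, Set.image_univ,
        Set.mem_insert_iff, Set.mem_range] at hx
      rw [SetLike.mem_coe, memT]
      rcases hx with rfl | ⟨i, rfl⟩
      · exact dvd_rfl
      · exact Dvd.intro _ rfl
    · intro f hf
      rw [memT] at hf
      obtain ⟨r, hr⟩ := hf
      obtain ⟨c, hc⟩ := hquot r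
      have h2 : ∀ i, (algebraMap k ↥S (c i)) • ((X : PowerSeries k) ^ j₀ * w i)
          = (X : PowerSeries k) ^ j₀ * (c i • w i) := by
        intro i
        rw [hsmul]
        have h3 : ((algebraMap k ↥S (c i)) : PowerSeries k)
            = algebraMap k (PowerSeries k) (c i) := rfl
        rw [h3, ← Algebra.smul_def]
        exact (mul_smul_comm _ _ _).symm
      have hrw : f = (⟨r - ∑ i, c i • w i, hc⟩ : ↥S) • ((X : PowerSeries k) ^ j₀)
          + ∑ i, (algebraMap k ↥S (c i)) • ((X : PowerSeries k) ^ j₀ * w i) := by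
        rw [hsmul]
        simp_rw [h2]
        rw [← Finset.mul_sum, hr]
        ring
      rw [hrw]
      refine Submodule.add_mem _ (Submodule.smul_mem _ _ ?_)
        (Submodule.sum_mem _ fun i _ => Submodule.smul_mem _ _ ?_)
      · exact Submodule.subset_span (by simp)
      · exact Submodule.subset_span (by simp)
  have hNfg : N.FG := hTfg.map _
  have hNle : N ≤ (IsLocalRing.maximalIdeal ↥S) • N := by
    rintro x ⟨f, hfT, rfl⟩
    rw [SetLike.mem_coe, memT] at hfT
    obtain ⟨s₀, hs₀, h, hh, rfl⟩ := hdesc f hfT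
    obtain ⟨h', hh', rfl⟩ := hfac j₀ h hh
    have hQ : SR.mkQ (s₀ + g * h') = (⟨g, hgmem⟩ : ↥S) • SR.mkQ h' := by
      rw [map_add, ← map_smul, hsmul]
      have : SR.mkQ s₀ = 0 := by
        rw [Submodule.mkQ_apply, Submodule.Quotient.mk_eq_zero, mem_SR]
        exact hs₀
      rw [this, zero_add]
    rw [hQ]
    refine Submodule.smul_mem_smul ?_ ⟨h', (memT h').mpr hh', rfl⟩
    rw [IsLocalRing.mem_maximalIdeal]
    intro hu
    obtain ⟨v, hv⟩ := hu.exists_right_inv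
    have : g * (v : PowerSeries k) = 1 := by
      have := congrArg (fun x : ↥S => (x : PowerSeries k)) hv
      push_cast at this
      exact this
    have := congrArg (constantCoeff (R := k)) this
    rw [map_mul, hgc, zero_mul, map_one] at this
    exact zero_ne_one this
  have hN : N = ⊥ :=
    Submodule.eq_bot_of_le_smul_of_le_jacobson_bot (IsLocalRing.maximalIdeal ↥S) N hNfg hNle
      (by rw [IsLocalRing.jacobson_eq_maximalIdeal ⊥ bot_ne_top])
  intro f hf
  have h1 : SR.mkQ f ∈ N := ⟨f, (memT f).mpr hf, rfl⟩
  rw [hN, Submodule.mem_bot, Submodule.mkQ_apply, Submodule.Quotient.mk_eq_zero, mem_SR] at h1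
  exact h1

lemma aux_closed (φ : MvPowerSeries (Fin n) k →ₐ[k] PowerSeries k)
    (hloc : ∀ F, MvPowerSeries.constantCoeff (σ := Fin n) (R := k) F = 0 →
      constantCoeff (R := k) (φ F) = 0)
    (hne : ∃ i, φ (MvPowerSeries.X i) ≠ 0)
    (hfin : FiniteDimensional k (PowerSeries k ⧸ Subalgebra.toSubmodule φ.range)) :
    ∃ c₀ : ℕ, ∀ f : PowerSeries k, X ^ c₀ ∣ f → f ∈ φ.range := by
  classical
  haveI := aux_localRing φ hloc
  obtain ⟨i, hgne⟩ := hne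
  have hgmem : φ (MvPowerSeries.X i) ∈ φ.range := ⟨_, rfl⟩
  have hgc : constantCoeff (R := k) (φ (MvPowerSeries.X i)) = 0 := by
    rw [aux_constCoeff φ hloc]; simp
  obtain ⟨e, he⟩ : ∃ e : ℕ, (φ (MvPowerSeries.X i)).order = (e : ℕ∞) := by
    obtain ⟨e, he⟩ := WithTop.ne_top_iff_exists.mp
      (order_finite_iff_ne_zero.2 hgne).ne
    exact ⟨e, he.symm⟩
  obtain ⟨hcoe, hlow⟩ := order_eq_nat.mp he
  obtain ⟨q, hq⟩ : X ^ e ∣ φ (MvPowerSeries.X i) := X_pow_dvd_iff.mpr hlow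
  have hqc : constantCoeff (R := k) q ≠ 0 := by
    intro h0
    apply hcoe
    rw [hq, coeff_X_pow_mul']
    simp [h0]
  obtain ⟨u, hu⟩ := isUnit_iff_constantCoeff.mpr (isUnit_iff_ne_zero.mpr hqc)
  have hfac : ∀ (j : ℕ) (h : PowerSeries k), X ^ (j + e) ∣ h →
      ∃ h', X ^ j ∣ h' ∧ h = φ (MvPowerSeries.X i) * h' := by
    rintro j h ⟨r, hr⟩
    refine ⟨((u⁻¹ : Units _) : PowerSeries k) * (X ^ j * r), ⟨_ * r, by ring⟩, ?_⟩
    rw [hr, hq, ← hu]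
    have h5 : (u : PowerSeries k) * ((u⁻¹ : Units _) : PowerSeries k) = 1 := by
      exact_mod_cast u.mul_inv
    calc X ^ (j + e) * r
        = X ^ e * ((u : PowerSeries k) * ((u⁻¹ : Units _) : PowerSeries k)) * (X ^ j * r) := by
          rw [h5]; ring
      _ = X ^ e * (u : PowerSeries k) * (((u⁻¹ : Units _) : PowerSeries k) * (X ^ j * r)) := by
          ring
  obtain ⟨m, w, hquot⟩ := aux_span (Subalgebra.toSubmodule φ.range) hfin
  obtain ⟨j₀, hdesc⟩ := aux_stab (Subalgebra.toSubmodule φ.range) hfin e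
  refine ⟨j₀, aux_nakayama φ.range (φ (MvPowerSeries.X i)) hgmem hgc e j₀ m w
    (fun f => ?_) hfac (fun f hf => ?_)⟩
  · obtain ⟨c, hc⟩ := hquot f
    exact ⟨c, by rwa [← Subalgebra.mem_toSubmodule]⟩
  · obtain ⟨s₀, hs₀, h, hh, hfe⟩ := hdesc f hf
    exact ⟨s₀, by rwa [Subalgebra.mem_toSubmodule] at hs₀, h, hh, hfe⟩

lemma aux_coeff_sum_at {ι : Type*} [DecidableEq ι] (t : Finset ι) (l : ι → k) (dd : ι → ℕ)
    (d₀ : ι) (hd₀ : d₀ ∈ t) (hinj : ∀ d ∈ t, dd d = dd d₀ → d = d₀) :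
    coeff (R := k) (dd d₀) (∑ d ∈ t, l d • (X : PowerSeries k) ^ dd d) = l d₀ := by
  rw [map_sum]
  rw [Finset.sum_eq_single d₀]
  · rw [map_smul, coeff_X_pow, if_pos rfl, smul_eq_mul, mul_one]
  · intro d hd hne
    rw [map_smul, coeff_X_pow, if_neg (fun h => hne (hinj d hd h.symm)), smul_eq_mul, mul_zero]
  · intro h; exact absurd hd₀ h

lemma aux_coeff_sum_ne {ι : Type*} (t : Finset ι) (l : ι → k) (dd : ι → ℕ)
    (m : ℕ) (hm : ∀ d ∈ t, dd d ≠ m) :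
    coeff (R := k) m (∑ d ∈ t, l d • (X : PowerSeries k) ^ dd d) = 0 := by
  rw [map_sum]
  refine Finset.sum_eq_zero fun d hd => ?_
  rw [map_smul, coeff_X_pow, if_neg (fun h => hm d hd h.symm), smul_eq_mul, mul_zero]

end Aux

/-- Let `R = φ.range ⊆ k[[t]]` be the image of a primitive uni-branch
parameterization (`φ` a nonzero local homomorphism with `dim_k k[[t]]/R < ∞`), and
`Γ = {ord g : g ∈ R, g ≠ 0}` the semigroup of values. Then `dim_k k[[t]]/R` is the
number of gaps `#(ℕ \ Γ)`, and `dim_k k[[t]]/C` (with `C = Ann_R(k[[t]]/R)` the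
conductor ideal) is the smallest `c ∈ Γ` with `c + ℕ ⊆ Γ`. -/
theorem delta_eq_gaps_and_conductor_eq_semigroup_conductor {k : Type*} [Field k]
    {n : ℕ} (φ : MvPowerSeries (Fin n) k →ₐ[k] PowerSeries k)
    (hloc : ∀ F, MvPowerSeries.constantCoeff (σ := Fin n) (R := k) F = 0 →
      constantCoeff (R := k) (φ F) = 0)
    (hne : ∃ i, φ (MvPowerSeries.X i) ≠ 0)
    (hfin : FiniteDimensional k (PowerSeries k ⧸ Subalgebra.toSubmodule φ.range))
    (Γ : Set ℕ)
    (hΓ : ∀ d : ℕ, d ∈ Γ ↔ ∃ g ∈ φ.range, g ≠ 0 ∧ g.order = (d : ℕ∞))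
    (C : Submodule k (PowerSeries k))
    (hC : ∀ f : PowerSeries k, f ∈ C ↔ ∀ g : PowerSeries k, f * g ∈ φ.range) :
    Module.finrank k (PowerSeries k ⧸ Subalgebra.toSubmodule φ.range) = Γᶜ.ncard ∧
    Module.finrank k (PowerSeries k ⧸ C) =
      sInf {c : ℕ | c ∈ Γ ∧ ∀ m : ℕ, c ≤ m → m ∈ Γ} := by
  classical
  obtain ⟨c₀, hc₀⟩ := aux_closed φ hloc hne hfin
  -- monic generators of each order in Γ
  have hmonic : ∀ d ∈ Γ, ∃ G ∈ φ.range,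
      (∀ j < d, coeff (R := k) j G = 0) ∧ coeff (R := k) d G = 1 := by
    intro d hd
    obtain ⟨g, hg, hg0, hord⟩ := (hΓ d).mp hd
    obtain ⟨hcg, hlg⟩ := order_eq_nat.mp hord
    refine ⟨(coeff (R := k) d g)⁻¹ • g, Subalgebra.smul_mem _ hg _, fun j hj => ?_, ?_⟩
    · rw [map_smul, hlg j hj, smul_zero]
    · rw [map_smul, smul_eq_mul, inv_mul_cancel₀ hcg]
  -- everything from c₀ on is in Γ
  have hupper : ∀ m : ℕ, c₀ ≤ m → m ∈ Γ := by
    intro m hm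
    exact (hΓ m).mpr ⟨X ^ m, hc₀ _ (pow_dvd_pow _ hm),
      pow_ne_zero _ X_ne_zero, order_X_pow m⟩
  have hcs : {c : ℕ | c ∈ Γ ∧ ∀ m : ℕ, c ≤ m → m ∈ Γ}.Nonempty :=
    ⟨c₀, hupper c₀ le_rfl, hupper⟩
  obtain ⟨hcΓ, hcall⟩ := Nat.sInf_mem hcs
  set c : ℕ := sInf {c : ℕ | c ∈ Γ ∧ ∀ m : ℕ, c ≤ m → m ∈ Γ} with hcdef
  -- everything of order ≥ c is in the range
  have hred : ∀ i : ℕ, ∀ f : PowerSeries k, X ^ c ∣ f →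
      ∃ s ∈ φ.range, X ^ (c + i) ∣ (f - s) := by
    intro i
    induction i with
    | zero => exact fun f hf => ⟨0, zero_mem _, by simpa using hf⟩
    | succ i ih =>
      intro f hf
      obtain ⟨s, hs, hdvd⟩ := ih f hf
      obtain ⟨G, hG, hGlow, hGd⟩ := hmonic (c + i) (hcall _ (Nat.le_add_right _ _))
      refine ⟨s + coeff (R := k) (c + i) (f - s) • G,
        add_mem hs (Subalgebra.smul_mem _ hG _), ?_⟩
      rw [X_pow_dvd_iff]
      intro mm hmm
      have hfs := X_pow_dvd_iff.mp hdvd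
      have heq : f - (s + coeff (R := k) (c + i) (f - s) • G)
          = (f - s) - coeff (R := k) (c + i) (f - s) • G := by ring
      rw [heq, map_sub, map_smul]
      rcases Nat.lt_succ_iff_lt_or_eq.mp (show mm < (c + i) + 1 by omega) with h | h
      · rw [hfs mm h, hGlow mm h, smul_zero, sub_zero]
      · subst h; rw [hGd, smul_eq_mul, mul_one, sub_self]
  have hcR : ∀ f : PowerSeries k, X ^ c ∣ f → f ∈ φ.range := by
    intro f hf
    obtain ⟨s, hs, hdvd⟩ := hred c₀ f hf
    have h1 : f - s ∈ φ.range :=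
      hc₀ _ (dvd_trans (pow_dvd_pow _ (Nat.le_add_left _ _)) hdvd)
    simpa using add_mem hs h1
  constructor
  · -- first statement: gaps
    have hind : LinearIndependent k
        (fun d : ↥(Γᶜ) => (Subalgebra.toSubmodule φ.range).mkQ
          ((X : PowerSeries k) ^ (d : ℕ))) := by
      rw [linearIndependent_iff']
      intro t l hsum d₀ hd₀
      by_contra hne0
      have hcoeff_at : coeff (R := k) (d₀ : ℕ)
          (∑ d ∈ t, l d • (X : PowerSeries k) ^ (d : ℕ)) = l d₀ :=
        aux_coeff_sum_at t l _ d₀ hd₀ (fun d _ h => Subtype.ext h)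
      have hmem : (∑ d ∈ t, l d • (X : PowerSeries k) ^ (d : ℕ)) ∈ φ.range := by
        have h2 : (Subalgebra.toSubmodule φ.range).mkQ
            (∑ d ∈ t, l d • (X : PowerSeries k) ^ (d : ℕ)) = 0 := by
          rw [map_sum]; simp only [map_smul]; exact hsum
        rwa [Submodule.mkQ_apply, Submodule.Quotient.mk_eq_zero,
          Subalgebra.mem_toSubmodule] at h2
      have hne' : (∑ d ∈ t, l d • (X : PowerSeries k) ^ (d : ℕ)) ≠ 0 := by
        intro h0
        rw [h0, map_zero] at hcoeff_at
        exact hne0 hcoeff_at.symm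
      obtain ⟨m, hm⟩ : ∃ m : ℕ,
          (∑ d ∈ t, l d • (X : PowerSeries k) ^ (d : ℕ)).order = (m : ℕ∞) := by
        obtain ⟨m, hm⟩ := WithTop.ne_top_iff_exists.mp
          (order_finite_iff_ne_zero.2 hne').ne
        exact ⟨m, hm.symm⟩
      have hcm := (order_eq_nat.mp hm).1
      have hex : ∃ d ∈ t, (d : ℕ) = m := by
        by_contra hno
        push_neg at hno
        exact hcm (aux_coeff_sum_ne t l _ m hno)
      obtain ⟨d, hdt, hdm⟩ := hex
      have : m ∈ Γ := (hΓ m).mpr ⟨_, hmem, hne', hm⟩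
      exact (hdm ▸ d.2) this
    have hspan2 : ∀ i : ℕ, ∀ f : PowerSeries k, ∃ s ∈ φ.range,
        ∃ h ∈ Submodule.span k
          (Set.range (fun d : ↥(Γᶜ) => (X : PowerSeries k) ^ (d : ℕ))),
          X ^ i ∣ (f - s - h) := by
      intro i
      induction i with
      | zero => exact fun f => ⟨0, zero_mem _, 0, zero_mem _, by simpa using one_dvd _⟩
      | succ i ih =>
        intro f
        obtain ⟨s, hs, h, hhspan, hdvd⟩ := ih f
        have hlowf := X_pow_dvd_iff.mp hdvd
        by_cases hiΓ : i ∈ Γ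
        · obtain ⟨G, hG, hGlow, hGd⟩ := hmonic i hiΓ
          refine ⟨s + coeff (R := k) i (f - s - h) • G,
            add_mem hs (Subalgebra.smul_mem _ hG _), h, hhspan, ?_⟩
          rw [X_pow_dvd_iff]
          intro mm hmm
          have heq : f - (s + coeff (R := k) i (f - s - h) • G) - h
              = (f - s - h) - coeff (R := k) i (f - s - h) • G := by ring
          rw [heq, map_sub, map_smul]
          rcases Nat.lt_succ_iff_lt_or_eq.mp hmm with hlt | hlt
          · rw [hlowf mm hlt, hGlow mm hlt, smul_zero, sub_zero]
          · subst hlt; rw [hGd, smul_eq_mul, mul_one, sub_self]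
        · refine ⟨s, hs, h + coeff (R := k) i (f - s - h) • (X : PowerSeries k) ^ i,
            add_mem hhspan (Submodule.smul_mem _ _
              (Submodule.subset_span ⟨⟨i, hiΓ⟩, rfl⟩)), ?_⟩
          rw [X_pow_dvd_iff]
          intro mm hmm
          have heq : f - s - (h + coeff (R := k) i (f - s - h) • (X : PowerSeries k) ^ i)
              = (f - s - h) - coeff (R := k) i (f - s - h) • (X : PowerSeries k) ^ i := by ring
          rw [heq, map_sub, map_smul, coeff_X_pow]
          rcases Nat.lt_succ_iff_lt_or_eq.mp hmm with hlt | hlt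
          · rw [hlowf mm hlt, if_neg (Nat.ne_of_lt hlt), smul_eq_mul, mul_zero, sub_zero]
          · subst hlt; rw [if_pos rfl, smul_eq_mul, mul_one, sub_self]
    have hbtop : ⊤ ≤ Submodule.span k (Set.range
        (fun d : ↥(Γᶜ) => (Subalgebra.toSubmodule φ.range).mkQ
          ((X : PowerSeries k) ^ (d : ℕ)))) := by
      intro x _
      obtain ⟨f, rfl⟩ := (Subalgebra.toSubmodule φ.range).mkQ_surjective x
      obtain ⟨s, hs, h, hh, hdvd⟩ := hspan2 c f
      have h1 : f - s - h ∈ φ.range := hcR _ hdvd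
      have h2 : (Subalgebra.toSubmodule φ.range).mkQ f
          = (Subalgebra.toSubmodule φ.range).mkQ h := by
        rw [← sub_eq_zero, ← map_sub, Submodule.mkQ_apply, Submodule.Quotient.mk_eq_zero,
          Subalgebra.mem_toSubmodule]
        have heq : f - h = (f - s - h) + s := by ring
        rw [heq]
        exact add_mem h1 hs
      rw [h2]
      have h3 : (Subalgebra.toSubmodule φ.range).mkQ h ∈
          Submodule.map (Subalgebra.toSubmodule φ.range).mkQ
            (Submodule.span k (Set.range
              (fun d : ↥(Γᶜ) => (X : PowerSeries k) ^ (d : ℕ)))) := ⟨h, hh, rfl⟩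
      rwa [Submodule.map_span, ← Set.range_comp] at h3
    have bB := Module.Basis.mk hind hbtop
    haveI : Finite ↥(Γᶜ) :=
      Cardinal.lt_aleph0_iff_finite.mp hind.lt_aleph0_of_finiteDimensional
    haveI : Fintype ↥(Γᶜ) := Fintype.ofFinite _
    rw [Module.finrank_eq_card_basis bB, ← Nat.card_eq_fintype_card,
      Nat.card_coe_set_eq]
  · -- second statement: conductor
    have PC : ∀ f : PowerSeries k, f ∈ C ↔ (X : PowerSeries k) ^ c ∣ f := by
      intro f
      constructor
      · intro hf
        rcases eq_or_ne f 0 with rfl | hf0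
        · exact dvd_zero _
        obtain ⟨d, hd⟩ : ∃ d : ℕ, f.order = (d : ℕ∞) := by
          obtain ⟨d, hd⟩ := WithTop.ne_top_iff_exists.mp
            (order_finite_iff_ne_zero.2 hf0).ne
          exact ⟨d, hd.symm⟩
        have hdc : d ∈ {c : ℕ | c ∈ Γ ∧ ∀ m : ℕ, c ≤ m → m ∈ Γ} := by
          constructor
          · refine (hΓ d).mpr ⟨f, ?_, hf0, hd⟩
            have := (hC f).mp hf 1
            rwa [mul_one] at this
          · intro m hm
            refine (hΓ m).mpr ⟨f * X ^ (m - d), (hC f).mp hf _,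
              mul_ne_zero hf0 (pow_ne_zero _ X_ne_zero), ?_⟩
            rw [order_mul, hd, order_X_pow, ← Nat.cast_add, Nat.add_sub_cancel' hm]
        have hcd : c ≤ d := Nat.sInf_le hdc
        refine dvd_trans (pow_dvd_pow _ hcd) (X_pow_dvd_iff.mpr ?_)
        intro m hm
        exact coeff_of_lt_order m (by rw [hd]; exact_mod_cast hm)
      · intro hf
        rw [hC]
        intro g
        exact hcR _ (Dvd.dvd.mul_right hf g)
    have hindC : LinearIndependent k (fun j : Fin c => C.mkQ ((X : PowerSeries k) ^ (j : ℕ))) := by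
      rw [Fintype.linearIndependent_iff]
      intro l hsum j₀
      have hmem : (∑ j : Fin c, l j • (X : PowerSeries k) ^ (j : ℕ)) ∈ C := by
        have h2 : C.mkQ (∑ j : Fin c, l j • (X : PowerSeries k) ^ (j : ℕ)) = 0 := by
          rw [map_sum]; simp only [map_smul]; exact hsum
        rwa [Submodule.mkQ_apply, Submodule.Quotient.mk_eq_zero] at h2
      have hdvd := (PC _).mp hmem
      have hlow := X_pow_dvd_iff.mp hdvd
      have h3 := hlow (j₀ : ℕ) j₀.2
      rwa [aux_coeff_sum_at Finset.univ l _ j₀ (Finset.mem_univ _)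
        (fun d _ h => Fin.ext h)] at h3
    have hspanC : ⊤ ≤ Submodule.span k (Set.range
        (fun j : Fin c => C.mkQ ((X : PowerSeries k) ^ (j : ℕ)))) := by
      intro x _
      obtain ⟨f, rfl⟩ := C.mkQ_surjective x
      have hr : f - ∑ j : Fin c, coeff (R := k) (j : ℕ) f • (X : PowerSeries k) ^ (j : ℕ) ∈ C := by
        rw [PC, X_pow_dvd_iff]
        intro m hm
        rw [map_sub, aux_coeff_sum_at (k := k) Finset.univ
          (fun j : Fin c => coeff (R := k) (j : ℕ) f) (fun j => (j : ℕ)) ⟨m, hm⟩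
          (Finset.mem_univ _) (fun d _ h => Fin.ext h), sub_self]
      have h2 : C.mkQ f = ∑ j : Fin c, coeff (R := k) (j : ℕ) f • C.mkQ ((X : PowerSeries k) ^ (j : ℕ)) := by
        rw [← sub_eq_zero]
        have h4 : ∑ j : Fin c, coeff (R := k) (j : ℕ) f • C.mkQ ((X : PowerSeries k) ^ (j : ℕ))
            = C.mkQ (∑ j : Fin c, coeff (R := k) (j : ℕ) f • (X : PowerSeries k) ^ (j : ℕ)) := by
          rw [map_sum]; simp only [map_smul]
        rw [h4, ← map_sub, Submodule.mkQ_apply, Submodule.Quotient.mk_eq_zero]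
        exact hr
      rw [h2]
      exact Submodule.sum_mem _ (fun j _ => Submodule.smul_mem _ _
        (Submodule.subset_span ⟨j, rfl⟩))
    have bC := Module.Basis.mk hindC hspanC
    rw [Module.finrank_eq_card_basis bC, Fintype.card_fin]
end

section
/- Let k be a field and φ, ψ : k[[x₁,...,xₙ]] → k[[t₁]] ⊕ ... ⊕ k[[tᵣ]] two parameterizations of reduced curve singularities. Suppose the conductor of φ is C_φ = f·R̃ with f = (t₁^{c₁},...,tᵣ^{cʳ}) and c := max{c₁,...,cᵣ}. If φ(xᵢ) ≡ ψ(xᵢ) mod m̃^{2c} for all i (m̃ the Jacobson radical of R̃), then there exists a k-algebra automorphism σ of k[[x₁,...,xₙ]] with φ ∘ σ = ψ. In particular φ and ψ are left-equivalent. -/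
open PowerSeries

set_option linter.unusedSectionVars false
namespace Stmt9

open MvPowerSeries Finsupp

lemma degree_add' {σ : Type*} (a b : σ →₀ ℕ) :
    (a + b).degree = a.degree + b.degree := by
  simp [degree_eq_weight_one, map_add]

lemma degree_le_of_le {σ : Type*} {a b : σ →₀ ℕ} (h : a ≤ b) :
    a.degree ≤ b.degree := by
  obtain ⟨c, rfl⟩ := le_iff_exists_add.mp h
  rw [degree_add']; omega

/-- The maximal ideal of a multivariate power series ring. -/
noncomputable def mIdeal (σ R : Type*) [CommRing R] : Ideal (MvPowerSeries σ R) :=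
  RingHom.ker ((MvPowerSeries.constantCoeff (σ := σ) (R := R)))

lemma mem_mIdeal {σ R : Type*} [CommRing R] {f : MvPowerSeries σ R} :
    f ∈ mIdeal σ R ↔ (MvPowerSeries.constantCoeff (σ := σ) (R := R)) f = 0 := RingHom.mem_ker

lemma coeff_eq_zero_of_mem_pow {σ R : Type*} [CommRing R] (s : ℕ) :
    ∀ f ∈ (mIdeal σ R) ^ s, ∀ e : σ →₀ ℕ, e.degree < s → MvPowerSeries.coeff (R := R) e f = 0 := by
  classical
  induction s with
  | zero => intro f _ e he; omega
  | succ s ih =>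
    intro f hf
    rw [pow_succ] at hf
    refine Submodule.mul_induction_on hf ?_ ?_
    · intro a ha b hb e he
      rw [MvPowerSeries.coeff_mul]
      apply Finset.sum_eq_zero
      rintro ⟨p, q⟩ hpq
      rw [Finset.HasAntidiagonal.mem_antidiagonal] at hpq
      by_cases hp : p.degree < s
      · rw [ih a ha p hp, zero_mul]
      · have hq : q = 0 := by
          have hd : p.degree + q.degree = e.degree := by rw [← degree_add', hpq]
          have : q.degree = 0 := by omega
          rwa [degree_eq_zero_iff] at this
        subst hq
        rw [MvPowerSeries.coeff_zero_eq_constantCoeff_apply, mem_mIdeal.mp hb, mul_zero]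
    · intro x y hx hy e he
      rw [map_add, hx e he, hy e he, add_zero]
open MvPowerSeries Finsupp

variable {σ R : Type*} [CommRing R] [Fintype σ] [DecidableEq σ]

/-- bound finsupp -/
noncomputable def bnd (σ : Type*) [Fintype σ] (s : ℕ) : σ →₀ ℕ := equivFunOnFinite.symm fun _ => s

lemma le_bnd {s : ℕ} {d : σ →₀ ℕ} (h : d.degree ≤ s) : d ≤ bnd σ s := by
  intro i
  exact le_trans (Finsupp.le_degree i d) h

/-- truncation up to total degree `s` (inclusive), as a polynomial -/
noncomputable def PTrunc (s : ℕ) (F : MvPowerSeries σ R) : MvPolynomial σ R :=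
  ∑ d ∈ Finset.Iic (bnd σ s), MvPolynomial.monomial d (MvPowerSeries.coeff (R := R) d F)

lemma coeff_PTrunc (s : ℕ) (F : MvPowerSeries σ R) (d : σ →₀ ℕ) :
    (PTrunc s F).coeff d = if d ≤ bnd σ s then MvPowerSeries.coeff (R := R) d F else 0 := by
  rw [PTrunc, MvPolynomial.coeff_sum]
  simp only [MvPolynomial.coeff_monomial]
  rw [Finset.sum_ite_eq']; simp [Finset.mem_Iic]

lemma coeff_PTrunc_of_le {s : ℕ} {d : σ →₀ ℕ} (h : d.degree ≤ s) (F : MvPowerSeries σ R) :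
    (PTrunc s F).coeff d = MvPowerSeries.coeff (R := R) d F := by
  rw [coeff_PTrunc, if_pos (le_bnd h)]

variable (g : σ → MvPowerSeries σ R)

lemma prod_pow_mem (hg : ∀ i, (MvPowerSeries.constantCoeff (σ := σ) (R := R)) (g i) = 0) (d : σ →₀ ℕ) :
    (d.prod fun i m => g i ^ m) ∈ (mIdeal σ R) ^ d.degree := by
  simp only [Finsupp.prod, Finsupp.degree_apply]
  generalize d.support = t
  induction t using Finset.cons_induction with
  | empty => simp [Submodule.one_eq_range]
  | cons i t hi ih =>
    rw [Finset.prod_cons, Finset.sum_cons, pow_add]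
    exact Submodule.mul_mem_mul (Ideal.pow_mem_pow (mem_mIdeal.mpr (hg i)) _) ih

lemma coeff_aeval_eq_zero (hg : ∀ i, (MvPowerSeries.constantCoeff (σ := σ) (R := R)) (g i) = 0)
    {P : MvPolynomial σ R} {t : ℕ} (hP : ∀ d : σ →₀ ℕ, d.degree ≤ t → P.coeff d = 0)
    {e : σ →₀ ℕ} (he : e.degree ≤ t) :
    MvPowerSeries.coeff (R := R) e (MvPolynomial.aeval g P) = 0 := by
  conv_lhs => rw [P.as_sum]
  rw [map_sum, map_sum]
  apply Finset.sum_eq_zero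
  intro d hd
  have hdeg : t < d.degree := by
    by_contra hle
    exact (MvPolynomial.mem_support_iff.mp hd) (hP d (by omega))
  rw [MvPolynomial.aeval_monomial]
  refine coeff_eq_zero_of_mem_pow d.degree _ ?_ e (lt_of_le_of_lt he hdeg)
  exact Ideal.mul_mem_left _ _ (prod_pow_mem g hg d)

lemma coeff_aeval_congr (hg : ∀ i, (MvPowerSeries.constantCoeff (σ := σ) (R := R)) (g i) = 0)
    {P P' : MvPolynomial σ R} {t : ℕ} (h : ∀ d : σ →₀ ℕ, d.degree ≤ t → P.coeff d = P'.coeff d)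
    {e : σ →₀ ℕ} (he : e.degree ≤ t) :
    MvPowerSeries.coeff (R := R) e (MvPolynomial.aeval g P) =
      MvPowerSeries.coeff (R := R) e (MvPolynomial.aeval g P') := by
  rw [← sub_eq_zero, ← map_sub, ← map_sub]
  exact coeff_aeval_eq_zero g hg (fun d hd => by
    rw [MvPolynomial.coeff_sub, h d hd, sub_self]) he

/-- substitution of `g` into a power series -/
noncomputable def evalFun (F : MvPowerSeries σ R) : MvPowerSeries σ R :=
  fun e => MvPowerSeries.coeff (R := R) e (MvPolynomial.aeval g (PTrunc e.degree F))

lemma coeff_evalFun (F : MvPowerSeries σ R) (e : σ →₀ ℕ) :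
    MvPowerSeries.coeff (R := R) e (evalFun g F) =
      MvPowerSeries.coeff (R := R) e (MvPolynomial.aeval g (PTrunc e.degree F)) := rfl

lemma coeff_evalFun_stab (hg : ∀ i, (MvPowerSeries.constantCoeff (σ := σ) (R := R)) (g i) = 0)
    (F : MvPowerSeries σ R) {e : σ →₀ ℕ} {s : ℕ} (hs : e.degree ≤ s) :
    MvPowerSeries.coeff (R := R) e (evalFun g F) =
      MvPowerSeries.coeff (R := R) e (MvPolynomial.aeval g (PTrunc s F)) := by
  rw [coeff_evalFun]
  exact coeff_aeval_congr g hg (fun d hd => by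
    rw [coeff_PTrunc_of_le hd, coeff_PTrunc_of_le (le_trans hd hs)]) le_rfl

lemma PTrunc_add (s : ℕ) (F G : MvPowerSeries σ R) :
    PTrunc s (F + G) = PTrunc s F + PTrunc s G := by
  ext d
  simp only [coeff_PTrunc, map_add, MvPolynomial.coeff_add]
  split <;> simp

lemma PTrunc_one (s : ℕ) : PTrunc s (1 : MvPowerSeries σ R) = 1 := by
  ext d
  rw [coeff_PTrunc]
  by_cases h0 : d = 0
  · subst h0
    simp [MvPowerSeries.coeff_one]
  · simp [MvPowerSeries.coeff_one, MvPolynomial.coeff_one, h0, Ne.symm h0]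

lemma PTrunc_C (s : ℕ) (a : R) :
    PTrunc s (((MvPowerSeries.C (σ := σ) (R := R))) a) = MvPolynomial.C a := by
  ext d
  rw [coeff_PTrunc]
  by_cases h0 : d = 0
  · subst h0
    simp [MvPowerSeries.coeff_C, MvPolynomial.coeff_C]
  · simp [MvPowerSeries.coeff_C, MvPolynomial.coeff_C, h0, Ne.symm h0]

lemma PTrunc_zero_eq (F : MvPowerSeries σ R) : PTrunc 0 F = MvPolynomial.C ((MvPowerSeries.constantCoeff (σ := σ) (R := R)) F) := by
  ext d
  rw [coeff_PTrunc, MvPolynomial.coeff_C]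
  by_cases h0 : d = 0
  · subst h0
    rw [if_pos zero_le]
    simp
  · rw [if_neg (Ne.symm h0)]
    have : ¬ d ≤ bnd σ 0 := by
      intro hle
      apply h0
      ext i
      exact Nat.le_zero.mp (hle i)
    rw [if_neg this]

variable {g} in
lemma evalFun_mul (hg : ∀ i, (MvPowerSeries.constantCoeff (σ := σ) (R := R)) (g i) = 0)
    (F G : MvPowerSeries σ R) :
    evalFun g (F * G) = evalFun g F * evalFun g G := by
  apply MvPowerSeries.ext
  intro e
  set s := e.degree with hs
  rw [MvPowerSeries.coeff_mul]
  have hR : ∑ p ∈ Finset.HasAntidiagonal.antidiagonal e,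
      MvPowerSeries.coeff (R := R) p.1 (evalFun g F) * MvPowerSeries.coeff (R := R) p.2 (evalFun g G)
      = ∑ p ∈ Finset.HasAntidiagonal.antidiagonal e,
      MvPowerSeries.coeff (R := R) p.1 (MvPolynomial.aeval g (PTrunc s F)) *
        MvPowerSeries.coeff (R := R) p.2 (MvPolynomial.aeval g (PTrunc s G)) := by
    apply Finset.sum_congr rfl
    rintro ⟨p, q⟩ hpq
    rw [Finset.HasAntidiagonal.mem_antidiagonal] at hpq
    dsimp only
    have hpq' : p.degree + q.degree = s := by
      rw [hs, ← hpq, degree_add']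
    have hp : p.degree ≤ s := by omega
    have hq : q.degree ≤ s := by omega
    rw [coeff_evalFun_stab g hg F hp, coeff_evalFun_stab g hg G hq]
  rw [hR, ← MvPowerSeries.coeff_mul, ← map_mul]
  rw [coeff_evalFun]
  refine coeff_aeval_congr g hg (fun d hd => ?_) (le_refl s)
  rw [coeff_PTrunc_of_le hd, MvPowerSeries.coeff_mul, MvPolynomial.coeff_mul]
  apply Finset.sum_congr rfl
  rintro ⟨p, q⟩ hpq
  rw [Finset.HasAntidiagonal.mem_antidiagonal] at hpq
  dsimp only
  have hpq' : p.degree + q.degree = d.degree := by rw [← hpq, degree_add']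
  have hp : p.degree ≤ s := by omega
  have hq : q.degree ≤ s := by omega
  rw [coeff_PTrunc_of_le hp, coeff_PTrunc_of_le hq]

/-- Substitution `F ↦ F(g)` as an `R`-algebra homomorphism, for `g` a family of
power series with vanishing constant coefficient. -/
noncomputable def evalHom (hg : ∀ i, (MvPowerSeries.constantCoeff (σ := σ) (R := R)) (g i) = 0) :
    MvPowerSeries σ R →ₐ[R] MvPowerSeries σ R where
  toFun := evalFun g
  map_one' := by
    apply MvPowerSeries.ext
    intro e
    rw [coeff_evalFun, PTrunc_one, map_one]
  map_mul' := evalFun_mul hg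
  map_zero' := by
    apply MvPowerSeries.ext
    intro e
    rw [coeff_evalFun]
    have : PTrunc e.degree (0 : MvPowerSeries σ R) = 0 := by
      ext d; simp [coeff_PTrunc]
    rw [this, map_zero, map_zero]
  map_add' F G := by
    apply MvPowerSeries.ext
    intro e
    rw [coeff_evalFun, PTrunc_add, map_add, map_add, map_add, coeff_evalFun, coeff_evalFun]
  commutes' a := by
    apply MvPowerSeries.ext
    intro e
    rw [← MvPowerSeries.c_eq_algebraMap, coeff_evalFun, PTrunc_C, MvPolynomial.aeval_C,
      ← MvPowerSeries.c_eq_algebraMap]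

lemma evalHom_apply (hg : ∀ i, (MvPowerSeries.constantCoeff (σ := σ) (R := R)) (g i) = 0)
    (F : MvPowerSeries σ R) : evalHom g hg F = evalFun g F := rfl

lemma evalHom_X (hg : ∀ i, (MvPowerSeries.constantCoeff (σ := σ) (R := R)) (g i) = 0) (i : σ) :
    evalHom g hg (MvPowerSeries.X i) = g i := by
  apply MvPowerSeries.ext
  intro e
  rw [evalHom_apply, coeff_evalFun]
  by_cases he : e.degree = 0
  · have he0 : e = 0 := by rwa [degree_eq_zero_iff] at he
    subst he0
    rw [show (0 : σ →₀ ℕ).degree = 0 from map_zero _, PTrunc_zero_eq, MvPowerSeries.constantCoeff_X, map_zero, map_zero, map_zero,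
      MvPowerSeries.coeff_zero_eq_constantCoeff_apply, hg i]
  · have hX : PTrunc e.degree (MvPowerSeries.X i : MvPowerSeries σ R) = MvPolynomial.X i := by
      ext d
      rw [coeff_PTrunc, MvPowerSeries.coeff_X, MvPolynomial.coeff_X']
      by_cases hd : d = Finsupp.single i 1
      · subst hd
        have hdeg : (Finsupp.single i 1).degree ≤ e.degree := by
          have : (Finsupp.single i 1).degree = 1 := by
            simp [Finsupp.degree_apply, Finsupp.support_single_ne_zero]
          omega
        rw [if_pos (le_bnd hdeg)]
      · simp [hd, Ne.symm hd]
    rw [hX, MvPolynomial.aeval_X]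

lemma constantCoeff_evalFun (F : MvPowerSeries σ R) :
    (MvPowerSeries.constantCoeff (σ := σ) (R := R)) (evalFun g F) = (MvPowerSeries.constantCoeff (σ := σ) (R := R)) F := by
  rw [← MvPowerSeries.coeff_zero_eq_constantCoeff_apply, coeff_evalFun]
  rw [show (0 : σ →₀ ℕ).degree = 0 from map_zero _, PTrunc_zero_eq, MvPolynomial.aeval_C]
  rw [show (algebraMap R (MvPowerSeries σ R)) ((MvPowerSeries.constantCoeff (σ := σ) (R := R)) F) = (MvPowerSeries.C (σ := σ) (R := R)) ((MvPowerSeries.constantCoeff (σ := σ) (R := R)) F) from rfl]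
  rw [MvPowerSeries.coeff_zero_eq_constantCoeff_apply, MvPowerSeries.constantCoeff_C]


lemma degree_single {σ : Type*} (i : σ) (m : ℕ) : (Finsupp.single i m).degree = m := by
  by_cases h : m = 0
  · subst h; simp
  · simp [Finsupp.degree_apply, Finsupp.support_single_ne_zero _ h]

section SpanPow

variable {R : Type*} [CommRing R] {n : ℕ}

lemma mem_span_pow_of_low_coeff_zero (N : ℕ) :
    ∀ F : MvPowerSeries (Fin n) R,
      (∀ d : Fin n →₀ ℕ, d.degree < N → MvPowerSeries.coeff (R := R) d F = 0) →
      F ∈ (Ideal.span (Set.range (MvPowerSeries.X : Fin n → MvPowerSeries (Fin n) R))) ^ N := by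
  classical
  induction N with
  | zero => intro F _; rw [pow_zero, Ideal.one_eq_top]; exact Submodule.mem_top
  | succ N ih =>
    intro F hF
    have hsupp : ∀ (e : Fin n →₀ ℕ) (i : Fin n), (e + Finsupp.single i 1).support.Nonempty := by
      intro e i
      refine ⟨i, ?_⟩
      rw [Finsupp.mem_support_iff, Finsupp.add_apply, Finsupp.single_eq_same]
      omega
    set G : Fin n → MvPowerSeries (Fin n) R := fun i e =>
      if (e + Finsupp.single i 1).support.min' (hsupp e i) = i
      then MvPowerSeries.coeff (R := R) (e + Finsupp.single i 1) F else 0 with hG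
    have hGcoeff : ∀ i e, MvPowerSeries.coeff (R := R) e (G i) =
        if (e + Finsupp.single i 1).support.min' (hsupp e i) = i
        then MvPowerSeries.coeff (R := R) (e + Finsupp.single i 1) F else 0 := fun i e => rfl
    have hback : ∀ (e : Fin n →₀ ℕ) (i : Fin n), Finsupp.single i 1 ≤ e →
        e - Finsupp.single i 1 + Finsupp.single i 1 = e := by
      intro e i hle
      have h1 : 1 ≤ e i := by
        have := hle i; simpa using this
      ext t
      simp only [Finsupp.add_apply, Finsupp.tsub_apply, Finsupp.single_apply]
      by_cases ht : i = t
      · subst ht; simp; omega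
      · simp [ht]
    have hdecomp : F = ∑ i : Fin n, MvPowerSeries.X i * G i := by
      apply MvPowerSeries.ext
      intro e
      rw [map_sum]
      by_cases he : e = 0
      · subst he
        rw [hF 0 (by simp)]
        symm; apply Finset.sum_eq_zero
        intro i _
        rw [show (MvPowerSeries.X i : MvPowerSeries (Fin n) R)
            = MvPowerSeries.monomial (R := R) (Finsupp.single i 1) 1 from rfl,
          MvPowerSeries.coeff_monomial_mul]
        rw [if_neg]
        intro hle
        have := hle i
        simp at this
      · have hne : e.support.Nonempty := Finsupp.support_nonempty_iff.mpr he
        set i0 := e.support.min' hne with hi0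
        have hi0mem : i0 ∈ e.support := Finset.min'_mem _ _
        have hei0 : e i0 ≠ 0 := Finsupp.mem_support_iff.mp hi0mem
        have hle0 : Finsupp.single i0 1 ≤ e := by
          rw [Finsupp.single_le_iff]; omega
        rw [Finset.sum_eq_single i0]
        · rw [show (MvPowerSeries.X i0 : MvPowerSeries (Fin n) R)
              = MvPowerSeries.monomial (R := R) (Finsupp.single i0 1) 1 from rfl,
            MvPowerSeries.coeff_monomial_mul, if_pos hle0, one_mul, hGcoeff]
          simp only [hback e i0 hle0]
          simp; intro h; exact absurd hi0.symm h
        · intro i _ hne'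
          rw [show (MvPowerSeries.X i : MvPowerSeries (Fin n) R)
              = MvPowerSeries.monomial (R := R) (Finsupp.single i 1) 1 from rfl,
            MvPowerSeries.coeff_monomial_mul]
          by_cases hle : Finsupp.single i 1 ≤ e
          · rw [if_pos hle, hGcoeff]
            simp only [hback e i hle]
            rw [if_neg (fun hcontra => hne' (by rw [← hcontra, hi0])), mul_zero]
          · rw [if_neg hle]
        · intro h; exact absurd (Finset.mem_univ i0) h
    have hGlow : ∀ i, ∀ d : Fin n →₀ ℕ, d.degree < N → MvPowerSeries.coeff (R := R) d (G i) = 0 := by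
      intro i d hd
      rw [hGcoeff]
      split
      · apply hF
        rw [degree_add', degree_single]
        omega
      · rfl
    rw [hdecomp, pow_succ']
    apply Submodule.sum_mem
    intro i _
    exact Submodule.mul_mem_mul (Ideal.subset_span ⟨i, rfl⟩) (ih (G i) (hGlow i))

end SpanPow

section Rigid

variable {k : Type*} [Field k] {n : ℕ}

lemma rigid (Φ Ψ : MvPowerSeries (Fin n) k →ₐ[k] PowerSeries k)
    (hΦX : ∀ i, Φ (MvPowerSeries.X i) = Ψ (MvPowerSeries.X i))
    (hΦ0 : ∀ i, PowerSeries.constantCoeff (R := k) (Φ (MvPowerSeries.X i)) = 0)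
    (hΨ0 : ∀ i, PowerSeries.constantCoeff (R := k) (Ψ (MvPowerSeries.X i)) = 0)
    (F : MvPowerSeries (Fin n) k) : Φ F = Ψ F := by
  classical
  have hpoly : ∀ P : MvPolynomial (Fin n) k,
      Φ (P : MvPowerSeries (Fin n) k) = Ψ (P : MvPowerSeries (Fin n) k) := by
    intro P
    induction P using MvPolynomial.induction_on with
    | C a =>
      rw [MvPolynomial.coe_C,
        show ((MvPowerSeries.C (σ := Fin n) (R := k))) a = algebraMap k (MvPowerSeries (Fin n) k) a from rfl,
        AlgHom.commutes, AlgHom.commutes]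
    | add p q hp hq => rw [MvPolynomial.coe_add, map_add, map_add, hp, hq]
    | mul_X p i hp => rw [MvPolynomial.coe_mul, MvPolynomial.coe_X, map_mul, map_mul, hp, hΦX i]
  apply PowerSeries.ext
  intro m
  have h1 : F - (PTrunc m F : MvPowerSeries (Fin n) k)
      ∈ (Ideal.span (Set.range (MvPowerSeries.X : Fin n → MvPowerSeries (Fin n) k))) ^ (m + 1) := by
    apply mem_span_pow_of_low_coeff_zero
    intro d hd
    rw [map_sub, MvPolynomial.coeff_coe, coeff_PTrunc_of_le (by omega), sub_self]
  have key : ∀ Θ : MvPowerSeries (Fin n) k →ₐ[k] PowerSeries k,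
      (∀ i, PowerSeries.constantCoeff (R := k) (Θ (MvPowerSeries.X i)) = 0) →
      PowerSeries.coeff (R := k) m (Θ (F - (PTrunc m F : MvPowerSeries (Fin n) k))) = 0 := by
    intro Θ hΘ
    have hmem : Θ (F - (PTrunc m F : MvPowerSeries (Fin n) k)) ∈ (mIdeal Unit k) ^ (m + 1) := by
      have h2 : Θ (F - (PTrunc m F : MvPowerSeries (Fin n) k))
          ∈ (Ideal.map Θ.toRingHom
            (Ideal.span (Set.range (MvPowerSeries.X : Fin n → MvPowerSeries (Fin n) k)))) ^ (m + 1) := by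
        rw [← Ideal.map_pow]
        exact Ideal.mem_map_of_mem _ h1
      refine SetLike.le_def.mp (Ideal.pow_right_mono ?_ (m + 1)) h2
      rw [Ideal.map_le_iff_le_comap, Ideal.span_le]
      rintro x ⟨i, rfl⟩
      exact mem_mIdeal.mpr (hΘ i)
    exact coeff_eq_zero_of_mem_pow (m + 1) _ hmem (Finsupp.single () m)
      (by rw [degree_single]; omega)
  have hsplit : ∀ Θ : MvPowerSeries (Fin n) k →ₐ[k] PowerSeries k,
      Θ F = Θ ((PTrunc m F : MvPowerSeries (Fin n) k))
        + Θ (F - (PTrunc m F : MvPowerSeries (Fin n) k)) := by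
    intro Θ
    rw [← map_add, add_sub_cancel]
  rw [hsplit Φ, hsplit Ψ, map_add, map_add, key Φ hΦ0, key Ψ hΨ0, hpoly]

end Rigid


section Unipotent

variable {σ R : Type*} [CommRing R] [Fintype σ] [DecidableEq σ]

lemma pow_sub_pow_mem (a x : MvPowerSeries σ R) (ha : a - x ∈ (mIdeal σ R) ^ 2)
    (hx : x ∈ mIdeal σ R) (m : ℕ) : a ^ m - x ^ m ∈ (mIdeal σ R) ^ (m + 1) := by
  have haK : a ∈ mIdeal σ R := by
    have : a = (a - x) + x := by ring
    rw [this]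
    exact add_mem (Ideal.pow_le_self two_ne_zero ha) hx
  induction m with
  | zero => simp
  | succ m ih =>
    have heq : a ^ (m + 1) - x ^ (m + 1) = a * (a ^ m - x ^ m) + (a - x) * x ^ m := by ring
    rw [heq]
    apply add_mem
    · have := Submodule.mul_mem_mul haK ih
      rwa [← pow_succ'] at this
    · have := Submodule.mul_mem_mul ha (Ideal.pow_mem_pow hx m)
      rwa [← pow_add, show 2 + m = m + 1 + 1 by omega] at this

lemma prodX_mem (d : σ →₀ ℕ) (t : Finset σ) :
    (∏ j ∈ t, (MvPowerSeries.X j : MvPowerSeries σ R) ^ d j) ∈ (mIdeal σ R) ^ (∑ j ∈ t, d j) := by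
  induction t using Finset.cons_induction with
  | empty => simp
  | cons i' t' hi' ih' =>
    rw [Finset.prod_cons, Finset.sum_cons, pow_add]
    exact Submodule.mul_mem_mul (Ideal.pow_mem_pow
      (mem_mIdeal.mpr (MvPowerSeries.constantCoeff_X i')) _) ih'

variable (g : σ → MvPowerSeries σ R)

lemma prod_sub_prod_mem (hH : ∀ i, g i - MvPowerSeries.X i ∈ (mIdeal σ R) ^ 2) (d : σ →₀ ℕ) :
    (d.prod fun i m => g i ^ m) - (d.prod fun i m => (MvPowerSeries.X i : MvPowerSeries σ R) ^ m)
      ∈ (mIdeal σ R) ^ (d.degree + 1) := by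
  have hXK : ∀ i : σ, (MvPowerSeries.X i : MvPowerSeries σ R) ∈ mIdeal σ R :=
    fun i => mem_mIdeal.mpr (MvPowerSeries.constantCoeff_X i)
  have hgK : ∀ i : σ, g i ∈ mIdeal σ R := by
    intro i
    have : g i = (g i - MvPowerSeries.X i) + MvPowerSeries.X i := by ring
    rw [this]
    exact add_mem (Ideal.pow_le_self two_ne_zero (hH i)) (hXK i)
  simp only [Finsupp.prod, Finsupp.degree_apply]
  generalize d.support = t
  induction t using Finset.cons_induction with
  | empty => simp
  | cons i t hi ih =>
    rw [Finset.prod_cons, Finset.prod_cons, Finset.sum_cons]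
    have heq : g i ^ d i * (∏ j ∈ t, g j ^ d j)
          - MvPowerSeries.X i ^ d i * (∏ j ∈ t, (MvPowerSeries.X j : MvPowerSeries σ R) ^ d j)
        = g i ^ d i * ((∏ j ∈ t, g j ^ d j) - ∏ j ∈ t, (MvPowerSeries.X j : MvPowerSeries σ R) ^ d j)
          + (g i ^ d i - MvPowerSeries.X i ^ d i) *
            ∏ j ∈ t, (MvPowerSeries.X j : MvPowerSeries σ R) ^ d j := by ring
    rw [heq]
    apply add_mem
    · have h1 := Submodule.mul_mem_mul (Ideal.pow_mem_pow (hgK i) (d i)) ih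
      rwa [← pow_add, ← Nat.add_assoc] at h1
    · have hx := prodX_mem (R := R) d t
      have h2 := Submodule.mul_mem_mul (pow_sub_pow_mem (g i) (MvPowerSeries.X i) (hH i) (hXK i) (d i)) hx
      rwa [← pow_add, show d i + 1 + ∑ j ∈ t, d j = d i + ∑ j ∈ t, d j + 1 by omega] at h2

lemma prodX_eq_monomial (d : σ →₀ ℕ) :
    (d.prod fun i m => (MvPowerSeries.X i : MvPowerSeries σ R) ^ m)
      = MvPowerSeries.monomial (R := R) d 1 := by
  have h := MvPolynomial.monic_monomial_eq (R := R) (σ := σ) d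
  rw [Finsupp.prod]
  calc ∏ i ∈ d.support, (MvPowerSeries.X i : MvPowerSeries σ R) ^ d i
      = MvPolynomial.coeToMvPowerSeries.ringHom
          (∏ i ∈ d.support, (MvPolynomial.X i : MvPolynomial σ R) ^ d i) := by
        rw [map_prod]
        apply Finset.prod_congr rfl
        intro i _
        rw [map_pow, MvPolynomial.coeToMvPowerSeries.ringHom_apply, MvPolynomial.coe_X]
    _ = MvPowerSeries.monomial (R := R) d 1 := by
        rw [show (∏ i ∈ d.support, (MvPolynomial.X i : MvPolynomial σ R) ^ d i)
            = d.prod fun n e => (MvPolynomial.X n : MvPolynomial σ R) ^ e from rfl, ← h,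
          MvPolynomial.coeToMvPowerSeries.ringHom_apply, MvPolynomial.coe_monomial]

variable {g} in
lemma coeff_evalFun_eq_coeff (hg0 : ∀ i, (MvPowerSeries.constantCoeff (σ := σ) (R := R)) (g i) = 0)
    (hH : ∀ i, g i - MvPowerSeries.X i ∈ (mIdeal σ R) ^ 2)
    (F : MvPowerSeries σ R) (e : σ →₀ ℕ)
    (hlow : ∀ d : σ →₀ ℕ, d.degree < e.degree → MvPowerSeries.coeff (R := R) d F = 0) :
    MvPowerSeries.coeff (R := R) e (evalFun g F) = MvPowerSeries.coeff (R := R) e F := by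
  have hprodcoeff : ∀ d : σ →₀ ℕ, e.degree ≤ d.degree →
      MvPowerSeries.coeff (R := R) e (d.prod fun i m => g i ^ m) = if e = d then 1 else 0 := by
    intro d hd
    have hsub := prod_sub_prod_mem g hH d
    have hz : MvPowerSeries.coeff (R := R) e
        ((d.prod fun i m => g i ^ m)
          - d.prod fun i m => (MvPowerSeries.X i : MvPowerSeries σ R) ^ m) = 0 :=
      coeff_eq_zero_of_mem_pow _ _ hsub e (by omega)
    rw [map_sub, sub_eq_zero] at hz
    rw [hz, prodX_eq_monomial, MvPowerSeries.coeff_monomial]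
  rw [coeff_evalFun]
  conv_lhs => rw [(PTrunc e.degree F).as_sum]
  rw [map_sum, map_sum]
  rw [Finset.sum_eq_single e]
  · rw [MvPolynomial.aeval_monomial, ← Algebra.smul_def, map_smul,
      hprodcoeff e le_rfl, if_pos rfl, smul_eq_mul, mul_one, coeff_PTrunc_of_le le_rfl]
  · intro d hdmem hdne
    have hdF : (PTrunc e.degree F).coeff d = MvPowerSeries.coeff (R := R) d F := by
      rw [coeff_PTrunc]
      rw [MvPolynomial.mem_support_iff, coeff_PTrunc] at hdmem
      split at hdmem
      · rw [if_pos (by assumption)]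
      · exact absurd rfl hdmem
    rw [MvPolynomial.aeval_monomial, ← Algebra.smul_def, map_smul, smul_eq_mul]
    by_cases hlt : d.degree < e.degree
    · rw [hdF, hlow d hlt, zero_mul]
    · rw [hprodcoeff d (by omega), if_neg (fun h => hdne h.symm), mul_zero]
  · intro hnotmem
    rw [MvPolynomial.notMem_support_iff.mp hnotmem]
    simp

end Unipotent

section Bijective

variable {σ R : Type*} [CommRing R] [Fintype σ] [DecidableEq σ]
variable {g : σ → MvPowerSeries σ R}

lemma evalHom_injective (hg0 : ∀ i, (MvPowerSeries.constantCoeff (σ := σ) (R := R)) (g i) = 0)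
    (hH : ∀ i, g i - MvPowerSeries.X i ∈ (mIdeal σ R) ^ 2) :
    Function.Injective (evalHom g hg0) := by
  intro F G hFG
  have hz : evalFun g (F - G) = 0 := by
    rw [← evalHom_apply g hg0, map_sub, hFG, sub_self]
  have hcoeff : ∀ s : ℕ, ∀ e : σ →₀ ℕ, e.degree ≤ s → MvPowerSeries.coeff (R := R) e (F - G) = 0 := by
    intro s
    induction s using Nat.strong_induction_on with
    | _ s ih =>
      intro e he
      have hlow : ∀ d : σ →₀ ℕ, d.degree < e.degree → MvPowerSeries.coeff (R := R) d (F - G) = 0 := by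
        intro d hd
        rcases Nat.eq_zero_or_pos s with hs | hs
        · omega
        · exact ih (s - 1) (by omega) d (by omega)
      have h1 := coeff_evalFun_eq_coeff hg0 hH (F - G) e hlow
      rw [hz, map_zero] at h1
      exact h1.symm
  have : F - G = 0 := by
    apply MvPowerSeries.ext
    intro e
    rw [map_zero]
    exact hcoeff e.degree e le_rfl
  exact sub_eq_zero.mp this

lemma evalHom_surjective (hg0 : ∀ i, (MvPowerSeries.constantCoeff (σ := σ) (R := R)) (g i) = 0)
    (hH : ∀ i, g i - MvPowerSeries.X i ∈ (mIdeal σ R) ^ 2) :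
    Function.Surjective (evalHom g hg0) := by
  intro G
  -- T u := evalFun g u - u
  set T : MvPowerSeries σ R → MvPowerSeries σ R := fun u => evalFun g u - u with hT
  have hTsub : ∀ u v, T u - T v = T (u - v) := by
    intro u v
    simp only [hT]
    rw [show evalFun g u = evalHom g hg0 u from rfl, show evalFun g v = evalHom g hg0 v from rfl,
      show evalFun g (u - v) = evalHom g hg0 (u - v) from rfl, map_sub]
    ring
  have hTlow : ∀ u : MvPowerSeries σ R, ∀ e : σ →₀ ℕ,
      (∀ d : Fin 0 →₀ ℕ, True) → (∀ d : σ →₀ ℕ, d.degree < e.degree → MvPowerSeries.coeff (R := R) d u = 0) →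
      MvPowerSeries.coeff (R := R) e (T u) = 0 := by
    intro u e _ hlow
    simp only [hT]
    rw [map_sub, coeff_evalFun_eq_coeff hg0 hH u e hlow, sub_self]
  -- iterative approximations
  set seq : ℕ → MvPowerSeries σ R := fun m => Nat.rec G (fun _ prev => G - T prev) m with hseq
  have hseq0 : seq 0 = G := rfl
  have hseqS : ∀ m, seq (m + 1) = G - T (seq m) := fun m => rfl
  have hdiff : ∀ m, ∀ e : σ →₀ ℕ, e.degree ≤ m →
      MvPowerSeries.coeff (R := R) e (seq (m + 1) - seq m) = 0 := by
    intro m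
    induction m with
    | zero =>
      intro e he
      rw [hseqS 0, hseq0, show G - T G - G = -(T G) by ring, map_neg,
        hTlow G e (fun _ => trivial) (fun d hd => by omega), neg_zero]
    | succ m ih =>
      intro e he
      have heq : seq (m + 2) - seq (m + 1) = -(T (seq (m + 1) - seq m)) := by
        rw [← hTsub]
        show (G - T (seq (m + 1))) - (G - T (seq m)) = -(T (seq (m + 1)) - T (seq m))
        ring
      rw [heq, map_neg, hTlow _ e (fun _ => trivial)
        (fun d hd => ih d (by omega)), neg_zero]
  have hstab : ∀ (e : σ →₀ ℕ) (m : ℕ), e.degree ≤ m →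
      MvPowerSeries.coeff (R := R) e (seq m) = MvPowerSeries.coeff (R := R) e (seq e.degree) := by
    intro e m hm
    obtain ⟨p, rfl⟩ := Nat.exists_eq_add_of_le hm
    clear hm
    induction p with
    | zero => rfl
    | succ p ih =>
      have h1 := hdiff (e.degree + p) e (by omega)
      rw [map_sub, sub_eq_zero] at h1
      rw [show e.degree + (p + 1) = e.degree + p + 1 by omega, h1, ih]
  set Flim : MvPowerSeries σ R := fun e => MvPowerSeries.coeff (R := R) e (seq e.degree) with hFlim
  have hFlimcoeff : ∀ e : σ →₀ ℕ, MvPowerSeries.coeff (R := R) e Flim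
      = MvPowerSeries.coeff (R := R) e (seq e.degree) := fun e => rfl
  refine ⟨Flim, ?_⟩
  apply MvPowerSeries.ext
  intro e
  have hTFlim : MvPowerSeries.coeff (R := R) e (T Flim) = MvPowerSeries.coeff (R := R) e (T (seq e.degree)) := by
    have hz : MvPowerSeries.coeff (R := R) e (T Flim - T (seq e.degree)) = 0 := by
      rw [hTsub]
      apply hTlow _ e (fun _ => trivial)
      intro d hd
      rw [map_sub, hFlimcoeff d, hstab d e.degree (by omega), sub_self]
    rw [map_sub, sub_eq_zero] at hz
    exact hz
  have h2 : MvPowerSeries.coeff (R := R) e Flim = MvPowerSeries.coeff (R := R) e (seq (e.degree + 1)) := by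
    have h1 := hdiff e.degree e le_rfl
    rw [map_sub, sub_eq_zero] at h1
    rw [hFlimcoeff, h1]
  have h3 : MvPowerSeries.coeff (R := R) e (evalHom g hg0 Flim)
      = MvPowerSeries.coeff (R := R) e Flim + MvPowerSeries.coeff (R := R) e (T Flim) := by
    rw [show (evalHom g hg0) Flim = evalFun g Flim from rfl]
    simp only [hT]
    rw [← map_add]
    congr 1
    ring
  rw [h3, hTFlim, h2, hseqS e.degree]
  rw [show G - T (seq e.degree) = G - T (seq e.degree) from rfl, map_sub]
  ring

/-- The substitution automorphism attached to `g i = X i + (order ≥ 2)`. -/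
noncomputable def evalEquiv (hg0 : ∀ i, (MvPowerSeries.constantCoeff (σ := σ) (R := R)) (g i) = 0)
    (hH : ∀ i, g i - MvPowerSeries.X i ∈ (mIdeal σ R) ^ 2) :
    MvPowerSeries σ R ≃ₐ[R] MvPowerSeries σ R :=
  AlgEquiv.ofBijective (evalHom g hg0) ⟨evalHom_injective hg0 hH, evalHom_surjective hg0 hH⟩

lemma evalEquiv_apply (hg0 : ∀ i, (MvPowerSeries.constantCoeff (σ := σ) (R := R)) (g i) = 0)
    (hH : ∀ i, g i - MvPowerSeries.X i ∈ (mIdeal σ R) ^ 2) (F : MvPowerSeries σ R) :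
    evalEquiv hg0 hH F = evalHom g hg0 F := rfl

end Bijective
end Stmt9


/-- A parameterization of a reduced curve singularity with `r` branches:
a `k`-algebra map `k[[x₁,...,xₙ]] → k[[t₁]] ⊕ ... ⊕ k[[tᵣ]]` whose components are
local (map the maximal ideal into the maximal ideal), nonzero, and have pairwise
distinct images. -/
def IsParameterization {k : Type*} [Field k] {n r : ℕ}
    (φ : MvPowerSeries (Fin n) k →ₐ[k] (Fin r → PowerSeries k)) : Prop :=
  (∀ F, (MvPowerSeries.constantCoeff : MvPowerSeries (Fin n) k →+* k) F = 0 →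
      ∀ j, constantCoeff (φ F j) = 0) ∧
  (∀ j, ∃ i, φ (MvPowerSeries.X i) j ≠ 0) ∧
  (∀ j j' : Fin r, j ≠ j' →
    ((Pi.evalAlgHom k (fun _ => PowerSeries k) j).comp φ).range ≠
      ((Pi.evalAlgHom k (fun _ => PowerSeries k) j').comp φ).range)

/-- Let `φ, ψ` be parameterizations, and suppose the conductor of `φ`
is `C_φ = f·R̃` with `f = (t₁^{c₁},...,tᵣ^{cᵣ})`, `cⱼ ≥ 1`, and `c = max cⱼ`.
If `φ(xᵢ) ≡ ψ(xᵢ) mod m̃^{2c}` for all `i`, then there is a `k`-algebra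
automorphism `σ` of `k[[x₁,...,xₙ]]` with `φ ∘ σ = ψ`; in particular `φ` and `ψ`
are left-equivalent. -/
theorem left_equivalence_of_congruence_mod_conductor {k : Type*} [Field k] {n r : ℕ}
    (φ ψ : MvPowerSeries (Fin n) k →ₐ[k] (Fin r → PowerSeries k))
    (hφ : IsParameterization φ) (hψ : IsParameterization ψ)
    (c : Fin r → ℕ) (hc : ∀ j, 1 ≤ c j)
    (hcond : ∀ h : Fin r → PowerSeries k,
      (∀ g : Fin r → PowerSeries k, h * g ∈ φ.range) ↔
        ∀ j, (X : PowerSeries k) ^ c j ∣ h j)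
    (hcong : ∀ i j, (X : PowerSeries k) ^ (2 * Finset.univ.sup c) ∣
      (φ (MvPowerSeries.X i) j - ψ (MvPowerSeries.X i) j)) :
    ∃ σ : MvPowerSeries (Fin n) k ≃ₐ[k] MvPowerSeries (Fin n) k,
      ∀ F, φ (σ F) = ψ F := by
  classical
  rcases Nat.eq_zero_or_pos r with hr | hr
  · subst hr
    exact ⟨AlgEquiv.refl, fun F => funext fun j => j.elim0⟩
  have j₀ : Fin r := ⟨0, hr⟩
  set Cm := Finset.univ.sup c with hCm
  have hcj : ∀ j, c j ≤ Cm := fun j => Finset.le_sup (Finset.mem_univ j)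
  have hCm1 : 1 ≤ Cm := le_trans (hc j₀) (hcj j₀)
  -- constant coefficients are preserved by φ
  have CC : ∀ (F : MvPowerSeries (Fin n) k) (j : Fin r),
      constantCoeff (R := k) (φ F j) = (MvPowerSeries.constantCoeff (σ := Fin n) (R := k)) F := by
    intro F j
    set a := (MvPowerSeries.constantCoeff (σ := Fin n) (R := k)) F with ha
    have hF0 : (MvPowerSeries.constantCoeff (σ := Fin n) (R := k))
        (F - algebraMap k (MvPowerSeries (Fin n) k) a) = 0 := by
      rw [map_sub, ← MvPowerSeries.c_eq_algebraMap, MvPowerSeries.constantCoeff_C, sub_self]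
    have h1 := hφ.1 _ hF0 j
    rw [map_sub, AlgHom.commutes] at h1
    have h2 : (φ F - algebraMap k (Fin r → PowerSeries k) a) j
        = φ F j - algebraMap k (PowerSeries k) a := rfl
    rw [h2, map_sub] at h1
    have h3 : constantCoeff (R := k) (algebraMap k (PowerSeries k) a) = a := by
      rw [← PowerSeries.C_eq_algebraMap, PowerSeries.constantCoeff_C]
    rw [h3] at h1
    exact sub_eq_zero.mp h1
  -- choose the cofactors witnessing the congruence
  choose u hu using hcong
  set a : Fin r → PowerSeries k := fun j => (X : PowerSeries k) ^ c j with haa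
  set b : Fin n → Fin r → PowerSeries k :=
    fun i j => (X : PowerSeries k) ^ (2 * Cm - c j) * (-(u i j)) with hbb
  have ain : a ∈ φ.range := by
    have h := (hcond a).mpr (fun j => dvd_rfl) 1
    rwa [mul_one] at h
  have bin : ∀ i, b i ∈ φ.range := by
    intro i
    have h := (hcond (b i)).mpr (fun j => by
      have hj := hcj j
      have hj1 := hc j
      exact dvd_mul_of_dvd_left (pow_dvd_pow _ (by omega)) _) 1
    rwa [mul_one] at h
  obtain ⟨A, hA₀⟩ := ain
  choose B hB₀ using bin
  have hA : φ A = a := hA₀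
  have hB : ∀ i, φ (B i) = b i := fun i => hB₀ i
  have hA0 : (MvPowerSeries.constantCoeff (σ := Fin n) (R := k)) A = 0 := by
    have h := CC A j₀
    rw [hA] at h
    rw [← h]
    show constantCoeff (R := k) ((X : PowerSeries k) ^ c j₀) = 0
    rw [map_pow, PowerSeries.constantCoeff_X, zero_pow (by have := hc j₀; omega)]
  have hB0 : ∀ i, (MvPowerSeries.constantCoeff (σ := Fin n) (R := k)) (B i) = 0 := by
    intro i
    have h := CC (B i) j₀
    rw [hB i] at h
    rw [← h]
    show constantCoeff (R := k) ((X : PowerSeries k) ^ (2 * Cm - c j₀) * (-(u i j₀))) = 0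
    rw [map_mul, map_pow, PowerSeries.constantCoeff_X,
      zero_pow (by have := hcj j₀; have := hc j₀; omega), zero_mul]
  set g : Fin n → MvPowerSeries (Fin n) k :=
    fun i => MvPowerSeries.X i + A * B i with hgg
  have hg0 : ∀ i, (MvPowerSeries.constantCoeff (σ := Fin n) (R := k)) (g i) = 0 := by
    intro i
    show (MvPowerSeries.constantCoeff (σ := Fin n) (R := k)) (MvPowerSeries.X i + A * B i) = 0
    rw [map_add, map_mul, MvPowerSeries.constantCoeff_X, hA0, zero_mul, zero_add]
  have hH : ∀ i, g i - MvPowerSeries.X i ∈ (Stmt9.mIdeal (Fin n) k) ^ 2 := by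
    intro i
    show MvPowerSeries.X i + A * B i - MvPowerSeries.X i ∈ _
    rw [add_sub_cancel_left, pow_two]
    exact Submodule.mul_mem_mul (Stmt9.mem_mIdeal.mpr hA0) (Stmt9.mem_mIdeal.mpr (hB0 i))
  refine ⟨Stmt9.evalEquiv hg0 hH, ?_⟩
  intro F
  funext j
  have key := Stmt9.rigid
    ((Pi.evalAlgHom k (fun _ => PowerSeries k) j).comp
      (φ.comp (Stmt9.evalEquiv hg0 hH).toAlgHom))
    ((Pi.evalAlgHom k (fun _ => PowerSeries k) j).comp ψ)
    ?_ ?_ ?_ F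
  · exact key
  · -- agreement on the X i
    intro i
    show φ ((Stmt9.evalEquiv hg0 hH) (MvPowerSeries.X i)) j = ψ (MvPowerSeries.X i) j
    rw [Stmt9.evalEquiv_apply, Stmt9.evalHom_X]
    show φ (MvPowerSeries.X i + A * B i) j = ψ (MvPowerSeries.X i) j
    rw [map_add, map_mul, hA, hB]
    show φ (MvPowerSeries.X i) j + a j * b i j = ψ (MvPowerSeries.X i) j
    show φ (MvPowerSeries.X i) j
        + (X : PowerSeries k) ^ c j * ((X : PowerSeries k) ^ (2 * Cm - c j) * (-(u i j)))
      = ψ (MvPowerSeries.X i) j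
    have hpow : (X : PowerSeries k) ^ c j * (X : PowerSeries k) ^ (2 * Cm - c j)
        = (X : PowerSeries k) ^ (2 * Cm) := by
      rw [← pow_add]
      congr 1
      have := hcj j
      omega
    linear_combination hu i j - u i j * hpow
  · -- constant coefficient of Φ (X i)
    intro i
    show constantCoeff (R := k) (φ ((Stmt9.evalEquiv hg0 hH) (MvPowerSeries.X i)) j) = 0
    rw [Stmt9.evalEquiv_apply, Stmt9.evalHom_X, CC]
    exact hg0 i
  · -- constant coefficient of Ψ (X i)
    intro i
    exact hψ.1 (MvPowerSeries.X i) (MvPowerSeries.constantCoeff_X i) j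
end

section
/- Let k be a field, P = k[[x]], I₁, I₂ ⊆ P ideals with P/I₁ and P/I₂ reduced curve singularities parameterized into k[[t₁]] and k[[t₂]] respectively, with delta invariants δ₁, δ₂. If dim_k P/(I₁+I₂) < ∞, then the delta invariant of P/(I₁ ∩ I₂) (embedded diagonally into k[[t₁]] ⊕ k[[t₂]]) equals δ₁ + δ₂ + dim_k P/(I₁+I₂). -/
open PowerSeries

set_option maxHeartbeats 1000000 in
/-- Let `P = k[[x]]`, and `I₁ = Ker φ₁`, `I₂ = Ker φ₂` for
parameterizations `φ₁ : P → k[[t₁]]`, `φ₂ : P → k[[t₂]]` of reduced curve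
singularities with delta invariants `δ₁, δ₂`. If `dim_k P/(I₁+I₂) < ∞`, then the
delta invariant of `P/(I₁ ∩ I₂)`, embedded via `(φ₁,φ₂)` into `k[[t₁]] ⊕ k[[t₂]]`,
equals `δ₁ + δ₂ + dim_k P/(I₁+I₂)`. -/
theorem delta_of_two_branches {k : Type*} [Field k] {n : ℕ}
    (φ₁ φ₂ : MvPowerSeries (Fin n) k →ₐ[k] PowerSeries k)
    (hloc₁ : ∀ F, (MvPowerSeries.constantCoeff : MvPowerSeries (Fin n) k →+* k) F = 0 →
      constantCoeff (φ₁ F) = 0)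
    (hloc₂ : ∀ F, (MvPowerSeries.constantCoeff : MvPowerSeries (Fin n) k →+* k) F = 0 →
      constantCoeff (φ₂ F) = 0)
    (hne₁ : ∃ i, φ₁ (MvPowerSeries.X i) ≠ 0)
    (hne₂ : ∃ i, φ₂ (MvPowerSeries.X i) ≠ 0)
    (hδ₁ : FiniteDimensional k (PowerSeries k ⧸ Subalgebra.toSubmodule φ₁.range))
    (hδ₂ : FiniteDimensional k (PowerSeries k ⧸ Subalgebra.toSubmodule φ₂.range))
    (I₁ I₂ : Ideal (MvPowerSeries (Fin n) k))
    (hI₁ : I₁ = RingHom.ker φ₁.toRingHom) (hI₂ : I₂ = RingHom.ker φ₂.toRingHom)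
    (hfin : FiniteDimensional k (MvPowerSeries (Fin n) k ⧸ (I₁ + I₂))) :
    Module.finrank k ((PowerSeries k × PowerSeries k) ⧸
        Subalgebra.toSubmodule (φ₁.prod φ₂).range) =
      Module.finrank k (PowerSeries k ⧸ Subalgebra.toSubmodule φ₁.range) +
      Module.finrank k (PowerSeries k ⧸ Subalgebra.toSubmodule φ₂.range) +
      Module.finrank k (MvPowerSeries (Fin n) k ⧸ (I₁ + I₂)) := by
  set R : Submodule k (PowerSeries k × PowerSeries k) := Subalgebra.toSubmodule (φ₁.prod φ₂).range with hR
  set S : Submodule k (PowerSeries k × PowerSeries k) :=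
    (Subalgebra.toSubmodule φ₁.range).prod (Subalgebra.toSubmodule φ₂.range) with hS
  have hRS : R ≤ S := by
    rintro x ⟨a, rfl⟩
    exact ⟨⟨a, rfl⟩, ⟨a, rfl⟩⟩
  set S' : Submodule k ((PowerSeries k × PowerSeries k) ⧸ R) := S.map R.mkQ with hS'
  -- equiv 1
  have e₁ : (((PowerSeries k × PowerSeries k) ⧸ R) ⧸ S') ≃ₗ[k] ((PowerSeries k × PowerSeries k) ⧸ S) :=
    Submodule.quotientQuotientEquivQuotient R S hRS
  -- equiv 2
  have hker : LinearMap.ker ((Subalgebra.toSubmodule φ₁.range).mkQ.prodMap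
      (Subalgebra.toSubmodule φ₂.range).mkQ) = S := by
    rw [LinearMap.ker_prodMap, Submodule.ker_mkQ, Submodule.ker_mkQ]
  have hsurj : Function.Surjective ((Subalgebra.toSubmodule φ₁.range).mkQ.prodMap
      (Subalgebra.toSubmodule φ₂.range).mkQ) :=
    (Submodule.mkQ_surjective _).prodMap (Submodule.mkQ_surjective _)
  have e₂ : ((PowerSeries k × PowerSeries k) ⧸ S) ≃ₗ[k]
      (PowerSeries k ⧸ Subalgebra.toSubmodule φ₁.range) × (PowerSeries k ⧸ Subalgebra.toSubmodule φ₂.range) :=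
    (Submodule.quotEquivOfEq _ _ hker.symm).trans
      (LinearMap.quotKerEquivOfSurjective _ hsurj)
  -- the linear map g : A → M ⧸ R
  set g : MvPowerSeries (Fin n) k →ₗ[k] ((PowerSeries k × PowerSeries k) ⧸ R) := R.mkQ ∘ₗ (φ₁.toLinearMap.prod 0) with hg
  have hga : ∀ a : MvPowerSeries (Fin n) k, g a = Submodule.Quotient.mk (φ₁ a, 0) := fun a => rfl
  have hmemR : ∀ x : PowerSeries k × PowerSeries k, x ∈ R ↔ ∃ a : MvPowerSeries (Fin n) k, (φ₁ a, φ₂ a) = x := by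
    intro x
    constructor
    · rintro ⟨a, rfl⟩; exact ⟨a, rfl⟩
    · rintro ⟨a, rfl⟩; exact ⟨a, rfl⟩
  have hrange : LinearMap.range g = S' := by
    apply le_antisymm
    · rintro _ ⟨a, rfl⟩
      exact ⟨(φ₁ a, 0), ⟨⟨a, rfl⟩, (φ₂.range).zero_mem⟩, rfl⟩
    · rintro _ ⟨⟨b, c⟩, ⟨⟨a, rfl⟩, ⟨a', rfl⟩⟩, rfl⟩
      refine ⟨a - a', ?_⟩
      rw [hga, Submodule.mkQ_apply, Submodule.Quotient.eq]
      refine (hmemR _).2 ⟨-a', ?_⟩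
      rw [Prod.mk.injEq]
      constructor
      · show φ₁ (-a') = φ₁ (a - a') - φ₁ a
        rw [map_neg, map_sub]; ring
      · show φ₂ (-a') = 0 - φ₂ a'
        rw [map_neg]; ring
  have hkerg : LinearMap.ker g = (I₁ + I₂).restrictScalars k := by
    ext a
    rw [LinearMap.mem_ker, hga, Submodule.Quotient.mk_eq_zero,
      Submodule.restrictScalars_mem]
    constructor
    · intro hx
      obtain ⟨c, hc⟩ := (hmemR _).1 hx
      rw [Prod.mk.injEq] at hc
      obtain ⟨hc1, hc2⟩ := hc
      have h1 : a - c ∈ I₁ := by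
        rw [hI₁]; show φ₁ (a - c) = 0
        rw [map_sub, hc1, sub_self]
      have h2 : c ∈ I₂ := by rw [hI₂]; exact hc2
      simpa using Submodule.add_mem_sup h1 h2
    · intro ha
      rw [Submodule.add_eq_sup, Submodule.mem_sup] at ha
      obtain ⟨u, hu, v, hv, rfl⟩ := ha
      rw [hI₁] at hu; rw [hI₂] at hv
      refine (hmemR _).2 ⟨v, ?_⟩
      have hu' : φ₁ u = 0 := hu
      have hv' : φ₂ v = 0 := hv
      rw [Prod.mk.injEq]
      exact ⟨by rw [map_add, hu', zero_add], hv'⟩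
  have e₃a : (MvPowerSeries (Fin n) k ⧸ (I₁ + I₂).restrictScalars k) ≃ₗ[k] S' :=
    (Submodule.quotEquivOfEq _ _ hkerg.symm).trans
      (g.quotKerEquivRange.trans (LinearEquiv.ofEq _ _ hrange))
  have e₃ : (MvPowerSeries (Fin n) k ⧸ (I₁ + I₂)) ≃ₗ[k] S' :=
    (Submodule.Quotient.restrictScalarsEquiv k (I₁ + I₂)).symm.trans e₃a
  -- finiteness
  have fS' : FiniteDimensional k S' := Module.Finite.equiv e₃
  have fMS : FiniteDimensional k ((PowerSeries k × PowerSeries k) ⧸ S) := Module.Finite.equiv e₂.symm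
  have fQ : FiniteDimensional k (((PowerSeries k × PowerSeries k) ⧸ R) ⧸ S') := Module.Finite.equiv e₁.symm
  have fMR : FiniteDimensional k ((PowerSeries k × PowerSeries k) ⧸ R) := by
    rw [FiniteDimensional, Module.finite_def]
    apply Submodule.fg_of_fg_map_of_fg_inf_ker S'.mkQ
    · rw [Submodule.map_top, Submodule.range_mkQ]
      exact Module.finite_def.1 fQ
    · rw [top_inf_eq, Submodule.ker_mkQ]
      exact (Submodule.fg_iff_finiteDimensional _).2 fS'
  -- finrank computation
  have h1 := Submodule.finrank_quotient_add_finrank S'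
  rw [e₁.finrank_eq, e₂.finrank_eq, e₃.symm.finrank_eq, Module.finrank_prod] at h1
  omega
end

section
/- Let k be a field and R ⊆ S = k[[t₁]] ⊕ ... ⊕ k[[tᵣ]] a local k-subalgebra such that S is a finite R-module and dim_k(S/R) < ∞. Then R ↪ S is birational: it induces a bijection on minimal primes and isomorphisms of the corresponding localizations at minimal primes. -/
/-- `φ : A →+* B` is birational: it induces a bijection between the minimal primes
of `B` and those of `A`, and for every minimal prime `p` of `B` the induced map of
localizations `A_{φ⁻¹(p)} → B_p` is an isomorphism. -/
def RingHom.IsBirationalMap {A B : Type*} [CommRing A] [CommRing B] (φ : A →+* B) : Prop :=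
  Set.BijOn (Ideal.comap φ) (minimalPrimes B) (minimalPrimes A) ∧
  ∀ p (hp : p ∈ minimalPrimes B),
    haveI : p.IsPrime := hp.1.1
    Function.Bijective (Localization.localRingHom (Ideal.comap φ p) p φ rfl)

open PowerSeries

set_option maxHeartbeats 4000000
set_option synthInstance.maxHeartbeats 400000


section Pi

variable {k : Type*} [Field k] {r : ℕ}

local notation "S" => Fin r → PowerSeries k

/-- kernel of evaluation at coordinate `i` -/
noncomputable def Pker (i : Fin r) : Ideal (Fin r → PowerSeries k) :=
  RingHom.ker (Pi.evalRingHom (fun _ => PowerSeries k) i)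

theorem mem_Pker {i : Fin r} {x : S} : x ∈ Pker (k := k) i ↔ x i = 0 := Iff.rfl

instance Pker_isPrime (i : Fin r) : (Pker (k := k) i).IsPrime :=
  RingHom.ker_isPrime _

theorem single_mul (x : S) (i : Fin r) :
    x * Pi.single i 1 = Pi.single i (x i) := by
  funext j
  by_cases h : j = i
  · subst h; simp
  · simp [Pi.single_eq_of_ne h]

theorem exists_single_not_mem (Q : Ideal (Fin r → PowerSeries k)) [hQ : Q.IsPrime] :
    ∃ i : Fin r, (Pi.single i 1 : Fin r → PowerSeries k) ∉ Q := by
  by_contra h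
  push_neg at h
  have h1 : (1 : S) ∈ Q := by
    have : (∑ i : Fin r, (Pi.single i 1 : Fin r → PowerSeries k)) ∈ Q := Ideal.sum_mem _ fun i _ => h i
    have he : (∑ i : Fin r, (Pi.single i 1 : Fin r → PowerSeries k)) = (1 : S) := by
      funext j; simp [Finset.sum_apply, Pi.single_apply]
    rwa [he] at this
  exact hQ.ne_top (Ideal.eq_top_of_isUnit_mem _ h1 isUnit_one)

theorem Pker_le_of_single_not_mem {Q : Ideal (Fin r → PowerSeries k)} [hQ : Q.IsPrime]
    {i : Fin r} (h : (Pi.single i 1 : Fin r → PowerSeries k) ∉ Q) : Pker (k := k) i ≤ Q := by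
  intro x hx
  have h0 : x * Pi.single i 1 = 0 := by
    rw [single_mul, mem_Pker.mp hx]; simp
  rcases hQ.mem_or_mem (show x * Pi.single i 1 ∈ Q by rw [h0]; exact Q.zero_mem) with h' | h'
  · exact h'
  · exact absurd h' h

theorem single_not_mem_Pker (i : Fin r) : (Pi.single i 1 : Fin r → PowerSeries k) ∉ Pker (k := k) i := by
  simp [mem_Pker]

theorem Pker_mem_minimalPrimes (i : Fin r) :
    Pker (k := k) i ∈ minimalPrimes (Fin r → PowerSeries k) := by
  refine ⟨⟨Pker_isPrime i, bot_le⟩, ?_⟩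
  rintro Q ⟨hQp, -⟩ hle
  haveI := hQp
  exact Pker_le_of_single_not_mem (fun h => single_not_mem_Pker i (hle h))

theorem eq_Pker_of_minimal {Q : Ideal (Fin r → PowerSeries k)}
    (hQ : Q ∈ minimalPrimes (Fin r → PowerSeries k)) : ∃ i, Q = Pker (k := k) i := by
  haveI : Q.IsPrime := hQ.1.1
  obtain ⟨i, hi⟩ := exists_single_not_mem Q
  refine ⟨i, le_antisymm (hQ.2 ⟨Pker_isPrime i, bot_le⟩ (Pker_le_of_single_not_mem hi)) ?_⟩
  exact Pker_le_of_single_not_mem hi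

end Pi

theorem exists_conductor {k : Type*} [Field k] {r : ℕ}
    (R : Subalgebra k (Fin r → PowerSeries k)) [IsLocalRing ↥R]
    (hfinmod : Module.Finite ↥R (Fin r → PowerSeries k))
    (hfin : FiniteDimensional k
      ((Fin r → PowerSeries k) ⧸ Subalgebra.toSubmodule R)) :
    ∃ g : Fin r → PowerSeries k, g ∈ R ∧ (∀ j, g j ≠ 0) ∧
      ∀ s : Fin r → PowerSeries k, g * s ∈ R := by
  classical
  set S := Fin r → PowerSeries k
  -- nontriviality
  have hSnt : (0 : S) ≠ 1 := fun h => zero_ne_one (α := ↥R) (Subtype.ext h)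
  have hne : Nonempty (Fin r) := by
    by_contra h
    exact hSnt (funext fun j => absurd ⟨j⟩ h)
  -- the element u with all coordinates X
  set u : S := fun _ => (PowerSeries.X : PowerSeries k) with hu
  set Q := (Fin r → PowerSeries k) ⧸ Subalgebra.toSubmodule R
  set d := Module.finrank k Q with hd
  set v : Fin (d + 1) → Q := fun i => (Subalgebra.toSubmodule R).mkQ (u ^ ((i : ℕ) + 1)) with hv
  have hnli : ¬ LinearIndependent k v := by
    intro h
    have := h.fintype_card_le_finrank
    simp [hd] at this
  obtain ⟨c, hsum, i₀, hc₀⟩ := Fintype.not_linearIndependent_iff.mp hnli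
  set f₀ : S := ∑ i, c i • u ^ ((i : ℕ) + 1) with hf₀
  have hf₀R : f₀ ∈ R := by
    have : (Subalgebra.toSubmodule R).mkQ f₀ = 0 := by
      rw [hf₀, map_sum]
      simpa [hv] using hsum
    simpa [Submodule.Quotient.mk_eq_zero] using this
  set ps : PowerSeries k := ∑ i : Fin (d+1), c i • (PowerSeries.X : PowerSeries k) ^ ((i : ℕ) + 1) with hps
  have hf₀j : ∀ j, f₀ j = ps := by
    intro j
    rw [hf₀, hps, Finset.sum_apply]
    exact Finset.sum_congr rfl fun i _ => rfl
  have hpsne : ps ≠ 0 := by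
    intro h
    have : (PowerSeries.coeff ((i₀ : ℕ) + 1)) ps = c i₀ := by
      rw [hps, map_sum]
      rw [Finset.sum_eq_single i₀]
      · simp [PowerSeries.coeff_X_pow]
      · intro i _ hne
        have : ¬ ((i₀ : ℕ) + 1 = (i : ℕ) + 1) :=
          fun hh => hne (Fin.ext (Nat.succ_injective hh)).symm
        simp [PowerSeries.coeff_X_pow, this]
        intro hh; exact absurd (Fin.ext hh).symm hne
      · intro h; exact absurd (Finset.mem_univ i₀) h
    rw [h] at this; simp at this
    exact hc₀ this.symm
  have hpsnu : ¬ IsUnit ps := by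
    rw [PowerSeries.isUnit_iff_constantCoeff]
    have : constantCoeff ps = 0 := by
      rw [hps, map_sum]
      apply Finset.sum_eq_zero
      intro i _
      simp [map_smul, map_pow, PowerSeries.constantCoeff_X]
    rw [this]; exact fun h => h.ne_zero rfl
  set f' : ↥R := ⟨f₀, hf₀R⟩ with hf'
  have hf'm : f' ∈ IsLocalRing.maximalIdeal ↥R := by
    rw [IsLocalRing.mem_maximalIdeal]
    intro hunit
    have h1 : IsUnit f₀ := hunit.map R.val
    obtain ⟨j⟩ := hne
    have h2 : IsUnit (f₀ j) := h1.map (Pi.evalRingHom (fun _ => PowerSeries k) j)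
    rw [hf₀j] at h2
    exact hpsnu h2
  -- descending chain of k-subspaces of Q
  set T : ℕ → Submodule k S := fun n => LinearMap.range (LinearMap.mulLeft k (f₀ ^ n)) with hT
  have hanti : Antitone T := antitone_nat_of_succ_le (by
    rintro n x ⟨s, rfl⟩
    exact ⟨f₀ * s, by simp only [LinearMap.mulLeft_apply, pow_succ]; ring⟩)
  set W : ℕ →o (Submodule k Q)ᵒᵈ :=
    ⟨fun n => (T n).map (Subalgebra.toSubmodule R).mkQ,
     fun n m h => Submodule.map_mono (hanti h)⟩ with hW
  haveI : IsArtinian k Q := inferInstance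
  obtain ⟨n, hn⟩ := IsArtinian.monotone_stabilizes W
  have hWst : (T n).map (Subalgebra.toSubmodule R).mkQ =
      (T (n+1)).map (Subalgebra.toSubmodule R).mkQ := hn (n+1) (Nat.le_succ n)
  have hstep : ∀ s : S, ∃ s' : S, f₀ ^ n * s - f₀ ^ (n+1) * s' ∈ R := by
    intro s
    have hx : (Subalgebra.toSubmodule R).mkQ (f₀ ^ n * s) ∈
        (T (n+1)).map (Subalgebra.toSubmodule R).mkQ := by
      rw [← hWst]
      exact Submodule.mem_map_of_mem ⟨s, rfl⟩
    obtain ⟨y, ⟨s', rfl⟩, hy⟩ := hx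
    simp only [LinearMap.mulLeft_apply] at hy
    refine ⟨s', ?_⟩
    have h2 : (Subalgebra.toSubmodule R).mkQ (f₀ ^ n * s - f₀ ^ (n+1) * s') = 0 := by
      rw [map_sub, hy, sub_self]
    rw [Submodule.mkQ_apply, Submodule.Quotient.mk_eq_zero] at h2
    exact h2
  -- Nakayama
  set N : Submodule ↥R S := LinearMap.range (Algebra.linearMap ↥R S) with hNdef
  have hNmem : ∀ x : S, x ∈ N ↔ x ∈ R := by
    intro x
    constructor
    · rintro ⟨a, rfl⟩; exact a.2
    · intro hx; exact ⟨⟨x, hx⟩, rfl⟩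
  have hcoe : ∀ (m : ℕ) (s : S), (f' ^ m) • s = f₀ ^ m * s := by
    intro m s
    have h1 : ((f' ^ m : ↥R) : S) = f₀ ^ m := by simp [hf']
    rw [← h1]; rfl
  set I : Ideal ↥R := Ideal.span {f'} with hI
  set N' : Submodule ↥R S := Submodule.map (DistribMulAction.toLinearMap ↥R S (f' ^ n)) ⊤
    with hN'
  have hN'mem : ∀ s : S, f₀ ^ n * s ∈ N' := fun s => ⟨s, trivial, hcoe n s⟩
  have hfg : N'.FG := Submodule.FG.map _ (Module.finite_def.mp hfinmod)
  have hNN : N' ≤ N ⊔ I • N' := by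
    rintro x ⟨s, -, rfl⟩
    have hx : (DistribMulAction.toLinearMap ↥R S (f' ^ n)) s = f₀ ^ n * s := hcoe n s
    rw [hx]
    obtain ⟨s', hs'⟩ := hstep s
    have hf1 : f' • (f₀ ^ n * s') = f₀ * (f₀ ^ n * s') := by
      have h2 := hcoe 1 (f₀ ^ n * s')
      rwa [pow_one, pow_one] at h2
    have hdecomp : f₀ ^ n * s = (f₀ ^ n * s - f₀ ^ (n+1) * s') + f' • (f₀ ^ n * s') := by
      rw [hf1]; ring
    rw [hdecomp]
    exact Submodule.add_mem_sup ((hNmem _).mpr hs')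
      (Submodule.smul_mem_smul (Ideal.subset_span rfl) (hN'mem s'))
  have hjac : I ≤ Ideal.jacobson ⊥ :=
    le_trans (Ideal.span_le.mpr (by simpa using hf'm)) (IsLocalRing.maximalIdeal_le_jacobson ⊥)
  have hle : N' ≤ N := by
    have h := Submodule.sup_eq_sup_smul_of_le_smul_of_le_jacobson hfg hjac hNN
    rw [Submodule.bot_smul, sup_bot_eq] at h
    exact le_trans le_sup_right h.le
  have hcpow : ((f' ^ n : ↥R) : S) = f₀ ^ n := by simp [hf']
  refine ⟨(f' ^ n : ↥R), (f' ^ n).2, ?_, ?_⟩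
  · intro j
    have h1 : ((f' ^ n : ↥R) : S) j = ps ^ n := by
      rw [hcpow, Pi.pow_apply, hf₀j]
    rw [h1]
    exact pow_ne_zero _ hpsne
  · intro s
    rw [hcpow]
    exact (hNmem _).mp (hle (hN'mem s))

/-- Let `R ⊆ S = k[[t₁]] ⊕ ... ⊕ k[[tᵣ]]` be a local `k`-subalgebra
such that `S` is a finite `R`-module and `dim_k S/R < ∞`. Then the inclusion
`R ↪ S` is birational. -/
theorem birational_of_finite_codim {k : Type*} [Field k] {r : ℕ}
    (R : Subalgebra k (Fin r → PowerSeries k))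
    [IsLocalRing ↥R]
    (hfinmod : Module.Finite ↥R (Fin r → PowerSeries k))
    (hfin : FiniteDimensional k
      ((Fin r → PowerSeries k) ⧸ Subalgebra.toSubmodule R)) :
    RingHom.IsBirationalMap (Subalgebra.val R).toRingHom := by
  classical
  set S := Fin r → PowerSeries k
  set φ : ↥R →+* S := (Subalgebra.val R).toRingHom with hφ
  obtain ⟨g, hgR, hgj, hgc⟩ := exists_conductor R hfinmod hfin
  have hφval : ∀ a : ↥R, φ a = (a : S) := fun a => rfl
  have hgP : ∀ i : Fin r, g ∉ Pker (k := k) i := fun i h => hgj i (mem_Pker.mp h)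
  constructor
  · refine ⟨?_, ?_, ?_⟩
    · -- MapsTo
      intro p hp
      haveI : p.IsPrime := hp.1.1
      obtain ⟨i, rfl⟩ := eq_Pker_of_minimal hp
      refine ⟨⟨Ideal.IsPrime.comap φ, bot_le⟩, ?_⟩
      rintro q' ⟨hq'p, -⟩ hle a ha
      have h1 : (a : S) i = 0 := mem_Pker.mp ha
      set c : ↥R := ⟨g * Pi.single i 1, hgc _⟩ with hc
      have hac : a * c = 0 := by
        apply Subtype.ext
        show (a : S) * (g * Pi.single i 1) = 0
        rw [mul_comm (g : S), ← mul_assoc, single_mul, h1]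
        simp
      rcases hq'p.mem_or_mem (show a * c ∈ q' by rw [hac]; exact q'.zero_mem) with h | h
      · exact h
      · exfalso
        have : (c : S) ∈ Pker (k := k) i := hle h
        rw [mem_Pker] at this
        simp only [hc, Pi.mul_apply, Pi.single_eq_same, mul_one] at this
        exact hgj i this
    · -- InjOn
      intro p₁ hp₁ p₂ hp₂ heq
      obtain ⟨i, rfl⟩ := eq_Pker_of_minimal hp₁
      obtain ⟨j, rfl⟩ := eq_Pker_of_minimal hp₂
      by_cases hij : i = j
      · rw [hij]
      · exfalso
        set c : ↥R := ⟨g * Pi.single i 1, hgc _⟩ with hc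
        have h1 : c ∈ Ideal.comap φ (Pker (k := k) j) := by
          show (c : S) ∈ Pker (k := k) j
          rw [mem_Pker]
          simp [hc, Pi.single_eq_of_ne (Ne.symm hij)]
        rw [← heq] at h1
        have h2 : (c : S) ∈ Pker (k := k) i := h1
        rw [mem_Pker] at h2
        simp only [hc, Pi.mul_apply, Pi.single_eq_same, mul_one] at h2
        exact hgj i h2
    · -- SurjOn
      intro q hq
      haveI : q.IsPrime := hq.1.1
      haveI : Algebra.IsIntegral ↥R S := Algebra.IsIntegral.of_finite _ _
      have halg : algebraMap ↥R S = φ := rfl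
      have hbot : (⊥ : Ideal S).comap (algebraMap ↥R S) ≤ q := by
        intro x hx
        have : φ x = 0 := hx
        have : x = 0 := Subtype.ext this
        rw [this]; exact q.zero_mem
      obtain ⟨P, -, hPprime, hPq⟩ := Ideal.exists_ideal_over_prime_of_isIntegral q ⊥ hbot
      haveI := hPprime
      obtain ⟨p', hp'min, hp'le⟩ := Ideal.exists_minimalPrimes_le (bot_le (a := P))
      have hp'min' : p' ∈ minimalPrimes S := hp'min
      haveI : p'.IsPrime := hp'min'.1.1
      refine ⟨p', hp'min', ?_⟩
      have h1 : Ideal.comap φ p' ≤ q := by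
        rw [← hPq, halg]
        exact Ideal.comap_mono hp'le
      exact le_antisymm h1 (hq.2 ⟨Ideal.IsPrime.comap φ, bot_le⟩ h1)
  · -- localization isomorphisms
    intro p hp
    haveI : p.IsPrime := hp.1.1
    obtain ⟨i, hpi⟩ := eq_Pker_of_minimal hp
    have hg_not : g ∉ p := by rw [hpi]; exact hgP i
    constructor
    · rw [injective_iff_map_eq_zero]
      intro x hx
      obtain ⟨⟨a, s⟩, rfl⟩ := IsLocalization.mk'_surjective (Ideal.comap φ p).primeCompl x
      rw [Localization.localRingHom_mk'] at hx
      rw [IsLocalization.mk'_eq_zero_iff] at hx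
      obtain ⟨u, hu⟩ := hx
      set c : ↥R := ⟨g * (u : S), hgc _⟩ with hc
      have hcq : c ∈ (Ideal.comap φ p).primeCompl := by
        show (c : S) ∉ p
        intro hmem
        rcases ‹p.IsPrime›.mem_or_mem hmem with h | h
        · exact hg_not h
        · exact u.2 h
      have hca : c * a = 0 := by
        apply Subtype.ext
        show (g * (u : S)) * (a : S) = 0
        rw [mul_assoc]
        have : (u : S) * (a : S) = 0 := hu
        rw [this, mul_zero]
      rw [IsLocalization.mk'_eq_zero_iff]
      exact ⟨⟨c, hcq⟩, hca⟩
    · intro y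
      obtain ⟨⟨b, t⟩, rfl⟩ := IsLocalization.mk'_surjective p.primeCompl y
      have htp : g * (t : S) ∉ p := by
        intro hmem
        rcases ‹p.IsPrime›.mem_or_mem hmem with h | h
        · exact hg_not h
        · exact t.2 h
      refine ⟨IsLocalization.mk' _ (⟨g * b, hgc b⟩ : ↥R)
        (⟨⟨g * (t : S), hgc _⟩, htp⟩ : (Ideal.comap φ p).primeCompl), ?_⟩
      rw [Localization.localRingHom_mk']
      rw [IsLocalization.mk'_eq_iff_eq]
      congr 1
      show (t : S) * (g * b) = (g * (t : S)) * b
      ring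
end

section
/- Let φ : ℤ[[t]]-parameterization be given by φⁱ(t) ∈ ℤ[[t]], i = 1,...,n, and for a prime number p let φ_p be the reduction mod p and φ_0 the parameterization over ℚ. If for some prime p the parameterization φ_p is primitive with δ_{𝔽_p}(R_p) = dim_{𝔽_p} 𝔽_p[[t]]/𝔽_p[[φ_p¹,...,φ_pⁿ]] < ∞, then δ_ℚ(R_0) = dim_ℚ ℚ[[t]]/ℚ[[φ_0¹,...,φ_0ⁿ]] < ∞ and δ_ℚ(R_0) ≤ δ_{𝔽_p}(R_p). -/
open PowerSeries

namespace DeltaAux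

noncomputable section

open Classical

def deg {n : ℕ} (β : Fin n →₀ ℕ) : ℕ := β.sum fun _ e => e

lemma deg_add {n : ℕ} (β γ : Fin n →₀ ℕ) : deg (β + γ) = deg β + deg γ :=
  Finsupp.sum_add_index' (fun _ => rfl) (fun _ _ _ => rfl)

lemma apply_le_deg {n : ℕ} (β : Fin n →₀ ℕ) (i : Fin n) : β i ≤ deg β := by
  by_cases h : β i = 0
  · simp [h]
  · exact Finset.single_le_sum (f := fun j => β j) (fun _ _ => Nat.zero_le _)
      (Finsupp.mem_support_iff.mpr h)

lemma deg_single {n : ℕ} (i : Fin n) : deg (Finsupp.single i 1) = 1 := by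
  simp [deg]

lemma deg_eq_zero {n : ℕ} {β : Fin n →₀ ℕ} (h : deg β = 0) : β = 0 := by
  ext i
  have := apply_le_deg β i
  rw [h] at this
  simpa using this

variable {K : Type*} [Field K] {n : ℕ}

/-- order at least `d` -/
def mOrdGe (F : MvPowerSeries (Fin n) K) (d : ℕ) : Prop :=
  ∀ β, deg β < d → MvPowerSeries.coeff β F = 0

lemma mOrdGe_mul {F G : MvPowerSeries (Fin n) K} {d e : ℕ}
    (hF : mOrdGe F d) (hG : mOrdGe G e) : mOrdGe (F * G) (d + e) := by
  intro β hβ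
  rw [MvPowerSeries.coeff_mul]
  refine Finset.sum_eq_zero fun p hp => ?_
  rw [Finset.HasAntidiagonal.mem_antidiagonal] at hp
  have hdeg : deg p.1 + deg p.2 = deg β := by rw [← deg_add, hp]
  by_cases h1 : deg p.1 < d
  · rw [hF p.1 h1, zero_mul]
  · rw [hG p.2 (by omega), mul_zero]

lemma mOrdGe_one_of_constantCoeff {F : MvPowerSeries (Fin n) K}
    (h : MvPowerSeries.constantCoeff F = 0) : mOrdGe F 1 := by
  intro β hβ
  have : β = 0 := deg_eq_zero (by omega)
  rw [this]
  simpa [MvPowerSeries.coeff_zero_eq_constantCoeff] using h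

lemma mOrdGe_pow {F : MvPowerSeries (Fin n) K} (h : mOrdGe F 1) (a : ℕ) :
    mOrdGe (F ^ a) a := by
  induction a with
  | zero => intro β hβ; omega
  | succ a ih =>
    have := mOrdGe_mul ih h
    rwa [pow_succ]

/-- Continuity of algebra maps out of multivariate power series whose images of the
variables have zero constant coefficient. -/
lemma cont (ψ : MvPowerSeries (Fin n) K →ₐ[K] PowerSeries K)
    (hc : ∀ i, constantCoeff (ψ (MvPowerSeries.X i)) = 0) :
    ∀ (d : ℕ) (F : MvPowerSeries (Fin n) K), mOrdGe F d →
      ∀ k < d, coeff k (ψ F) = 0 := by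
  intro d
  induction d with
  | zero => intro F _ k hk; omega
  | succ d ih =>
    intro F hF k hk
    set G : Fin n → MvPowerSeries (Fin n) K := fun i =>
      (fun β => if (∀ j, j < i → β j = 0)
        then MvPowerSeries.coeff (β + Finsupp.single i 1) F else 0) with hGdef
    have hGcoeff : ∀ i β, MvPowerSeries.coeff β (G i)
        = if (∀ j, j < i → β j = 0)
          then MvPowerSeries.coeff (β + Finsupp.single i 1) F else 0 := by
      intro i β; rw [hGdef]; rfl
    have hXmul : ∀ (i : Fin n) (H : MvPowerSeries (Fin n) K) (β : Fin n →₀ ℕ),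
        MvPowerSeries.coeff β (MvPowerSeries.X i * H)
        = if Finsupp.single i 1 ≤ β
          then MvPowerSeries.coeff (β - Finsupp.single i 1) H else 0 := by
      intro i H β
      rw [show (MvPowerSeries.X i : MvPowerSeries (Fin n) K)
          = MvPowerSeries.monomial (Finsupp.single i 1) 1 from rfl,
        MvPowerSeries.coeff_monomial_mul]
      simp
    have hdecomp : F = ∑ i, MvPowerSeries.X i * G i := by
      apply MvPowerSeries.ext
      intro β
      rw [map_sum]
      by_cases hβ : β = 0
      · subst hβ
        rw [Finset.sum_eq_zero, hF 0 (by simp [deg])]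
        intro i _
        rw [hXmul i, if_neg]
        intro hle
        have := Finsupp.single_le_iff.mp hle
        simp at this
      · have hsupp : β.support.Nonempty := by
          rw [Finsupp.support_nonempty_iff]; exact hβ
        set i₀ := β.support.min' hsupp with hi₀
        have hi₀mem : i₀ ∈ β.support := Finset.min'_mem _ _
        have hi₀ne : β i₀ ≠ 0 := Finsupp.mem_support_iff.mp hi₀mem
        have hi₀min : ∀ j ∈ β.support, i₀ ≤ j := fun j hj => Finset.min'_le _ _ hj
        have hle₀ : Finsupp.single i₀ 1 ≤ β :=
          Finsupp.single_le_iff.mpr (Nat.one_le_iff_ne_zero.mpr hi₀ne)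
        rw [Finset.sum_eq_single i₀]
        · rw [hXmul i₀, if_pos hle₀, hGcoeff, if_pos]
          · rw [tsub_add_cancel_of_le hle₀]
          · intro j hj
            rw [Finsupp.tsub_apply]
            have : β j = 0 := by
              by_contra hne
              exact absurd (hi₀min j (Finsupp.mem_support_iff.mpr hne)) (not_le.mpr hj)
            simp [this]
        · intro i _ hne
          rw [hXmul i]
          by_cases hle : Finsupp.single i 1 ≤ β
          · rw [if_pos hle, hGcoeff, if_neg]
            intro hall
            have hisupp : i ∈ β.support := Finsupp.mem_support_iff.mpr
              (Nat.one_le_iff_ne_zero.mp (Finsupp.single_le_iff.mp hle))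
            have hi₀lt : i₀ < i := lt_of_le_of_ne (hi₀min i hisupp) (Ne.symm hne)
            have := hall i₀ hi₀lt
            rw [Finsupp.tsub_apply, Finsupp.single_apply, if_neg (by
              intro h; exact hne h)] at this
            omega
          · rw [if_neg hle]
        · intro h
          exact absurd (Finset.mem_univ i₀) h
    have hGord : ∀ i, mOrdGe (G i) d := by
      intro i β hβ
      rw [hGcoeff]
      by_cases hcond : (∀ j, j < i → β j = 0)
      · rw [if_pos hcond]
        apply hF
        rw [deg_add, deg_single]
        omega
      · rw [if_neg hcond]
    rw [hdecomp, map_sum]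
    rw [map_sum]
    refine Finset.sum_eq_zero fun i _ => ?_
    rw [map_mul]
    rw [PowerSeries.coeff_mul]
    refine Finset.sum_eq_zero fun p hp => ?_
    rw [Finset.HasAntidiagonal.mem_antidiagonal] at hp
    by_cases hp1 : p.1 = 0
    · rw [hp1, PowerSeries.coeff_zero_eq_constantCoeff, hc i, zero_mul]
    · rw [ih (G i) (hGord i) p.2 (by omega), mul_zero]

end

end DeltaAux

namespace DeltaAux
open Classical
noncomputable section
variable {K : Type*} [Field K] {n : ℕ}

lemma coeff_mul_low {x y : PowerSeries K} {m m' : ℕ}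
    (hx : ∀ k < m, coeff k x = 0) (hy : ∀ k < m', coeff k y = 0) :
    ∀ k < m + m', coeff k (x * y) = 0 := by
  intro k hk
  rw [PowerSeries.coeff_mul]
  refine Finset.sum_eq_zero fun p hp => ?_
  rw [Finset.HasAntidiagonal.mem_antidiagonal] at hp
  by_cases h1 : p.1 < m
  · rw [hx p.1 h1, zero_mul]
  · rw [hy p.2 (by omega), mul_zero]

lemma coeff_mul_lead {x y : PowerSeries K} {m m' : ℕ}
    (hx : ∀ k < m, coeff k x = 0) (hy : ∀ k < m', coeff k y = 0) :
    coeff (m + m') (x * y) = coeff m x * coeff m' y := by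
  rw [PowerSeries.coeff_mul]
  rw [Finset.sum_eq_single (m, m')]
  · intro p hp hne
    rw [Finset.HasAntidiagonal.mem_antidiagonal] at hp
    by_cases h1 : p.1 < m
    · rw [hx p.1 h1, zero_mul]
    · have : p.2 < m' := by
        rcases Nat.lt_or_ge p.2 m' with h | h
        · exact h
        · exfalso; apply hne; have : p.1 = m := by omega
          rw [Prod.ext_iff]; exact ⟨this, by omega⟩
      rw [hy p.2 this, mul_zero]
  · intro h
    rw [Finset.HasAntidiagonal.mem_antidiagonal] at h
    exact absurd rfl h

lemma coeff_pow_low {x : PowerSeries K} {m : ℕ}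
    (hx : ∀ k < m, coeff k x = 0) (a : ℕ) :
    ∀ k < a * m, coeff k (x ^ a) = 0 := by
  induction a with
  | zero => intro k hk; omega
  | succ a ih =>
    intro k hk
    rw [pow_succ]
    exact coeff_mul_low ih hx k (by rw [Nat.succ_mul] at hk; omega)

lemma coeff_pow_lead {x : PowerSeries K} {m : ℕ}
    (hx : ∀ k < m, coeff k x = 0) (a : ℕ) :
    coeff (a * m) (x ^ a) = (coeff m x) ^ a := by
  induction a with
  | zero => simp
  | succ a ih =>
    rw [pow_succ, Nat.succ_mul, coeff_mul_lead (coeff_pow_low hx a) hx, ih, pow_succ]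

variable (K) in
/-- reduction of the integral parameterization to `K` -/
def mf (f : Fin n → PowerSeries ℤ) : Fin n → PowerSeries K :=
  fun i => PowerSeries.map (Int.castRingHom K) (f i)

variable (K) in
/-- monomials in the parameterizing series -/
def mon (f : Fin n → PowerSeries ℤ) : (Fin n →₀ ℕ) → PowerSeries K :=
  fun α => α.prod fun i e => (mf K f i) ^ e

variable (K) in
/-- the linear span of all monomials in the parameterizing series -/
def USub (f : Fin n → PowerSeries ℤ) : Submodule K (PowerSeries K) :=
  Submodule.span K (Set.range (mon K f))

lemma evalPoly (f : Fin n → PowerSeries ℤ)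
    (ψ : MvPowerSeries (Fin n) K →ₐ[K] PowerSeries K)
    (hψX : ∀ i, ψ (MvPowerSeries.X i) = mf K f i) (P : MvPolynomial (Fin n) K) :
    ψ ↑P = MvPolynomial.aeval (mf K f) P := by
  induction P using MvPolynomial.induction_on with
  | C a =>
    rw [MvPolynomial.coe_C, MvPolynomial.aeval_C, MvPowerSeries.c_eq_algebraMap, ψ.commutes]
  | add P Q hP hQ =>
    rw [MvPolynomial.coe_add, map_add, map_add, hP, hQ]
  | mul_X P i hP =>
    rw [MvPolynomial.coe_mul, map_mul, map_mul, hP, MvPolynomial.coe_X, hψX,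
      MvPolynomial.aeval_X]

lemma aeval_eq_sum_mon (f : Fin n → PowerSeries ℤ) (P : MvPolynomial (Fin n) K) :
    MvPolynomial.aeval (mf K f) P = ∑ α ∈ P.support, MvPolynomial.coeff α P • mon K f α := by
  rw [MvPolynomial.aeval_def, MvPolynomial.eval₂_eq]
  refine Finset.sum_congr rfl fun α _ => ?_
  rw [Algebra.smul_def]
  rfl

lemma aeval_mem_USub (f : Fin n → PowerSeries ℤ) (P : MvPolynomial (Fin n) K) :
    MvPolynomial.aeval (mf K f) P ∈ USub K f := by
  rw [aeval_eq_sum_mon]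
  exact Submodule.sum_mem _ fun α _ => Submodule.smul_mem _ _
    (Submodule.subset_span ⟨α, rfl⟩)

lemma USub_le_range (f : Fin n → PowerSeries ℤ)
    (ψ : MvPowerSeries (Fin n) K →ₐ[K] PowerSeries K)
    (hψX : ∀ i, ψ (MvPowerSeries.X i) = mf K f i) :
    USub K f ≤ Subalgebra.toSubmodule ψ.range := by
  rw [USub, Submodule.span_le]
  rintro _ ⟨α, rfl⟩
  have : ψ ↑(MvPolynomial.monomial α (1 : K)) = mon K f α := by
    rw [evalPoly f ψ hψX, MvPolynomial.aeval_monomial]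
    simp [mon]
  exact ⟨_, this⟩

lemma hc_of_hf0 (f : Fin n → PowerSeries ℤ) (hf0 : ∀ i, constantCoeff (f i) = 0)
    (i : Fin n) : constantCoeff (mf K f i) = 0 := by
  rw [mf, ← PowerSeries.coeff_zero_eq_constantCoeff, PowerSeries.coeff_map,
    PowerSeries.coeff_zero_eq_constantCoeff, hf0]
  simp

lemma approx (f : Fin n → PowerSeries ℤ) (hf0 : ∀ i, constantCoeff (f i) = 0)
    (ψ : MvPowerSeries (Fin n) K →ₐ[K] PowerSeries K)
    (hψX : ∀ i, ψ (MvPowerSeries.X i) = mf K f i)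
    (F : MvPowerSeries (Fin n) K) (k : ℕ) :
    ∃ w ∈ USub K f, ∀ j ≤ k, coeff j (ψ F) = coeff j w := by
  have hc : ∀ i, constantCoeff (ψ (MvPowerSeries.X i)) = 0 := by
    intro i; rw [hψX]; exact hc_of_hf0 f hf0 i
  set bound : Fin n →₀ ℕ := Finsupp.equivFunOnFinite.symm (fun _ => k) with hbd
  have hbound : ∀ i, bound i = k := fun i => rfl
  set P : MvPolynomial (Fin n) K :=
    ∑ β ∈ Finset.Iic bound, MvPolynomial.monomial β (MvPowerSeries.coeff β F) with hP
  have hPco : ∀ β ∈ Finset.Iic bound, MvPolynomial.coeff β P = MvPowerSeries.coeff β F := by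
    intro β hβ
    rw [hP, MvPolynomial.coeff_sum, Finset.sum_eq_single β]
    · rw [MvPolynomial.coeff_monomial, if_pos rfl]
    · intro γ _ hne
      rw [MvPolynomial.coeff_monomial, if_neg hne]
    · intro h; exact absurd hβ h
  have hdiff : mOrdGe (F - (P : MvPowerSeries (Fin n) K)) (k + 1) := by
    intro β hβ
    have hmem : β ∈ Finset.Iic bound := by
      rw [Finset.mem_Iic]
      intro i
      rw [hbound]
      exact le_trans (apply_le_deg β i) (by omega)
    rw [map_sub, MvPolynomial.coeff_coe, hPco β hmem, sub_self]
  refine ⟨MvPolynomial.aeval (mf K f) P, aeval_mem_USub f P, fun j hj => ?_⟩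
  have h0 : coeff j (ψ (F - (P : MvPowerSeries (Fin n) K))) = 0 := cont ψ hc (k+1) _ hdiff j (by omega)
  rw [map_sub, map_sub, sub_eq_zero] at h0
  rw [h0, evalPoly f ψ hψX]

end
end DeltaAux

namespace DeltaAux
open Classical
noncomputable section

lemma indep_lift {p : ℕ} [Fact p.Prime] {N : ℕ} {ι : Type*} [Fintype ι]
    (w : ι → Fin N → ℤ)
    (h : LinearIndependent (ZMod p) fun i => (fun j => ((w i j : ℤ) : ZMod p))) :
    LinearIndependent ℚ fun i => (fun j => ((w i j : ℤ) : ℚ)) := by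
  rw [Fintype.linearIndependent_iff] at h ⊢
  intro c hc
  by_contra hne
  push_neg at hne
  obtain ⟨i₀, hi₀⟩ := hne
  obtain ⟨b, hb⟩ := IsLocalization.exist_integer_multiples (nonZeroDivisors ℤ)
    (Finset.univ) c
  have hbne : (b : ℤ) ≠ 0 := nonZeroDivisors.coe_ne_zero b
  choose m hm using fun i => hb i (Finset.mem_univ i)
  have hcast : ∀ i, (m i : ℚ) = (b : ℤ) • c i := fun i => hm i
  have hmrel : ∑ i, m i • w i = 0 := by
    funext j
    have h1 : ∑ i, c i • ((w i j : ℤ) : ℚ) = 0 := by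
      have := congrFun hc j
      simpa using this
    have h2 : ((∑ i, m i • w i) j : ℤ) = ∑ i, m i * w i j := by
      simp [Finset.sum_apply]
    have h3 : ((∑ i, m i * w i j : ℤ) : ℚ) = 0 := by
      push_cast
      calc ∑ i, (m i : ℚ) * (w i j : ℚ)
          = ∑ i, ((b : ℤ) : ℚ) * (c i * (w i j : ℚ)) := by
            refine Finset.sum_congr rfl fun i _ => ?_
            rw [hcast i]
            push_cast [zsmul_eq_mul]
            ring
        _ = ((b : ℤ) : ℚ) * ∑ i, c i * (w i j : ℚ) := by rw [Finset.mul_sum]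
        _ = 0 := by
            simp only [smul_eq_mul] at h1
            rw [h1, mul_zero]
    have h4 : (∑ i, m i * w i j : ℤ) = 0 := by exact_mod_cast h3
    simpa [h2] using h4
  have hmne : m i₀ ≠ 0 := by
    intro h0
    apply hi₀
    have := hcast i₀
    rw [h0] at this
    simp only [Int.cast_zero, zsmul_eq_mul] at this
    rcases mul_eq_zero.mp this.symm with h | h
    · exact absurd (by exact_mod_cast h) hbne
    · exact h
  set g : ℤ := Finset.gcd Finset.univ m with hg
  have hgdvd : ∀ i, g ∣ m i := fun i => Finset.gcd_dvd (Finset.mem_univ i)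
  have hgne : g ≠ 0 := by
    intro h0
    rw [hg] at h0
    exact hmne ((Finset.gcd_eq_zero_iff.mp h0) i₀ (Finset.mem_univ i₀))
  set m' : ι → ℤ := fun i => m i / g with hm'
  have hmm' : ∀ i, m i = g * m' i := fun i => (Int.mul_ediv_cancel' (hgdvd i)).symm
  have hrel' : ∑ i, m' i • w i = 0 := by
    have : g • (∑ i, m' i • w i) = g • (0 : Fin N → ℤ) := by
      rw [smul_zero, ← hmrel, Finset.smul_sum]
      refine Finset.sum_congr rfl fun i _ => ?_
      rw [smul_smul, ← hmm' i]
    exact smul_right_injective _ hgne this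
  have hgcd' : Finset.gcd Finset.univ m' = 1 := by
    have h1 : Finset.gcd Finset.univ m = g * Finset.gcd Finset.univ m' := by
      conv_lhs => rw [show m = fun i => g * m' i from funext hmm']
      rw [Finset.gcd_mul_left]
      congr 1
      rw [hg]
      have := Finset.normalize_gcd (s := (Finset.univ : Finset ι)) (f := m)
      exact (this).symm ▸ rfl
    have h2 : g * 1 = g * Finset.gcd Finset.univ m' := by rw [mul_one, ← h1, hg]
    exact (mul_left_cancel₀ hgne h2).symm
  have hdvd : ∀ i, (p : ℤ) ∣ m' i := by
    intro i
    rw [← ZMod.intCast_zmod_eq_zero_iff_dvd]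
    have hz : ∀ j, (∑ i, ((m' i : ℤ) : ZMod p) • (fun j => ((w i j : ℤ) : ZMod p)) j) = 0 := by
      intro j
      have := congrFun hrel' j
      simp only [Finset.sum_apply, Pi.zero_apply, smul_eq_mul] at this ⊢
      have : ((∑ i, m' i * w i j : ℤ) : ZMod p) = 0 := by
        rw [show (∑ i, m' i * w i j : ℤ) = 0 from by simpa using this]
        simp
      push_cast at this
      convert this using 2
    exact h (fun i => ((m' i : ℤ) : ZMod p)) (funext fun j => by
      simpa [Finset.sum_apply] using hz j) i
  have : (p : ℤ) ∣ 1 := hgcd' ▸ Finset.dvd_gcd fun i _ => hdvd i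
  have hp1 : (p : ℤ) ≤ 1 := Int.le_of_dvd one_pos this
  have := (Fact.out : p.Prime).two_le
  omega

end
end DeltaAux

namespace DeltaAux
open Classical
noncomputable section
variable {K : Type*} [Field K] {n : ℕ}

variable (K) in
/-- truncation to the first `N` coefficients -/
def TN (N : ℕ) : PowerSeries K →ₗ[K] (Fin N → K) :=
  LinearMap.pi fun j => PowerSeries.coeff (R := K) (j : ℕ)

lemma TN_apply (N : ℕ) (y : PowerSeries K) (j : Fin N) :
    TN K N y j = coeff (j : ℕ) y := rfl

lemma TN_surjective (N : ℕ) : Function.Surjective (TN K N) := by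
  intro v
  refine ⟨PowerSeries.mk (fun k => if h : k < N then v ⟨k, h⟩ else 0), ?_⟩
  funext j
  rw [TN_apply, PowerSeries.coeff_mk, dif_pos j.2]

variable (K) in
/-- truncated span of monomials -/
def WN (f : Fin n → PowerSeries ℤ) (N : ℕ) : Submodule K (Fin N → K) :=
  (USub K f).map (TN K N)

lemma finrank_le_of_surj {V W : Type*} [AddCommGroup V] [Module K V]
    [AddCommGroup W] [Module K W] [FiniteDimensional K V]
    (φ : V →ₗ[K] W) (hs : Function.Surjective φ) :
    Module.finrank K W ≤ Module.finrank K V := by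
  have h1 := LinearMap.finrank_range_add_finrank_ker φ
  have h2 : LinearMap.range φ = ⊤ := LinearMap.range_eq_top.mpr hs
  have h3 : Module.finrank K W = Module.finrank K (LinearMap.range φ) := by
    rw [h2, finrank_top]
  omega

lemma dimW_lower (f : Fin n → PowerSeries ℤ) (hf0 : ∀ i, constantCoeff (f i) = 0)
    (ψ : MvPowerSeries (Fin n) K →ₐ[K] PowerSeries K)
    (hψX : ∀ i, ψ (MvPowerSeries.X i) = mf K f i)
    [hfin : FiniteDimensional K (PowerSeries K ⧸ Subalgebra.toSubmodule ψ.range)]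
    (N : ℕ) :
    N ≤ Module.finrank K (WN K f N) +
      Module.finrank K (PowerSeries K ⧸ Subalgebra.toSubmodule ψ.range) := by
  have hle : Subalgebra.toSubmodule ψ.range ≤ Submodule.comap (TN K N) (WN K f N) := by
    rintro y hy
    obtain ⟨F, hF⟩ := hy
    obtain ⟨w, hw, hco⟩ := approx f hf0 ψ hψX F N
    refine Submodule.mem_comap.mpr ?_
    have hy' : TN K N y = TN K N w := by
      funext j
      rw [TN_apply, TN_apply, ← hF]
      exact hco (j : ℕ) (le_of_lt j.2)
    rw [hy']
    exact Submodule.mem_map_of_mem hw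
  set φ := Submodule.mapQ (Subalgebra.toSubmodule ψ.range) (WN K f N) (TN K N) hle
  have hsurj : Function.Surjective φ := by
    intro z
    obtain ⟨v, rfl⟩ := Submodule.mkQ_surjective _ z
    obtain ⟨y, rfl⟩ := TN_surjective (K := K) N v
    refine ⟨Submodule.Quotient.mk y, ?_⟩
    rw [show φ = Submodule.mapQ _ _ _ hle from rfl, Submodule.mapQ_apply]
    rfl
  have h1 : Module.finrank K ((Fin N → K) ⧸ (WN K f N)) ≤
      Module.finrank K (PowerSeries K ⧸ Subalgebra.toSubmodule ψ.range) :=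
    finrank_le_of_surj φ hsurj
  have h2 := Submodule.finrank_quotient_add_finrank (WN K f N)
  have h3 : Module.finrank K (Fin N → K) = N := by
    rw [Module.finrank_pi]
    simp
  omega

/-- the integral monomials -/
def intMon (f : Fin n → PowerSeries ℤ) : (Fin n →₀ ℕ) → PowerSeries ℤ :=
  fun α => α.prod fun i e => f i ^ e

lemma mon_eq_map (f : Fin n → PowerSeries ℤ) (α : Fin n →₀ ℕ) :
    mon K f α = PowerSeries.map (Int.castRingHom K) (intMon f α) := by
  rw [mon, intMon, Finsupp.prod, Finsupp.prod, map_prod]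
  refine Finset.prod_congr rfl fun i _ => ?_
  rw [map_pow]
  rfl

lemma TN_mon_cast (f : Fin n → PowerSeries ℤ) (N : ℕ) (α : Fin n →₀ ℕ) :
    TN K N (mon K f α) = fun j : Fin N => ((coeff (j : ℕ) (intMon f α) : ℤ) : K) := by
  funext j
  rw [TN_apply, mon_eq_map, PowerSeries.coeff_map]
  rfl

lemma WN_eq_span (f : Fin n → PowerSeries ℤ) (N : ℕ) :
    WN K f N = Submodule.span K (Set.range fun α => TN K N (mon K f α)) := by
  rw [WN, USub, Submodule.map_span, ← Set.range_comp]
  rfl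

lemma dimW_mono {p : ℕ} [Fact p.Prime] (f : Fin n → PowerSeries ℤ) (N : ℕ) :
    Module.finrank (ZMod p) (WN (ZMod p) f N) ≤ Module.finrank ℚ (WN ℚ f N) := by
  set gp : (Fin n →₀ ℕ) → (Fin N → ZMod p) := fun α => TN (ZMod p) N (mon (ZMod p) f α)
  obtain ⟨b, hb₁, hb₂, hb₃⟩ := exists_linearIndependent (ZMod p) (Set.range gp)
  have hbfin : b.Finite := hb₃.set_finite_of_isNoetherian
  haveI : Fintype b := hbfin.fintype
  have hrankp : Module.finrank (ZMod p) (WN (ZMod p) f N) = b.toFinset.card := by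
    rw [WN_eq_span, ← hb₂]
    exact finrank_span_set_eq_card hb₃
  have hsel : ∀ x : b, ∃ α, gp α = (x : Fin N → ZMod p) := fun x => hb₁ x.2
  choose σ hσ using hsel
  set w : b → Fin N → ℤ := fun x j => coeff (j : ℕ) (intMon f (σ x)) with hw
  have hwp : (fun x : b => (fun j => ((w x j : ℤ) : ZMod p))) =
      fun x : b => (x : Fin N → ZMod p) := by
    funext x
    rw [← hσ x]
    exact (TN_mon_cast (K := ZMod p) f N (σ x)).symm
  have hindp : LinearIndependent (ZMod p) fun x : b => (fun j => ((w x j : ℤ) : ZMod p)) := by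
    rw [hwp]
    exact hb₃
  have hindq : LinearIndependent ℚ fun x : b => (fun j => ((w x j : ℤ) : ℚ)) :=
    indep_lift w hindp
  have hsub : Submodule.span ℚ (Set.range fun x : b => (fun j => ((w x j : ℤ) : ℚ)))
      ≤ WN ℚ f N := by
    rw [Submodule.span_le]
    rintro _ ⟨x, rfl⟩
    rw [WN_eq_span]
    exact Submodule.subset_span ⟨σ x, TN_mon_cast (K := ℚ) f N (σ x)⟩
  have hcard : Module.finrank ℚ
      (Submodule.span ℚ (Set.range fun x : b => (fun j => ((w x j : ℤ) : ℚ))))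
      = Fintype.card b := finrank_span_eq_card hindq
  have hmono := Submodule.finrank_mono hsub
  rw [hcard] at hmono
  rw [hrankp, Set.toFinset_card]
  exact hmono

end
end DeltaAux

namespace DeltaAux
open Classical
noncomputable section
variable {K : Type*} [Field K] {n : ℕ}

variable (K) in
/-- there is an element of exact order `M` in the span of monomials -/
def hasOrd (f : Fin n → PowerSeries ℤ) (M : ℕ) : Prop :=
  ∃ w ∈ USub K f, (∀ k < M, coeff k w = 0) ∧ coeff M w ≠ 0

variable (K) in
def πN (N : ℕ) : (Fin (N+1) → K) →ₗ[K] (Fin N → K) :=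
  LinearMap.pi fun j => LinearMap.proj j.castSucc

lemma πN_TN (N : ℕ) (y : PowerSeries K) : πN K N (TN K (N+1) y) = TN K N y := by
  funext j
  rfl

lemma range_rho (f : Fin n → PowerSeries ℤ) (N : ℕ) :
    LinearMap.range ((πN K N) ∘ₗ (WN K f (N+1)).subtype) = WN K f N := by
  have hcomp : (πN K N) ∘ₗ TN K (N+1) = TN K N := LinearMap.ext fun y => πN_TN N y
  rw [LinearMap.range_comp, Submodule.range_subtype, WN, WN, ← Submodule.map_comp, hcomp]

lemma rhoJ2 (f : Fin n → PowerSeries ℤ) (N : ℕ) :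
    Module.finrank K (WN K f (N+1)) ≤ Module.finrank K (WN K f N) + 1 := by
  set ρ := (πN K N) ∘ₗ (WN K f (N+1)).subtype with hρ
  have h1 := LinearMap.finrank_range_add_finrank_ker ρ
  have h2 : Module.finrank K (LinearMap.range ρ) = Module.finrank K (WN K f N) := by
    rw [hρ, range_rho]
  have h3 : Module.finrank K (LinearMap.ker ρ) ≤ 1 := by
    set ε : LinearMap.ker ρ →ₗ[K] K :=
      (LinearMap.proj (Fin.last N)) ∘ₗ ((WN K f (N+1)).subtype ∘ₗ (LinearMap.ker ρ).subtype)
      with hε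
    have hinj : Function.Injective ε := by
      intro a b hab
      have hv : ∀ (x : LinearMap.ker ρ) (j : Fin (N+1)),
          ((x : WN K f (N+1)) : Fin (N+1) → K) j
          = if h : (j : ℕ) < N then ρ (x : WN K f (N+1)) ⟨j, h⟩ else ε x := by
        intro x j
        by_cases h : (j : ℕ) < N
        · rw [dif_pos h]
          rfl
        · rw [dif_neg h]
          have : j = Fin.last N := by
            apply Fin.ext
            have := j.2
            simp only [Fin.val_last]
            omega
          rw [this]
          rfl
      apply Subtype.ext
      apply Subtype.ext
      funext j
      have ha := hv a j
      have hb := hv b j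
      rw [a.2] at ha
      rw [b.2] at hb
      rw [ha, hb, hab]
    calc Module.finrank K (LinearMap.ker ρ) ≤ Module.finrank K K :=
          LinearMap.finrank_le_finrank_of_injective hinj
      _ = 1 := Module.finrank_self K
  omega

lemma rhoJ3 (f : Fin n → PowerSeries ℤ) (N : ℕ) (h : ¬ hasOrd K f N) :
    Module.finrank K (WN K f (N+1)) = Module.finrank K (WN K f N) := by
  set ρ := (πN K N) ∘ₗ (WN K f (N+1)).subtype with hρ
  have h1 := LinearMap.finrank_range_add_finrank_ker ρ
  have h2 : Module.finrank K (LinearMap.range ρ) = Module.finrank K (WN K f N) := by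
    rw [hρ, range_rho]
  have h3 : LinearMap.ker ρ = ⊥ := by
    rw [LinearMap.ker_eq_bot']
    intro x hx
    obtain ⟨v, hv⟩ := x
    obtain ⟨u, hu, hTu⟩ := Submodule.mem_map.mp hv
    have hcoeff : ∀ k < N, coeff k u = 0 := by
      intro k hk
      have := congrFun (show ρ ⟨v, hv⟩ = 0 from hx) ⟨k, hk⟩
      rw [hρ] at this
      simp only [LinearMap.comp_apply, Submodule.subtype_apply] at this
      rw [← hTu, πN_TN] at this
      exact this
    have hN : coeff N u = 0 := by
      by_contra hNe
      exact h ⟨u, hu, hcoeff, hNe⟩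
    have hzero : TN K (N+1) u = 0 := by
      funext j
      rw [TN_apply]
      rcases Nat.lt_or_ge (j : ℕ) N with hj | hj
      · exact hcoeff _ hj
      · have hjN : (j : ℕ) = N := by have := j.2; omega
        rw [hjN, hN]
        rfl
    apply Subtype.ext
    show v = (0 : Fin (N+1) → K)
    rw [← hTu, hzero]
  rw [h3, finrank_bot] at h1
  omega

lemma count_bound (f : Fin n → PowerSeries ℤ) (N : ℕ) :
    Module.finrank K (WN K f N) +
      ((Finset.range N).filter (fun M => ¬ hasOrd K f M)).card ≤ N := by
  induction N with
  | zero =>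
    simp only [Finset.range_zero, Finset.filter_empty, Finset.card_empty, add_zero]
    have h1 : Module.finrank K (WN K f 0) ≤ Module.finrank K (Fin 0 → K) :=
      Submodule.finrank_le _
    simpa using h1
  | succ N ih =>
    rw [Finset.range_add_one, Finset.filter_insert]
    by_cases h : hasOrd K f N
    · rw [if_neg (by simpa using h)]
      have := rhoJ2 (K := K) f N
      omega
    · rw [if_pos (by simpa using h), Finset.card_insert_of_notMem (by simp)]
      have := rhoJ3 (K := K) f N h
      omega

end
end DeltaAux

namespace DeltaAux
open Classical
noncomputable section
variable {K : Type*} [Field K] {n : ℕ}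

def aM (N₁ M : ℕ) : ℕ := M / N₁ - M % N₁

def bM (N₁ M : ℕ) : ℕ := M % N₁

lemma arm {N₁ M : ℕ} (h1 : 1 ≤ N₁) (h : N₁ * N₁ ≤ M) :
    aM N₁ M * N₁ + bM N₁ M * (N₁ + 1) = M ∧ M ≤ (N₁ + 1) * (aM N₁ M + bM N₁ M) := by
  have hr : M % N₁ < N₁ := Nat.mod_lt _ (by omega)
  have hq : N₁ ≤ M / N₁ := (Nat.le_div_iff_mul_le (by omega)).mpr h
  have hqr : M % N₁ ≤ M / N₁ := by omega
  have ha : aM N₁ M + bM N₁ M = M / N₁ := by rw [aM, bM]; omega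
  have h2 : aM N₁ M * N₁ + bM N₁ M * (N₁ + 1)
      = (aM N₁ M + bM N₁ M) * N₁ + bM N₁ M := by ring
  have h3 : (aM N₁ M + bM N₁ M) * N₁ + bM N₁ M = M := by
    rw [ha, bM]
    exact Nat.div_add_mod' M N₁
  refine ⟨by rw [h2, h3], ?_⟩
  calc M = (aM N₁ M + bM N₁ M) * N₁ + bM N₁ M := h3.symm
    _ ≤ (aM N₁ M + bM N₁ M) * N₁ + (aM N₁ M + bM N₁ M) := by omega
    _ = (N₁ + 1) * (aM N₁ M + bM N₁ M) := by ring

def lamAux (z : ℕ → PowerSeries ℚ) (y : PowerSeries ℚ) (c₀ : ℕ) : ℕ → ℚ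
  | M =>
    if c₀ ≤ M then
      (coeff M y - ∑ M' ∈ (Finset.Ico c₀ M).attach,
        lamAux z y c₀ M'.1 * coeff M (z M'.1)) / coeff M (z M)
    else 0
  decreasing_by exact (Finset.mem_Ico.mp M'.2).2

lemma greedy (z : ℕ → PowerSeries ℚ) (y : PowerSeries ℚ) (c₀ : ℕ)
    (hz : ∀ M, c₀ ≤ M → (∀ k < M, coeff k (z M) = 0) ∧ coeff M (z M) ≠ 0)
    (hy : ∀ k < c₀, coeff k y = 0) :
    ∀ k K', k < K' →
      coeff k (∑ M ∈ Finset.Ico c₀ K', lamAux z y c₀ M • z M) = coeff k y := by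
  intro k K' hk
  have hco : ∀ K'' , coeff k (∑ M ∈ Finset.Ico c₀ K'', lamAux z y c₀ M • z M)
      = ∑ M ∈ Finset.Ico c₀ K'', lamAux z y c₀ M * coeff k (z M) := by
    intro K''
    rw [map_sum]
    refine Finset.sum_congr rfl fun M _ => ?_
    rw [map_smul, smul_eq_mul]
  rw [hco]
  rcases Nat.lt_or_ge k c₀ with hkc | hkc
  · rw [Finset.sum_eq_zero, (hy k hkc).symm]
    intro M hM
    rw [Finset.mem_Ico] at hM
    rw [(hz M hM.1).1 k (by omega), mul_zero]
  · have hsub : ∑ M ∈ Finset.Ico c₀ K', lamAux z y c₀ M * coeff k (z M)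
        = ∑ M ∈ Finset.Ico c₀ (k+1), lamAux z y c₀ M * coeff k (z M) := by
      rw [eq_comm]
      apply Finset.sum_subset
      · exact Finset.Ico_subset_Ico le_rfl (by omega)
      · intro M hM hM'
        rw [Finset.mem_Ico] at hM hM'
        rw [(hz M hM.1).1 k (by omega), mul_zero]
    rw [hsub, Finset.sum_Ico_succ_top hkc]
    have hlam : lamAux z y c₀ k = (coeff k y - ∑ M ∈ Finset.Ico c₀ k,
        lamAux z y c₀ M * coeff k (z M)) / coeff k (z k) := by
      rw [lamAux, if_pos hkc, Finset.sum_attach (Finset.Ico c₀ k)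
        (fun M => lamAux z y c₀ M * coeff k (z M))]
    rw [hlam, div_mul_cancel₀ _ (hz k hkc).2]
    ring

lemma mon_constantCoeff (f : Fin n → PowerSeries ℤ) (hf0 : ∀ i, constantCoeff (f i) = 0)
    (α : Fin n →₀ ℕ) :
    constantCoeff (mon K f α) = if α = 0 then 1 else 0 := by
  rw [mon, Finsupp.prod, map_prod]
  by_cases hα : α = 0
  · rw [if_pos hα, hα]
    simp
  · rw [if_neg hα]
    obtain ⟨i, hi⟩ := Finsupp.support_nonempty_iff.mpr hα
    refine Finset.prod_eq_zero hi ?_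
    rw [map_pow, hc_of_hf0 f hf0 i, zero_pow (Finsupp.mem_support_iff.mp hi)]

lemma polyRep (f : Fin n → PowerSeries ℤ) (hf0 : ∀ i, constantCoeff (f i) = 0)
    {w : PowerSeries K} (hw : w ∈ USub K f) (h0 : constantCoeff w = 0) :
    ∃ P : MvPolynomial (Fin n) K,
      MvPolynomial.aeval (mf K f) P = w ∧ mOrdGe (↑P : MvPowerSeries (Fin n) K) 1 := by
  rw [USub] at hw
  obtain ⟨c, hc⟩ := Finsupp.mem_span_range_iff_exists_finsupp.mp hw
  have hcsum : ∑ α ∈ c.support, c α • mon K f α = w := hc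
  have hc0 : c 0 = 0 := by
    have h1 : constantCoeff w = ∑ α ∈ c.support, c α * (if α = 0 then 1 else 0) := by
      rw [← hcsum]
      rw [← PowerSeries.coeff_zero_eq_constantCoeff_apply, map_sum]
      refine Finset.sum_congr rfl fun α _ => ?_
      rw [map_smul, smul_eq_mul, PowerSeries.coeff_zero_eq_constantCoeff_apply,
        mon_constantCoeff f hf0 α]
    by_cases hmem : (0 : Fin n →₀ ℕ) ∈ c.support
    · rw [Finset.sum_eq_single (0 : Fin n →₀ ℕ)] at h1
      · rw [if_pos rfl, mul_one] at h1
        rw [← h1, h0]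
      · intro α _ hne
        rw [if_neg hne, mul_zero]
      · intro hmem'
        exact absurd hmem hmem'
    · exact Finsupp.notMem_support_iff.mp hmem
  refine ⟨∑ α ∈ c.support, MvPolynomial.monomial α (c α), ?_, ?_⟩
  · rw [map_sum, ← hcsum]
    refine Finset.sum_congr rfl fun α _ => ?_
    rw [MvPolynomial.aeval_monomial, Algebra.smul_def]
    rfl
  · apply mOrdGe_one_of_constantCoeff
    rw [← MvPowerSeries.coeff_zero_eq_constantCoeff_apply, MvPolynomial.coeff_coe,
      MvPolynomial.coeff_sum]
    rw [Finset.sum_eq_single (0 : Fin n →₀ ℕ)]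
    · rw [MvPolynomial.coeff_monomial, if_pos rfl]
      exact hc0
    · intro α _ hne
      rw [MvPolynomial.coeff_monomial, if_neg hne]
    · intro _
      rw [MvPolynomial.coeff_monomial]
      simp [hc0]

end
end DeltaAux

namespace DeltaAux
open Classical
noncomputable section
variable {n : ℕ}

lemma conductor (f : Fin n → PowerSeries ℤ) (hf0 : ∀ i, constantCoeff (f i) = 0)
    (ψ : MvPowerSeries (Fin n) ℚ →ₐ[ℚ] PowerSeries ℚ)
    (hψX : ∀ i, ψ (MvPowerSeries.X i) = mf ℚ f i)
    (N₁ : ℕ) (hN₁ : 1 ≤ N₁) (h1 : hasOrd ℚ f N₁) (h2 : hasOrd ℚ f (N₁+1))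
    (y : PowerSeries ℚ) (hy : ∀ k < N₁ * N₁, coeff k y = 0) :
    y ∈ Subalgebra.toSubmodule ψ.range := by
  have hc : ∀ i, constantCoeff (ψ (MvPowerSeries.X i)) = 0 := by
    intro i; rw [hψX]; exact hc_of_hf0 f hf0 i
  obtain ⟨u, hu, hu0, huN⟩ := h1
  obtain ⟨v, hv, hv0, hvN⟩ := h2
  have huc : constantCoeff u = 0 := by
    rw [← PowerSeries.coeff_zero_eq_constantCoeff_apply]
    exact hu0 0 (by omega)
  have hvc : constantCoeff v = 0 := by
    rw [← PowerSeries.coeff_zero_eq_constantCoeff_apply]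
    exact hv0 0 (by omega)
  obtain ⟨Pu, hPu, hPu1⟩ := polyRep f hf0 hu huc
  obtain ⟨Pv, hPv, hPv1⟩ := polyRep f hf0 hv hvc
  set c₀ := N₁ * N₁ with hc₀
  set z : ℕ → PowerSeries ℚ := fun M => u ^ (aM N₁ M) * v ^ (bM N₁ M) with hzdef
  have hz : ∀ M, c₀ ≤ M → (∀ k < M, coeff k (z M) = 0) ∧ coeff M (z M) ≠ 0 := by
    intro M hM
    obtain ⟨he, hle⟩ := arm hN₁ hM
    have hulow := coeff_pow_low hu0 (aM N₁ M)
    have hvlow := coeff_pow_low hv0 (bM N₁ M)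
    constructor
    · intro k hk
      exact coeff_mul_low hulow hvlow k (by rw [he]; exact hk)
    · have hlead : coeff (aM N₁ M * N₁ + bM N₁ M * (N₁ + 1)) (z M)
          = (coeff N₁ u) ^ (aM N₁ M) * (coeff (N₁+1) v) ^ (bM N₁ M) := by
        rw [hzdef]
        rw [coeff_mul_lead hulow hvlow, coeff_pow_lead hu0, coeff_pow_lead hv0]
      rw [he] at hlead
      rw [hlead]
      exact mul_ne_zero (pow_ne_zero _ huN) (pow_ne_zero _ hvN)
  set lam := lamAux z y c₀ with hlamdef
  set Q : ℕ → MvPowerSeries (Fin n) ℚ :=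
    fun M => (↑Pu : MvPowerSeries (Fin n) ℚ) ^ (aM N₁ M)
      * (↑Pv : MvPowerSeries (Fin n) ℚ) ^ (bM N₁ M) with hQdef
  have hQord : ∀ M, mOrdGe (Q M) (aM N₁ M + bM N₁ M) := fun M =>
    mOrdGe_mul (mOrdGe_pow hPu1 _) (mOrdGe_pow hPv1 _)
  have hψQ : ∀ M, ψ (Q M) = z M := by
    intro M
    rw [hQdef]
    simp only [map_mul, map_pow]
    rw [evalPoly f ψ hψX, evalPoly f ψ hψX, hPu, hPv]
  set TT : ℕ → MvPowerSeries (Fin n) ℚ :=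
    fun K' => ∑ M ∈ Finset.Ico c₀ K', lam M • Q M with hTTdef
  have hTTs : ∀ (β : Fin n →₀ ℕ) (K₁ K₂ : ℕ), (N₁+1) * (deg β + 1) ≤ K₁ → K₁ ≤ K₂ →
      MvPowerSeries.coeff β (TT K₁) = MvPowerSeries.coeff β (TT K₂) := by
    intro β K₁ K₂ hK₁ hK₁₂
    rw [hTTdef]
    simp only
    rw [map_sum, map_sum]
    apply Finset.sum_subset (Finset.Ico_subset_Ico le_rfl hK₁₂)
    intro M hM hM'
    rw [Finset.mem_Ico] at hM hM'
    have hMK₁ : K₁ ≤ M := by omega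
    obtain ⟨-, hle⟩ := arm hN₁ hM.1
    have hdeg : deg β < aM N₁ M + bM N₁ M := by
      have : (N₁+1) * (deg β + 1) ≤ (N₁+1) * (aM N₁ M + bM N₁ M) := by omega
      have := Nat.le_of_mul_le_mul_left this (by omega : 0 < N₁ + 1)
      omega
    rw [map_smul, hQord M β hdeg, smul_zero]
  set F : MvPowerSeries (Fin n) ℚ :=
    (fun β => MvPowerSeries.coeff β (TT ((N₁+1) * (deg β + 1)))) with hFdef
  have hFc : ∀ (β : Fin n →₀ ℕ) (K' : ℕ), (N₁+1) * (deg β + 1) ≤ K' →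
      MvPowerSeries.coeff β F = MvPowerSeries.coeff β (TT K') := by
    intro β K' hK'
    have h1 : MvPowerSeries.coeff β F
        = MvPowerSeries.coeff β (TT ((N₁+1) * (deg β + 1))) := by
      rw [hFdef]; rfl
    rw [h1]
    exact hTTs β _ K' le_rfl hK'
  have hFd : ∀ k, mOrdGe (F - TT ((N₁+1) * (k+1))) (k+1) := by
    intro k β hβ
    rw [map_sub, hFc β ((N₁+1) * (k+1))
      (Nat.mul_le_mul_left _ (by omega)), sub_self]
  have hψF : ψ F = y := by
    apply PowerSeries.ext
    intro k
    have hsub : coeff k (ψ F) = coeff k (ψ (TT ((N₁+1) * (k+1)))) := by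
      have h0 : coeff k (ψ (F - TT ((N₁+1) * (k+1)))) = 0 :=
        cont ψ hc (k+1) _ (hFd k) k (by omega)
      rw [map_sub, map_sub, sub_eq_zero] at h0
      exact h0
    have hTTψ : ψ (TT ((N₁+1) * (k+1)))
        = ∑ M ∈ Finset.Ico c₀ ((N₁+1) * (k+1)), lam M • z M := by
      rw [hTTdef]
      simp only
      rw [map_sum]
      refine Finset.sum_congr rfl fun M _ => ?_
      rw [map_smul, hψQ M]
    rw [hsub, hTTψ, hlamdef]
    exact greedy z y c₀ hz hy k ((N₁+1) * (k+1)) (by nlinarith)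
  exact ⟨F, hψF⟩

end
end DeltaAux

namespace DeltaAux
open Classical
noncomputable section
variable {n : ℕ}

lemma pigeon (f : Fin n → PowerSeries ℤ) (δ : ℕ)
    (hcard : ∀ N, ((Finset.range N).filter (fun M => ¬ hasOrd ℚ f M)).card ≤ δ) :
    ∃ N₁, 1 ≤ N₁ ∧ hasOrd ℚ f N₁ ∧ hasOrd ℚ f (N₁ + 1) := by
  by_contra hcon
  push_neg at hcon
  set φ : Fin (δ + 1) → ℕ := fun i => if hasOrd ℚ f (2 * (i : ℕ) + 1)
    then 2 * (i : ℕ) + 2 else 2 * (i : ℕ) + 1 with hφ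
  have hφmem : ∀ i, φ i ∈ (Finset.range (2 * δ + 3)).filter (fun M => ¬ hasOrd ℚ f M) := by
    intro i
    rw [Finset.mem_filter, Finset.mem_range]
    have hi := i.2
    by_cases h : hasOrd ℚ f (2 * (i : ℕ) + 1)
    · rw [hφ]
      simp only [if_pos h]
      refine ⟨by omega, ?_⟩
      have := hcon (2 * (i : ℕ) + 1) (by omega) h
      simpa [show 2 * (i:ℕ) + 1 + 1 = 2 * (i:ℕ) + 2 from by omega] using this
    · rw [hφ]
      simp only [if_neg h]
      exact ⟨by omega, h⟩
  have hinj : Set.InjOn φ (Finset.univ : Finset (Fin (δ + 1))) := by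
    intro i _ j _ hij
    have hi : φ i = 2 * (i : ℕ) + 2 ∨ φ i = 2 * (i : ℕ) + 1 := by
      rw [hφ]; by_cases h : hasOrd ℚ f (2 * (i : ℕ) + 1) <;> simp [h]
    have hj : φ j = 2 * (j : ℕ) + 2 ∨ φ j = 2 * (j : ℕ) + 1 := by
      rw [hφ]; by_cases h : hasOrd ℚ f (2 * (j : ℕ) + 1) <;> simp [h]
    apply Fin.ext
    omega
  have hle := Finset.card_le_card_of_injOn φ (fun a _ => hφmem a) hinj
  rw [Finset.card_univ, Fintype.card_fin] at hle
  have := hcard (2 * δ + 3)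
  omega

end
end DeltaAux

open DeltaAux

/-- Let `φⁱ ∈ t·ℤ[[t]]`, `i = 1,...,n`, define a parameterization with
integer coefficients; for a prime `p` let `φ_p` be its reduction mod `p` and `φ_0`
the induced parameterization over `ℚ`. If for some prime `p` the parameterization
`φ_p` is primitive with `δ_{𝔽_p}(R_p) = dim_{𝔽_p} 𝔽_p[[t]]/𝔽_p[[φ_p¹,...,φ_pⁿ]] < ∞`,
then `δ_ℚ(R_0) = dim_ℚ ℚ[[t]]/ℚ[[φ_0¹,...,φ_0ⁿ]] < ∞` and `δ_ℚ(R_0) ≤ δ_{𝔽_p}(R_p)`. -/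
theorem delta_semicontinuous_int_family {n : ℕ} (f : Fin n → PowerSeries ℤ)
    (hconst : ∀ i, constantCoeff (f i) = 0)
    (p : ℕ) [Fact p.Prime]
    (hne : ∃ i, PowerSeries.map (Int.castRingHom (ZMod p)) (f i) ≠ 0)
    (ψp : MvPowerSeries (Fin n) (ZMod p) →ₐ[ZMod p] PowerSeries (ZMod p))
    (hψploc : ∀ F, MvPowerSeries.constantCoeff F = 0 →
      constantCoeff (ψp F) = 0)
    (hψp : ∀ i, ψp (MvPowerSeries.X i) =
      PowerSeries.map (Int.castRingHom (ZMod p)) (f i))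
    (ψ0 : MvPowerSeries (Fin n) ℚ →ₐ[ℚ] PowerSeries ℚ)
    (hψ0loc : ∀ F, MvPowerSeries.constantCoeff F = 0 →
      constantCoeff (ψ0 F) = 0)
    (hψ0 : ∀ i, ψ0 (MvPowerSeries.X i) =
      PowerSeries.map (Int.castRingHom ℚ) (f i))
    (hfinp : FiniteDimensional (ZMod p)
      (PowerSeries (ZMod p) ⧸ Subalgebra.toSubmodule ψp.range)) :
    FiniteDimensional ℚ (PowerSeries ℚ ⧸ Subalgebra.toSubmodule ψ0.range) ∧
    Module.finrank ℚ (PowerSeries ℚ ⧸ Subalgebra.toSubmodule ψ0.range) ≤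
      Module.finrank (ZMod p)
        (PowerSeries (ZMod p) ⧸ Subalgebra.toSubmodule ψp.range) := by
  classical
  set δ := Module.finrank (ZMod p)
    (PowerSeries (ZMod p) ⧸ Subalgebra.toSubmodule ψp.range) with hδ
  have hψp' : ∀ i, ψp (MvPowerSeries.X i) = mf (ZMod p) f i := hψp
  have hψ0' : ∀ i, ψ0 (MvPowerSeries.X i) = mf ℚ f i := hψ0
  -- lower bound for the dimension of the truncated spans over ℚ
  have hlow : ∀ N, N ≤ Module.finrank (ZMod p) (WN (ZMod p) f N) + δ := by
    intro N
    exact dimW_lower f hconst ψp hψp' N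
  have hq : ∀ N, N ≤ Module.finrank ℚ (WN ℚ f N) + δ := by
    intro N
    have := dimW_mono (p := p) f N
    have := hlow N
    omega
  have hcard : ∀ N, ((Finset.range N).filter (fun M => ¬ hasOrd ℚ f M)).card ≤ δ := by
    intro N
    have h1 := count_bound (K := ℚ) f N
    have h2 := hq N
    omega
  obtain ⟨N₁, hN₁, ho1, ho2⟩ := pigeon f δ hcard
  -- the conductor
  have hcond : ∀ y : PowerSeries ℚ, (∀ k < N₁ * N₁, coeff k y = 0) →
      y ∈ Subalgebra.toSubmodule ψ0.range := fun y hy =>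
    conductor f hconst ψ0 hψ0' N₁ hN₁ ho1 ho2 y hy
  set mk := (Subalgebra.toSubmodule ψ0.range).mkQ with hmk
  set G := (Finset.range (N₁ * N₁)).filter (fun M => ¬ hasOrd ℚ f M) with hGdef
  have hG : G.card ≤ δ := hcard (N₁ * N₁)
  set S : Finset (PowerSeries ℚ ⧸ Subalgebra.toSubmodule ψ0.range) :=
    G.image (fun g => mk ((PowerSeries.X : PowerSeries ℚ) ^ g)) with hS
  have red : ∀ m : ℕ, ∀ y : PowerSeries ℚ, (∀ k < N₁ * N₁ - m, coeff k y = 0) →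
      mk y ∈ Submodule.span ℚ (S : Set (PowerSeries ℚ ⧸ Subalgebra.toSubmodule ψ0.range)) := by
    intro m
    induction m with
    | zero =>
      intro y hy
      have : mk y = 0 := by
        rw [hmk, Submodule.mkQ_apply, Submodule.Quotient.mk_eq_zero]
        exact hcond y (fun k hk => hy k (by omega))
      rw [this]
      exact Submodule.zero_mem _
    | succ m ih =>
      intro y hy
      by_cases heq : N₁ * N₁ - m = N₁ * N₁ - (m + 1)
      · exact ih y (fun k hk => hy k (by omega))
      · set j := N₁ * N₁ - (m + 1) with hj
        have hjs : j + 1 = N₁ * N₁ - m := by omega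
        have hjlt : j < N₁ * N₁ := by omega
        by_cases ho : hasOrd ℚ f j
        · obtain ⟨w, hw, hw0, hwj⟩ := ho
          set c := coeff j y / coeff j w with hcdef
          set y' := y - c • w with hy'
          have hyc : ∀ k < N₁ * N₁ - m, coeff k y' = 0 := by
            intro k hk
            rw [hy', map_sub, map_smul, smul_eq_mul]
            rcases Nat.lt_or_ge k j with hkj | hkj
            · rw [hy k (by omega), hw0 k hkj, mul_zero, sub_zero]
            · have hkj' : k = j := by omega
              rw [hkj', hcdef, div_mul_cancel₀ _ hwj, sub_self]
          have hmem := ih y' hyc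
          have hmkeq : mk y = mk y' := by
            rw [hmk, Submodule.mkQ_apply, Submodule.mkQ_apply, Submodule.Quotient.eq]
            have hd : y - y' = c • w := by rw [hy']; ring
            rw [hd]
            exact Submodule.smul_mem _ _ (USub_le_range f ψ0 hψ0' hw)
          rw [hmkeq]
          exact hmem
        · set c := coeff j y with hcdef
          set y' := y - c • (PowerSeries.X : PowerSeries ℚ) ^ j with hy'
          have hyc : ∀ k < N₁ * N₁ - m, coeff k y' = 0 := by
            intro k hk
            rw [hy', map_sub, map_smul, smul_eq_mul, PowerSeries.coeff_X_pow]
            rcases Nat.lt_or_ge k j with hkj | hkj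
            · rw [hy k (by omega), if_neg (by omega), mul_zero, sub_zero]
            · have hkj' : k = j := by omega
              subst hkj'
              rw [if_pos rfl, mul_one, hcdef, sub_self]
          have hmem := ih y' hyc
          have hXmem : mk ((PowerSeries.X : PowerSeries ℚ) ^ j) ∈
              Submodule.span ℚ (S : Set (PowerSeries ℚ ⧸ Subalgebra.toSubmodule ψ0.range)) := by
            apply Submodule.subset_span
            rw [hS]
            refine Finset.mem_coe.mpr (Finset.mem_image.mpr ⟨j, ?_, rfl⟩)
            rw [hGdef, Finset.mem_filter, Finset.mem_range]
            exact ⟨hjlt, ho⟩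
          have hyeq : y' + c • (PowerSeries.X : PowerSeries ℚ) ^ j = y := by
            rw [hy']; ring
          have hmky : mk y = mk y' + c • mk ((PowerSeries.X : PowerSeries ℚ) ^ j) := by
            rw [← hyeq, map_add, map_smul]
          rw [hmky]
          exact Submodule.add_mem _ hmem (Submodule.smul_mem _ _ hXmem)
  have htop : Submodule.span ℚ
      (S : Set (PowerSeries ℚ ⧸ Subalgebra.toSubmodule ψ0.range)) = ⊤ := by
    rw [eq_top_iff]
    intro q _
    obtain ⟨y, rfl⟩ := Submodule.mkQ_surjective _ q
    exact red (N₁ * N₁) y (fun k hk => by omega)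
  constructor
  · exact Module.finite_def.mpr ⟨S, htop⟩
  · have h1 : Module.finrank ℚ (PowerSeries ℚ ⧸ Subalgebra.toSubmodule ψ0.range)
        = Module.finrank ℚ
          (⊤ : Submodule ℚ (PowerSeries ℚ ⧸ Subalgebra.toSubmodule ψ0.range)) :=
      (finrank_top ℚ _).symm
    have h2 : Module.finrank ℚ (PowerSeries ℚ ⧸ Subalgebra.toSubmodule ψ0.range) ≤ S.card := by
      rw [h1, ← htop]
      haveI : Fintype (S : Set (PowerSeries ℚ ⧸ Subalgebra.toSubmodule ψ0.range)) :=
        FinsetCoe.fintype S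
      refine le_trans (finrank_span_le_card _) ?_
      rw [Finset.toFinset_coe]
    exact le_trans h2 (le_trans Finset.card_image_le hG)
end
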